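/- arXiv:2508.20287 — 5 statements merged into one kernel-verified Lean document; each statement's English description precedes it below -/
import Mathlib

section
/- Let W be an N×N weight matrix on ℝ satisfying W(x) = W(−x) for almost every x, with monic orthogonal polynomials {H_n}_{n≥0}, and let V(y) = y^{−1/2} W(√y) be the associated weight matrix on (0,∞) with monic orthogonal polynomials {L_n}_{n≥0}. Then for every n ≥ 0, H_{2n}(x) = L_n(x²), i.e. H_{2n} equals the polynomial composition of L_n with the polynomial x². -/
open MeasureTheory Polynomial Set Matrix
open scoped ComplexOrder

noncomputable section

/-- Matrix polynomials: `N × N` matrices with entries in `ℂ[X]`. -/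
abbrev MatPoly (N : ℕ) := Matrix (Fin N) (Fin N) (Polynomial ℂ)

/-- Evaluation of a matrix polynomial at a real point. -/
def evalM {N : ℕ} (P : MatPoly N) (x : ℝ) : Matrix (Fin N) (Fin N) ℂ :=
  fun i j => (P i j).eval (x : ℂ)

/-- The `k`-th matrix coefficient of a matrix polynomial. -/
def coeffM {N : ℕ} (P : MatPoly N) (k : ℕ) : Matrix (Fin N) (Fin N) ℂ :=
  fun i j => (P i j).coeff k

/-- Entrywise derivative of a matrix polynomial. -/
def derivM {N : ℕ} (P : MatPoly N) : MatPoly N :=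
  fun i j => Polynomial.derivative (P i j)

/-- Entrywise iterated derivative. -/
def iterDerivM {N : ℕ} (k : ℕ) (P : MatPoly N) : MatPoly N :=
  fun i j => (fun q => Polynomial.derivative q)^[k] (P i j)

/-- Constant matrix polynomial. -/
def constM {N : ℕ} (A : Matrix (Fin N) (Fin N) ℂ) : MatPoly N :=
  A.map Polynomial.C

/-- Entrywise multiplication by the scalar polynomial `X`. -/
def XmulM {N : ℕ} (P : MatPoly N) : MatPoly N :=
  fun i j => Polynomial.X * P i j

/-- Composition with the polynomial `X ^ 2` (the substitution `x ↦ x²`). -/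
def compSqM {N : ℕ} (P : MatPoly N) : MatPoly N :=
  fun i j => (P i j).comp (Polynomial.X ^ 2)

/-- Composition with `-X` (the substitution `x ↦ -x`). -/
def reflectM {N : ℕ} (P : MatPoly N) : MatPoly N :=
  fun i j => (P i j).comp (-Polynomial.X)

/-- Right action of the matrix differential operator `D = ∑_{j=0}^s (d^j/dx^j) F j`
on a matrix polynomial: `(P · D)(x) = ∑_{j=0}^s P^{(j)}(x) F_j(x)`. -/
def applyOp {N : ℕ} (s : ℕ) (F : ℕ → MatPoly N) (P : MatPoly N) : MatPoly N :=
  ∑ j ∈ Finset.range (s + 1), iterDerivM j P * F j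

/-- Entrywise integral of a matrix-valued function over a set. -/
def matInt {N : ℕ} (I : Set ℝ) (f : ℝ → Matrix (Fin N) (Fin N) ℂ) :
    Matrix (Fin N) (Fin N) ℂ :=
  fun i j => ∫ x in I, f x i j

/-- The matrix inner product `⟨P, Q⟩_W = ∫_I P(x) W(x) Q(x)^* dx`. -/
def innerW {N : ℕ} (I : Set ℝ) (W : ℝ → Matrix (Fin N) (Fin N) ℂ)
    (P Q : MatPoly N) : Matrix (Fin N) (Fin N) ℂ :=
  matInt I (fun x => evalM P x * W x * (evalM Q x)ᴴ)

/-- `W` is a weight matrix on the set `I ⊆ ℝ`: integrable on `I`, positive definite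
almost everywhere on `I`, and with all moments finite. -/
structure IsWeight {N : ℕ} (I : Set ℝ) (W : ℝ → Matrix (Fin N) (Fin N) ℂ) : Prop where
  integrable : ∀ i j, IntegrableOn (fun x => W x i j) I
  posdef : ∀ᵐ x ∂(volume.restrict I), (W x).PosDef
  moments : ∀ (n : ℕ) (i j), IntegrableOn (fun (x : ℝ) => (x : ℂ) ^ n * W x i j) I

/-- `P` is monic of degree exactly `n` (leading coefficient the identity matrix). -/
def IsMonicDeg {N : ℕ} (P : MatPoly N) (n : ℕ) : Prop :=
  coeffM P n = 1 ∧ ∀ k, n < k → coeffM P k = 0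

/-- `P` is the sequence of monic orthogonal polynomials of the weight `W` on `I`. -/
def MonicOPS {N : ℕ} (I : Set ℝ) (W : ℝ → Matrix (Fin N) (Fin N) ℂ)
    (P : ℕ → MatPoly N) : Prop :=
  (∀ n, IsMonicDeg (P n) n) ∧ ∀ n m, n ≠ m → innerW I W (P n) (P m) = 0

/-- A (not necessarily monic) sequence of orthogonal polynomials for `W` on `I`:
degree `n` with invertible leading coefficient, pairwise orthogonal. -/
def IsOPS {N : ℕ} (I : Set ℝ) (W : ℝ → Matrix (Fin N) (Fin N) ℂ)
    (Q : ℕ → MatPoly N) : Prop :=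
  (∀ n, IsUnit (coeffM (Q n) n) ∧ ∀ k, n < k → coeffM (Q n) k = 0) ∧
  ∀ n m, n ≠ m → innerW I W (Q n) (Q m) = 0

/-- The Laguerre-type weight `V(y) = y^{-1/2} W(√y)` on `(0,∞)`. -/
def VWeight {N : ℕ} (W : ℝ → Matrix (Fin N) (Fin N) ℂ) :
    ℝ → Matrix (Fin N) (Fin N) ℂ :=
  fun y => (Real.sqrt y)⁻¹ • W (Real.sqrt y)

/-- The Laguerre-type weight `U(y) = y^{1/2} W(√y)` on `(0,∞)`. -/
def UWeight {N : ℕ} (W : ℝ → Matrix (Fin N) (Fin N) ℂ) :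
    ℝ → Matrix (Fin N) (Fin N) ℂ :=
  fun y => Real.sqrt y • W (Real.sqrt y)

/-- `p` is the sequence of monic scalar orthogonal polynomials of the scalar
weight `w` on `I`. -/
def ScalarMonicOPS (I : Set ℝ) (w : ℝ → ℝ) (p : ℕ → Polynomial ℝ) : Prop :=
  (∀ n, (p n).Monic ∧ (p n).natDegree = n) ∧
  ∀ n m, n ≠ m → ∫ x in I, (p n).eval x * (p m).eval x * w x = 0

namespace Stmt4Aux
open Polynomial

lemma coeff_comp_X_sq (p : ℂ[X]) (m : ℕ) :
    (p.comp (X ^ 2 : ℂ[X])).coeff m = if 2 ∣ m then p.coeff (m / 2) else 0 := by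
  induction p using Polynomial.induction_on' with
  | add f g hf hg =>
    simp only [add_comp, coeff_add, hf, hg]
    split <;> simp
  | monomial n a =>
    rw [← C_mul_X_pow_eq_monomial, mul_comp, C_comp, pow_comp, X_comp, ← pow_mul,
      coeff_C_mul, coeff_X_pow, C_mul_X_pow_eq_monomial, Polynomial.coeff_monomial]
    by_cases h : 2 ∣ m
    · obtain ⟨k, rfl⟩ := h
      by_cases hk : k = n
      · subst hk; simp [Nat.mul_div_cancel_left]
      · have h1 : ¬ (2 * k = 2 * n) := by omega
        have h2 : (2 * k) / 2 = k := by omega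
        rw [if_neg h1, h2, if_pos ⟨k, rfl⟩, if_neg (Ne.symm hk), mul_zero]
    · have h2 : ¬ (m = 2 * n) := by rintro rfl; exact h ⟨n, rfl⟩
      rw [if_neg h2, if_neg h, mul_zero]

lemma coeff_comp_neg_X (p : ℂ[X]) (m : ℕ) :
    (p.comp (-X : ℂ[X])).coeff m = (-1) ^ m * p.coeff m := by
  induction p using Polynomial.induction_on' with
  | add f g hf hg => simp only [add_comp, coeff_add, hf, hg]; ring
  | monomial n a =>
    have h1 : ((-X : ℂ[X]) ^ n) = C ((-1) ^ n) * X ^ n := by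
      rw [neg_pow]; simp [map_pow]
    rw [← C_mul_X_pow_eq_monomial, mul_comp, C_comp, pow_comp, X_comp, h1,
      ← mul_assoc, ← C_mul, C_mul_X_pow_eq_monomial, Polynomial.coeff_monomial,
      C_mul_X_pow_eq_monomial, Polynomial.coeff_monomial]
    by_cases h : n = m
    · subst h; simp; ring
    · simp [h]

lemma conj_eval (p : ℂ[X]) (x : ℝ) :
    (starRingEnd ℂ) (p.eval (x : ℂ)) = (p.map (starRingEnd ℂ)).eval (x : ℂ) := by
  rw [eval, hom_eval₂, eval, eval₂_map]
  simp

variable {N : ℕ}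

lemma coeffM_sub (P Q : MatPoly N) (k : ℕ) :
    coeffM (P - Q) k = coeffM P k - coeffM Q k := by
  funext i j; simp [coeffM, Matrix.sub_apply, coeff_sub]

lemma coeffM_constM_mul (A : Matrix (Fin N) (Fin N) ℂ) (P : MatPoly N) (k : ℕ) :
    coeffM (constM A * P) k = A * coeffM P k := by
  funext i j
  simp [coeffM, constM, Matrix.mul_apply, Polynomial.finset_sum_coeff, coeff_C_mul]

lemma matPoly_eq_zero (P : MatPoly N) (h : ∀ k, coeffM P k = 0) : P = 0 := by
  funext i j
  apply Polynomial.ext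
  intro k
  have := congrFun (congrFun (h k) i) j
  simpa [coeffM] using this

lemma evalM_sub (P Q : MatPoly N) (x : ℝ) :
    evalM (P - Q) x = evalM P x - evalM Q x := by
  funext i j; simp [evalM, Matrix.sub_apply]

lemma evalM_add (P Q : MatPoly N) (x : ℝ) :
    evalM (P + Q) x = evalM P x + evalM Q x := by
  funext i j; simp [evalM, Matrix.add_apply]

lemma evalM_zero (x : ℝ) : evalM (0 : MatPoly N) x = 0 := by
  funext i j; simp [evalM]

lemma evalM_constM_mul (A : Matrix (Fin N) (Fin N) ℂ) (P : MatPoly N) (x : ℝ) :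
    evalM (constM A * P) x = A * evalM P x := by
  funext i j
  simp [evalM, constM, Matrix.mul_apply, Polynomial.eval_finset_sum]

lemma compSqM_sub (P Q : MatPoly N) : compSqM (P - Q) = compSqM P - compSqM Q := by
  funext i j; simp [compSqM, Matrix.sub_apply, sub_comp]

lemma compSqM_constM_mul (A : Matrix (Fin N) (Fin N) ℂ) (P : MatPoly N) :
    compSqM (constM A * P) = constM A * compSqM P := by
  funext i j
  simp only [compSqM, constM, Matrix.mul_apply, Matrix.map_apply]
  rw [Polynomial.comp, Polynomial.eval₂_finset_sum]
  simp [Polynomial.comp, Polynomial.eval₂_mul, Polynomial.eval₂_C]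

lemma evalM_compSqM (P : MatPoly N) (x : ℝ) :
    evalM (compSqM P) x = evalM P (x ^ 2) := by
  funext i j
  simp only [evalM, compSqM, eval_comp, eval_pow, eval_X]
  norm_cast

lemma evalM_XmulM (P : MatPoly N) (x : ℝ) :
    evalM (XmulM P) x = (x : ℂ) • evalM P x := by
  funext i j
  simp [evalM, XmulM, Matrix.smul_apply]

open MeasureTheory in
lemma integrable_inner {I : Set ℝ} {W : ℝ → Matrix (Fin N) (Fin N) ℂ}
    (hW : IsWeight I W) (P Q : MatPoly N) (i j : Fin N) :
    MeasureTheory.IntegrableOn (fun x => (evalM P x * W x * (evalM Q x)ᴴ) i j) I := by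
  have key : (fun x : ℝ => (evalM P x * W x * (evalM Q x)ᴴ) i j)
      = fun x : ℝ => ∑ l : Fin N, ∑ k : Fin N,
          ∑ m ∈ Finset.range ((P i k * (Q j l).map (starRingEnd ℂ)).natDegree + 1),
            (P i k * (Q j l).map (starRingEnd ℂ)).coeff m * ((x:ℂ) ^ m * W x k l) := by
    funext x
    simp only [Matrix.mul_apply, Matrix.conjTranspose_apply, evalM, Finset.sum_mul]
    refine Finset.sum_congr rfl fun l _ => Finset.sum_congr rfl fun k _ => ?_
    have h1 : Polynomial.eval (x:ℂ) (P i k) * W x k l * star (Polynomial.eval (x:ℂ) (Q j l))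
        = Polynomial.eval (x:ℂ) (P i k * (Q j l).map (starRingEnd ℂ)) * W x k l := by
      rw [Polynomial.eval_mul, ← conj_eval, starRingEnd_apply]
      ring
    rw [h1, Polynomial.eval_eq_sum_range, Finset.sum_mul]
    exact Finset.sum_congr rfl fun m _ => by ring
  rw [key]
  refine integrable_finset_sum _ fun l _ => ?_
  refine integrable_finset_sum _ fun k _ => ?_
  refine integrable_finset_sum _ fun m _ => ?_
  exact (hW.moments m k l).const_mul _

open MeasureTheory in
lemma innerW_sub_left {I : Set ℝ} {W : ℝ → Matrix (Fin N) (Fin N) ℂ}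
    (hW : IsWeight I W) (P Q R : MatPoly N) :
    innerW I W (P - Q) R = innerW I W P R - innerW I W Q R := by
  funext i j
  have h : ∀ x : ℝ, (evalM (P - Q) x * W x * (evalM R x)ᴴ) i j
      = (evalM P x * W x * (evalM R x)ᴴ) i j - (evalM Q x * W x * (evalM R x)ᴴ) i j := by
    intro x; rw [evalM_sub, Matrix.sub_mul, Matrix.sub_mul, Matrix.sub_apply]
  simp only [innerW, matInt, Matrix.sub_apply, h]
  exact integral_sub (integrable_inner hW P R i j) (integrable_inner hW Q R i j)

open MeasureTheory in
lemma innerW_add_left {I : Set ℝ} {W : ℝ → Matrix (Fin N) (Fin N) ℂ}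
    (hW : IsWeight I W) (P Q R : MatPoly N) :
    innerW I W (P + Q) R = innerW I W P R + innerW I W Q R := by
  funext i j
  have h : ∀ x : ℝ, (evalM (P + Q) x * W x * (evalM R x)ᴴ) i j
      = (evalM P x * W x * (evalM R x)ᴴ) i j + (evalM Q x * W x * (evalM R x)ᴴ) i j := by
    intro x; rw [evalM_add, Matrix.add_mul, Matrix.add_mul, Matrix.add_apply]
  simp only [innerW, matInt, Matrix.add_apply, h]
  exact integral_add (integrable_inner hW P R i j) (integrable_inner hW Q R i j)

open MeasureTheory in
lemma innerW_sub_right {I : Set ℝ} {W : ℝ → Matrix (Fin N) (Fin N) ℂ}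
    (hW : IsWeight I W) (P Q R : MatPoly N) :
    innerW I W P (Q - R) = innerW I W P Q - innerW I W P R := by
  funext i j
  have h : ∀ x : ℝ, (evalM P x * W x * (evalM (Q - R) x)ᴴ) i j
      = (evalM P x * W x * (evalM Q x)ᴴ) i j - (evalM P x * W x * (evalM R x)ᴴ) i j := by
    intro x
    rw [evalM_sub, Matrix.conjTranspose_sub, Matrix.mul_sub, Matrix.sub_apply]
  simp only [innerW, matInt, Matrix.sub_apply, h]
  exact integral_sub (integrable_inner hW P Q i j) (integrable_inner hW P R i j)

lemma innerW_zero_left {I : Set ℝ} {W : ℝ → Matrix (Fin N) (Fin N) ℂ}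
    (Q : MatPoly N) : innerW I W 0 Q = 0 := by
  funext i j
  have h : ∀ x : ℝ, (evalM (0 : MatPoly N) x * W x * (evalM Q x)ᴴ) i j = 0 := by
    intro x; rw [evalM_zero, Matrix.zero_mul, Matrix.zero_mul, Matrix.zero_apply]
  simp [innerW, matInt, h]

open MeasureTheory in
lemma innerW_constM_mul_left {I : Set ℝ} {W : ℝ → Matrix (Fin N) (Fin N) ℂ}
    (hW : IsWeight I W) (A : Matrix (Fin N) (Fin N) ℂ) (P Q : MatPoly N) :
    innerW I W (constM A * P) Q = A * innerW I W P Q := by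
  funext i j
  have h : ∀ x : ℝ, (evalM (constM A * P) x * W x * (evalM Q x)ᴴ) i j
      = ∑ k : Fin N, A i k * (evalM P x * W x * (evalM Q x)ᴴ) k j := by
    intro x
    rw [evalM_constM_mul, Matrix.mul_assoc, Matrix.mul_assoc, Matrix.mul_apply]
    rw [← Matrix.mul_assoc]
  simp only [innerW, matInt, h]
  rw [integral_finset_sum _ fun k _ => (integrable_inner hW P Q k j).const_mul _]
  conv_rhs => rw [Matrix.mul_apply]
  exact Finset.sum_congr rfl fun k _ => integral_const_mul _ _

open MeasureTheory in
lemma ortho_span_gen {I : Set ℝ} {W : ℝ → Matrix (Fin N) (Fin N) ℂ}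
    (hW : IsWeight I W) (B : ℕ → MatPoly N) (hB : ∀ n, IsMonicDeg (B n) n)
    (T : MatPoly N → MatPoly N)
    (hTsub : ∀ P Q, T (P - Q) = T P - T Q)
    (hTmul : ∀ A P, T (constM A * P) = constM A * T P)
    (Q : MatPoly N) :
    ∀ d (P : MatPoly N), (∀ k, d ≤ k → coeffM P k = 0) →
      (∀ k, k < d → innerW I W (T (B k)) Q = 0) → innerW I W (T P) Q = 0 := by
  intro d
  induction d with
  | zero =>
    intro P hP _
    have h0 : P = 0 := matPoly_eq_zero P fun k => hP k (Nat.zero_le k)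
    subst h0
    have hT0 : T 0 = 0 := by have := hTsub 0 0; simpa using this
    rw [hT0]; exact innerW_zero_left Q
  | succ d ih =>
    intro P hP hQ
    set A := coeffM P d with hA
    have hP' : ∀ k, d ≤ k → coeffM (P - constM A * B d) k = 0 := by
      intro k hk
      rw [coeffM_sub, coeffM_constM_mul]
      rcases Nat.lt_or_ge k (d + 1) with h | h
      · have hkd : k = d := by omega
        subst hkd
        rw [(hB k).1, mul_one, hA, sub_self]
      · rw [hP k h, (hB d).2 k (by omega), mul_zero, sub_zero]
    have h1 := ih (P - constM A * B d) hP' (fun k hk => hQ k (by omega))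
    have h2 : T P = T (P - constM A * B d) + constM A * T (B d) := by
      rw [hTsub, hTmul]; abel
    rw [h2, innerW_add_left hW, h1, innerW_constM_mul_left hW, hQ d (by omega),
      mul_zero, zero_add]

open MeasureTheory in
lemma inner_self_zero {W : ℝ → Matrix (Fin N) (Fin N) ℂ}
    (hW : IsWeight Set.univ W) (P : MatPoly N)
    (h : innerW Set.univ W P P = 0) : P = 0 := by
  funext i j
  set f : ℝ → ℂ := fun x => (evalM P x * W x * (evalM P x)ᴴ) i i with hf
  have hint : Integrable f := by
    have := integrable_inner hW P P i i; rwa [integrableOn_univ] at this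
  have hdiag : ∫ x : ℝ, f x = 0 := by
    have h2 := congrFun (congrFun h i) i
    simpa [innerW, matInt] using h2
  have hquad : ∀ x : ℝ, f x
      = dotProduct (star (fun k => star (evalM P x i k)))
        (W x *ᵥ (fun k => star (evalM P x i k))) := by
    intro x
    simp only [hf, Matrix.mul_apply, Matrix.conjTranspose_apply, dotProduct,
      Matrix.mulVec, Pi.star_apply, star_star, dotProduct]
    simp only [Finset.sum_mul, Finset.mul_sum]
    rw [Finset.sum_comm]
    exact Finset.sum_congr rfl fun k _ => Finset.sum_congr rfl fun l _ => by ring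
  have hpd : ∀ᵐ x : ℝ, (W x).PosDef := by
    have := hW.posdef; rwa [Measure.restrict_univ] at this
  have hnonneg : ∀ᵐ x : ℝ, 0 ≤ f x := by
    filter_upwards [hpd] with x hx
    rw [hquad x]
    exact hx.posSemidef.dotProduct_mulVec_nonneg _
  have hre0 : (fun x : ℝ => (f x).re) =ᵐ[volume] 0 := by
    have h1 : 0 ≤ᵐ[volume] fun x => (f x).re := by
      filter_upwards [hnonneg] with x hx
      exact (Complex.le_def.mp hx).1
    have h2 : ∫ x : ℝ, (f x).re = 0 := by
      have := integral_re hint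
      rw [hdiag] at this
      simpa using this
    exact (integral_eq_zero_iff_of_nonneg_ae h1 hint.re).mp h2
  have hzero : ∀ᵐ x : ℝ, f x = 0 := by
    filter_upwards [hre0, hnonneg] with x h1 h2
    have him : (f x).im = 0 := ((Complex.le_def.mp h2).2).symm
    apply Complex.ext
    · simpa using h1
    · simpa using him
  have hrow : ∀ᵐ x : ℝ, Polynomial.eval (x:ℂ) (P i j) = 0 := by
    filter_upwards [hzero, hpd] with x h1 h2
    by_contra hne
    have hu : (fun k => star (evalM P x i k)) ≠ 0 := by
      intro hcon
      have := congrFun hcon j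
      simp only [Pi.zero_apply, star_eq_zero] at this
      exact hne this
    have := h2.dotProduct_mulVec_pos hu
    rw [← hquad x, h1] at this
    exact lt_irrefl 0 this
  by_contra hp
  have hp' : P i j ≠ 0 := by simpa using hp
  have hfin : ({x : ℝ | Polynomial.eval (x:ℂ) (P i j) = 0}).Finite := by
    have h1 := Polynomial.finite_setOf_isRoot hp'
    have h2 : {x : ℝ | Polynomial.eval (x:ℂ) (P i j) = 0}
        ⊆ (fun x : ℝ => (x:ℂ)) ⁻¹' {z : ℂ | (P i j).IsRoot z} := fun x hx => hx
    exact Set.Finite.subset (h1.preimage Complex.ofReal_injective.injOn) h2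
  have h0 : volume {x : ℝ | Polynomial.eval (x:ℂ) (P i j) = 0} = 0 :=
    hfin.measure_zero volume
  rw [ae_iff] at hrow
  have hle : (volume : Measure ℝ) Set.univ
      ≤ volume {x : ℝ | Polynomial.eval (x:ℂ) (P i j) = 0}
        + volume {x : ℝ | ¬ Polynomial.eval (x:ℂ) (P i j) = 0} := by
    have huniv : (Set.univ : Set ℝ) = {x : ℝ | Polynomial.eval (x:ℂ) (P i j) = 0}
        ∪ {x : ℝ | ¬ Polynomial.eval (x:ℂ) (P i j) = 0} := by
      ext x
      by_cases hx : Polynomial.eval (x:ℂ) (P i j) = 0 <;> simp [hx]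
    rw [huniv]
    exact measure_union_le _ _
  rw [h0, hrow, add_zero] at hle
  simp [Real.volume_univ] at hle

lemma monicOPS_unique {W : ℝ → Matrix (Fin N) (Fin N) ℂ}
    (hW : IsWeight Set.univ W) (G1 G2 : ℕ → MatPoly N)
    (h1 : MonicOPS Set.univ W G1) (h2 : MonicOPS Set.univ W G2) : G1 = G2 := by
  funext n
  have hco : ∀ k, n ≤ k → coeffM (G1 n - G2 n) k = 0 := by
    intro k hk
    rw [coeffM_sub]
    rcases Nat.lt_or_ge n k with hh | hh
    · rw [(h1.1 n).2 k hh, (h2.1 n).2 k hh, sub_self]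
    · have hkn : k = n := le_antisymm hh hk
      subst hkn
      rw [(h1.1 k).1, (h2.1 k).1, sub_self]
  have e1 : innerW Set.univ W (G1 n - G2 n) (G1 n) = 0 :=
    ortho_span_gen hW G1 h1.1 id (fun _ _ => rfl) (fun _ _ => rfl) (G1 n) n _ hco
      (fun k hk => h1.2 k n (Nat.ne_of_lt hk))
  have e2 : innerW Set.univ W (G1 n - G2 n) (G2 n) = 0 :=
    ortho_span_gen hW G2 h2.1 id (fun _ _ => rfl) (fun _ _ => rfl) (G2 n) n _ hco
      (fun k hk => h2.2 k n (Nat.ne_of_lt hk))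
  have hdd : innerW Set.univ W (G1 n - G2 n) (G1 n - G2 n) = 0 := by
    rw [innerW_sub_right hW, e1, e2, sub_zero]
  have := inner_self_zero hW _ hdd
  exact sub_eq_zero.mp this

lemma evalM_smul (c : ℂ) (P : MatPoly N) (x : ℝ) :
    evalM (c • P) x = c • evalM P x := by
  funext i j
  simp [evalM, Matrix.smul_apply]

lemma evalM_reflectM (P : MatPoly N) (x : ℝ) :
    evalM (reflectM P) x = evalM P (-x) := by
  funext i j
  simp only [evalM, reflectM, eval_comp, eval_neg, eval_X]
  norm_cast

lemma integral_comp_neg_univ (f : ℝ → ℂ) : ∫ x : ℝ, f (-x) = ∫ x : ℝ, f x := by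
  have A : MeasurableEmbedding fun x : ℝ => -x := (Homeomorph.neg ℝ).measurableEmbedding
  rw [← MeasurableEmbedding.integral_map A, MeasureTheory.Measure.map_neg_eq_self]

open MeasureTheory in
lemma reflect_OPS {W : ℝ → Matrix (Fin N) (Fin N) ℂ}
    (hW : IsWeight Set.univ W) (hsymm : ∀ᵐ x : ℝ, W x = W (-x))
    (H : ℕ → MatPoly N) (hH : MonicOPS Set.univ W H) :
    MonicOPS Set.univ W (fun k => ((-1:ℂ)^k) • reflectM (H k)) := by
  have hc : ∀ (n m : ℕ), coeffM (((-1:ℂ)^n) • reflectM (H n)) m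
      = ((-1:ℂ)^(n+m)) • coeffM (H n) m := by
    intro n m
    funext i j
    simp only [coeffM, Matrix.smul_apply, reflectM, Polynomial.coeff_smul,
      coeff_comp_neg_X, smul_eq_mul, pow_add]
    ring
  constructor
  · intro n
    constructor
    · rw [hc n n]
      have hone : ((-1:ℂ))^(n+n) = 1 := by
        rw [← two_mul, pow_mul]; norm_num
      rw [hone, (hH.1 n).1, one_smul]
    · intro k hk
      rw [hc n k, (hH.1 n).2 k hk, smul_zero]
  · intro n m hnm
    funext i j
    simp only [innerW, matInt, MeasureTheory.Measure.restrict_univ, Matrix.zero_apply]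
    have key : ∀ᵐ x : ℝ, (evalM (((-1:ℂ)^n) • reflectM (H n)) x * W x
          * (evalM (((-1:ℂ)^m) • reflectM (H m)) x)ᴴ) i j
        = ((-1:ℂ)^(n+m)) • ((evalM (H n) (-x) * W (-x) * (evalM (H m) (-x))ᴴ) i j) := by
      filter_upwards [hsymm] with x hx
      rw [evalM_smul, evalM_reflectM, evalM_smul, evalM_reflectM,
        Matrix.conjTranspose_smul, Matrix.smul_mul, Matrix.smul_mul, Matrix.mul_smul,
        ← hx]
      rw [Matrix.smul_apply, Matrix.smul_apply, smul_smul]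
      congr 1
      rw [pow_add]
      simp [starRingEnd_apply]
    rw [integral_congr_ae key, integral_smul]
    have hswap : ∫ x : ℝ, (evalM (H n) (-x) * W (-x) * (evalM (H m) (-x))ᴴ) i j
        = ∫ x : ℝ, (evalM (H n) x * W x * (evalM (H m) x)ᴴ) i j :=
      integral_comp_neg_univ fun y => (evalM (H n) y * W y * (evalM (H m) y)ᴴ) i j
    rw [hswap]
    have h0 := congrFun (congrFun (hH.2 n m hnm) i) j
    simp only [innerW, matInt, Measure.restrict_univ] at h0
    rw [h0]
    simp

lemma sum_coeff_aux (p : ℂ[X]) (c : ℕ → ℕ) (n t : ℕ) :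
    (∑ k ∈ Finset.range (n+1), C (p.coeff (c k)) * X^k).coeff t
      = if t ≤ n then p.coeff (c t) else 0 := by
  rw [Polynomial.finset_sum_coeff]
  simp only [coeff_C_mul, coeff_X_pow, mul_ite, mul_one, mul_zero]
  rw [Finset.sum_ite_eq (Finset.range (n+1)) t (fun k => p.coeff (c k))]
  simp [Nat.lt_succ_iff]

lemma even_decomp (p : ℂ[X]) (n : ℕ) (h1 : ∀ m, ¬ (2 ∣ m) → p.coeff m = 0)
    (h2 : ∀ m, 2*n < m → p.coeff m = 0) :
    (∑ k ∈ Finset.range (n+1), C (p.coeff (2*k)) * X^k).comp (X^2 : ℂ[X]) = p := by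
  apply Polynomial.ext
  intro m
  rw [coeff_comp_X_sq, sum_coeff_aux p (fun k => 2*k) n]
  by_cases hm : 2 ∣ m
  · obtain ⟨k, rfl⟩ := hm
    have hdiv : 2 * k / 2 = k := by omega
    rw [if_pos ⟨k, rfl⟩, hdiv]
    by_cases hk : k ≤ n
    · rw [if_pos hk]
    · rw [if_neg hk, (h2 (2*k) (by omega)).symm]
  · rw [if_neg hm, (h1 m hm).symm]

lemma odd_decomp (p : ℂ[X]) (n : ℕ) (h1 : ∀ m, 2 ∣ m → p.coeff m = 0)
    (h2 : ∀ m, 2*n+1 < m → p.coeff m = 0) :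
    X * (∑ k ∈ Finset.range (n+1), C (p.coeff (2*k+1)) * X^k).comp (X^2 : ℂ[X]) = p := by
  apply Polynomial.ext
  intro m
  cases m with
  | zero =>
    rw [Polynomial.mul_coeff_zero, coeff_X_zero, zero_mul, (h1 0 ⟨0, rfl⟩).symm]
  | succ m' =>
    rw [Polynomial.coeff_X_mul, coeff_comp_X_sq, sum_coeff_aux p (fun k => 2*k+1) n]
    by_cases hm : 2 ∣ m'
    · obtain ⟨k, rfl⟩ := hm
      have hdiv : 2 * k / 2 = k := by omega
      rw [if_pos ⟨k, rfl⟩, hdiv]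
      by_cases hk : k ≤ n
      · rw [if_pos hk]
      · rw [if_neg hk, (h2 (2*k+1) (by omega)).symm]
    · rw [if_neg hm]
      have : 2 ∣ (m' + 1) := by omega
      rw [(h1 (m'+1) this).symm]

def evenPartM (P : MatPoly N) (n : ℕ) : MatPoly N :=
  fun i j => ∑ k ∈ Finset.range (n+1), C ((P i j).coeff (2*k)) * X^k

def oddPartM (P : MatPoly N) (n : ℕ) : MatPoly N :=
  fun i j => ∑ k ∈ Finset.range (n+1), C ((P i j).coeff (2*k+1)) * X^k

lemma coeffM_evenPartM (P : MatPoly N) (n t : ℕ) (ht : n < t) :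
    coeffM (evenPartM P n) t = 0 := by
  funext i j
  simp only [coeffM, evenPartM, sum_coeff_aux (P i j) (fun k => 2*k) n t]
  rw [if_neg (by omega)]
  simp

lemma coeffM_oddPartM (P : MatPoly N) (n t : ℕ) (ht : n < t) :
    coeffM (oddPartM P n) t = 0 := by
  funext i j
  simp only [coeffM, oddPartM, sum_coeff_aux (P i j) (fun k => 2*k+1) n t]
  rw [if_neg (by omega)]
  simp

lemma coeffM_compSqM_even (P : MatPoly N) (k : ℕ) :
    coeffM (compSqM P) (2*k) = coeffM P k := by
  funext i j
  simp only [coeffM, compSqM, coeff_comp_X_sq]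
  rw [if_pos ⟨k, rfl⟩]
  congr 1
  omega

lemma coeffM_compSqM_odd (P : MatPoly N) (m : ℕ) (hm : ¬ 2 ∣ m) :
    coeffM (compSqM P) m = 0 := by
  funext i j
  simp only [coeffM, compSqM, coeff_comp_X_sq, if_neg hm]
  simp

open MeasureTheory in
lemma split_univ_integral (h : ℝ → ℂ) (hInt : Integrable h) :
    ∫ x : ℝ, h x = (∫ x in Set.Iic (0:ℝ), h x) + ∫ x in Set.Ioi (0:ℝ), h x := by
  rw [← integral_add_compl measurableSet_Iic hInt, Set.compl_Iic]

open MeasureTheory in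
lemma iic_to_ioi (h : ℝ → ℂ) :
    ∫ x in Set.Iic (0:ℝ), h x = ∫ x in Set.Ioi (0:ℝ), h (-x) := by
  have := integral_comp_neg_Ioi (0:ℝ) h
  rw [neg_zero] at this
  exact this.symm

open MeasureTheory in
lemma inner_compSq {W : ℝ → Matrix (Fin N) (Fin N) ℂ} (hW : IsWeight Set.univ W)
    (hsymm : ∀ᵐ x : ℝ, W x = W (-x)) (P Q : MatPoly N) :
    innerW (Set.Ioi 0) (VWeight W) P Q = innerW Set.univ W (compSqM P) (compSqM Q) := by
  funext i j
  simp only [innerW, matInt, Measure.restrict_univ]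
  set h : ℝ → ℂ := fun x => (evalM (compSqM P) x * W x * (evalM (compSqM Q) x)ᴴ) i j with hh
  have hInt : Integrable h := by
    have := integrable_inner hW (compSqM P) (compSqM Q) i j
    rwa [integrableOn_univ] at this
  have heven : ∀ᵐ x : ℝ, h (-x) = h x := by
    filter_upwards [hsymm] with x hx
    simp only [hh]
    rw [evalM_compSqM, evalM_compSqM, evalM_compSqM, evalM_compSqM, neg_pow,
      ← hx]
    norm_num
  -- LHS via change of variables
  set g : ℝ → ℂ := fun y => (evalM P y * VWeight W y * (evalM Q y)ᴴ) i j with hg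
  have himg : (fun x : ℝ => x^2) '' Set.Ioi 0 = Set.Ioi 0 := by
    ext y
    constructor
    · rintro ⟨x, hx, rfl⟩
      exact pow_pos (Set.mem_Ioi.mp hx) 2
    · intro hy
      exact ⟨Real.sqrt y, Real.sqrt_pos.mpr hy, Real.sq_sqrt hy.le⟩
  have hinj : Set.InjOn (fun x : ℝ => x^2) (Set.Ioi 0) := by
    intro a ha b hb hab
    simp only [Set.mem_Ioi] at ha hb
    rw [← Real.sqrt_sq ha.le, ← Real.sqrt_sq hb.le]
    simp only at hab
    rw [hab]
  have hcv : ∫ y in Set.Ioi (0:ℝ), g y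
      = ∫ x in Set.Ioi (0:ℝ), |2*x| • g (x^2) := by
    conv_lhs => rw [← himg]
    exact integral_image_eq_integral_abs_deriv_smul measurableSet_Ioi
      (fun x _ => by simpa using (hasDerivAt_pow 2 x).hasDerivWithinAt) hinj g
  have hpt : ∀ x ∈ Set.Ioi (0:ℝ), |2*x| • g (x^2) = (2:ℝ) • h x := by
    intro x hx
    simp only [Set.mem_Ioi] at hx
    have hsq : Real.sqrt (x^2) = x := Real.sqrt_sq hx.le
    have hV : VWeight W (x^2) = x⁻¹ • W x := by
      simp [VWeight, hsq]
    simp only [hg, hV]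
    rw [← evalM_compSqM, ← evalM_compSqM, Matrix.mul_smul, Matrix.smul_mul,
      Matrix.smul_apply, smul_smul]
    have : |2*x| * x⁻¹ = 2 := by
      rw [abs_of_pos (by linarith)]
      field_simp
    rw [this]
  have hmain : ∫ y in Set.Ioi (0:ℝ), g y = (2:ℝ) • ∫ x in Set.Ioi (0:ℝ), h x := by
    rw [hcv, setIntegral_congr_fun measurableSet_Ioi hpt, integral_smul]
  rw [hmain, split_univ_integral h hInt, iic_to_ioi h]
  rw [setIntegral_congr_ae measurableSet_Ioi (heven.mono fun x hx _ => hx)]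
  rw [two_smul]

open MeasureTheory in
lemma inner_odd {W : ℝ → Matrix (Fin N) (Fin N) ℂ} (hW : IsWeight Set.univ W)
    (hsymm : ∀ᵐ x : ℝ, W x = W (-x)) (P Q : MatPoly N) :
    innerW Set.univ W (XmulM (compSqM P)) (compSqM Q) = 0 := by
  funext i j
  simp only [innerW, matInt, Measure.restrict_univ, Matrix.zero_apply]
  set h : ℝ → ℂ := fun x => (evalM (XmulM (compSqM P)) x * W x * (evalM (compSqM Q) x)ᴴ) i j
    with hh
  have hInt : Integrable h := by
    have := integrable_inner hW (XmulM (compSqM P)) (compSqM Q) i j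
    rwa [integrableOn_univ] at this
  have hodd : ∀ᵐ x : ℝ, h (-x) = - h x := by
    filter_upwards [hsymm] with x hx
    simp only [hh]
    rw [evalM_XmulM, evalM_XmulM, evalM_compSqM, evalM_compSqM, evalM_compSqM,
      evalM_compSqM, neg_sq, ← hx, Matrix.smul_mul, Matrix.smul_mul, Matrix.smul_mul,
      Matrix.smul_mul, Matrix.smul_apply, Matrix.smul_apply]
    push_cast
    rw [neg_smul]
  rw [split_univ_integral h hInt, iic_to_ioi h]
  rw [setIntegral_congr_ae measurableSet_Ioi (hodd.mono fun x hx _ => hx)]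
  rw [integral_neg, neg_add_cancel]

lemma coeff_entry_zero {P : MatPoly N} {t : ℕ} (h : coeffM P t = 0) (i j : Fin N) :
    (P i j).coeff t = 0 := by
  have := congrFun (congrFun h i) j
  simpa [coeffM] using this

end Stmt4Aux

open Stmt4Aux

/-- If `W(x) = W(-x)` a.e., `H` are the monic orthogonal polynomials
of `W` on `ℝ` and `L` those of `V(y) = y^{-1/2} W(√y)` on `(0,∞)`, then
`H_{2n}(x) = L_n(x²)` for all `n`. -/
theorem stmt4 {N : ℕ} (W : ℝ → Matrix (Fin N) (Fin N) ℂ)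
    (hW : IsWeight Set.univ W)
    (hsymm : ∀ᵐ x : ℝ, W x = W (-x))
    (H : ℕ → MatPoly N) (hH : MonicOPS Set.univ W H)
    (L : ℕ → MatPoly N) (hL : MonicOPS (Set.Ioi 0) (VWeight W) L) :
    ∀ n : ℕ, H (2 * n) = compSqM (L n) := by
  intro n
  have hrefl : H = fun k => ((-1:ℂ)^k) • reflectM (H k) :=
    monicOPS_unique hW H _ hH (reflect_OPS hW hsymm H hH)
  have hpar : ∀ k m, ¬ (2 ∣ (k + m)) → ∀ i j, (H k i j).coeff m = 0 := by
    intro k m hkm i j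
    have h1 := congrFun (congrFun (congrFun hrefl k) i) j
    have h2 := congrArg (fun p => Polynomial.coeff p m) h1
    simp only [Matrix.smul_apply, reflectM, Polynomial.coeff_smul, coeff_comp_neg_X,
      smul_eq_mul] at h2
    have hodd : Odd (k + m) := Nat.odd_iff.mpr (by omega)
    rw [← mul_assoc, ← pow_add, hodd.neg_one_pow, neg_one_mul] at h2
    rw [eq_neg_iff_add_eq_zero] at h2
    exact add_self_eq_zero.mp h2
  have hEven : ∀ m : ℕ, compSqM (evenPartM (H (2*m)) m) = H (2*m) := by
    intro m
    funext i j
    exact even_decomp (H (2*m) i j) m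
      (fun t ht => hpar (2*m) t (by omega) i j)
      (fun t ht => coeff_entry_zero ((hH.1 (2*m)).2 t ht) i j)
  have hOdd : ∀ m : ℕ, XmulM (compSqM (oddPartM (H (2*m+1)) m)) = H (2*m+1) := by
    intro m
    funext i j
    exact odd_decomp (H (2*m+1) i j) m
      (fun t ht => hpar (2*m+1) t (by omega) i j)
      (fun t ht => coeff_entry_zero ((hH.1 (2*m+1)).2 t ht) i j)
  have hkey : ∀ k, k < 2*n → innerW Set.univ W (H k) (compSqM (L n)) = 0 := by
    intro k hk
    rcases Nat.even_or_odd k with ⟨m, hm⟩ | ⟨m, hm⟩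
    · have hkm : k = 2*m := by omega
      subst hkm
      rw [← hEven m]
      refine ortho_span_gen hW L hL.1 compSqM compSqM_sub compSqM_constM_mul
        (compSqM (L n)) n _ (fun t ht => coeffM_evenPartM _ _ _ (by omega)) ?_
      intro t ht
      rw [← inner_compSq hW hsymm]
      exact hL.2 t n (Nat.ne_of_lt ht)
    · subst hm
      rw [← hOdd m]
      exact inner_odd hW hsymm _ _
  have hDcoeff : ∀ t, 2*n ≤ t → coeffM (H (2*n) - compSqM (L n)) t = 0 := by
    intro t ht
    rw [coeffM_sub]
    rcases Nat.lt_or_ge t (2*n+1) with h | h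
    · have htn : t = 2*n := by omega
      subst htn
      rw [(hH.1 (2*n)).1, coeffM_compSqM_even, (hL.1 n).1, sub_self]
    · rw [(hH.1 (2*n)).2 t (by omega)]
      by_cases hdvd : 2 ∣ t
      · obtain ⟨s, rfl⟩ := hdvd
        rw [coeffM_compSqM_even, (hL.1 n).2 s (by omega), zero_sub, neg_zero]
      · rw [coeffM_compSqM_odd _ _ hdvd, zero_sub, neg_zero]
  have e1 : innerW Set.univ W (H (2*n) - compSqM (L n)) (H (2*n)) = 0 :=
    ortho_span_gen hW H hH.1 id (fun _ _ => rfl) (fun _ _ => rfl) (H (2*n)) (2*n) _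
      hDcoeff (fun k hk => hH.2 k (2*n) (by omega))
  have e2 : innerW Set.univ W (H (2*n) - compSqM (L n)) (compSqM (L n)) = 0 :=
    ortho_span_gen hW H hH.1 id (fun _ _ => rfl) (fun _ _ => rfl) (compSqM (L n)) (2*n) _
      hDcoeff hkey
  have hdd : innerW Set.univ W (H (2*n) - compSqM (L n)) (H (2*n) - compSqM (L n)) = 0 := by
    rw [innerW_sub_right hW, e1, e2, sub_zero]
  exact sub_eq_zero.mp (inner_self_zero hW _ hdd)
end
end

section
/- Let W be an N×N weight matrix on ℝ satisfying W(x) = W(−x) for almost every x, with monic orthogonal polynomials {H_n}_{n≥0}, and let U(y) = y^{1/2} W(√y) be the associated weight matrix on (0,∞) with monic orthogonal polynomials {F_n}_{n≥0}. Then for every n ≥ 0, H_{2n+1}(x) = x · F_n(x²), i.e. H_{2n+1} equals the product of the polynomial x with the composition of F_n with the polynomial x². -/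
open MeasureTheory Polynomial Set Matrix
open scoped ComplexOrder

noncomputable section

section Helpers
variable {N : ℕ}

lemma conj_eval (q : Polynomial ℂ) (x : ℝ) :
    (starRingEnd ℂ) (q.eval (x : ℂ)) = (q.map (starRingEnd ℂ)).eval (x : ℂ) := by
  rw [Polynomial.eval_map]
  conv_rhs => rw [← Complex.conj_ofReal x]
  exact (Polynomial.eval₂_at_apply _ _).symm

lemma entry_expand (W : ℝ → Matrix (Fin N) (Fin N) ℂ) (P Q : MatPoly N) (i j : Fin N) (x : ℝ) :
    (evalM P x * W x * (evalM Q x)ᴴ) i j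
      = ∑ l : Fin N, ∑ k : Fin N,
          ((P i k * (Q j l).map (starRingEnd ℂ)).eval (x : ℂ)) * W x k l := by
  simp only [Matrix.mul_apply, Matrix.conjTranspose_apply, evalM, Finset.sum_mul,
    Polynomial.eval_mul, ← conj_eval, RCLike.star_def]
  refine Finset.sum_congr rfl fun l _ => Finset.sum_congr rfl fun k _ => by ring

lemma integrable_poly_mul {W : ℝ → Matrix (Fin N) (Fin N) ℂ} (hW : IsWeight Set.univ W)
    (r : Polynomial ℂ) (k l : Fin N) :
    Integrable (fun x : ℝ => r.eval (x : ℂ) * W x k l) := by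
  have h : (fun x : ℝ => r.eval (x : ℂ) * W x k l)
      = fun x : ℝ => ∑ m ∈ Finset.range (r.natDegree + 1),
          r.coeff m * ((x : ℂ) ^ m * W x k l) := by
    funext x
    rw [Polynomial.eval_eq_sum_range, Finset.sum_mul]
    exact Finset.sum_congr rfl fun m _ => by ring
  rw [h]
  refine integrable_finset_sum _ fun m _ => Integrable.const_mul ?_ _
  have := hW.moments m k l
  rwa [integrableOn_univ] at this

lemma integrable_inner {W : ℝ → Matrix (Fin N) (Fin N) ℂ} (hW : IsWeight Set.univ W)
    (P Q : MatPoly N) (i j : Fin N) :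
    Integrable (fun x : ℝ => (evalM P x * W x * (evalM Q x)ᴴ) i j) := by
  simp only [entry_expand]
  exact integrable_finset_sum _ fun l _ => integrable_finset_sum _ fun k _ =>
    integrable_poly_mul hW _ k l
-- evalM algebra
lemma evalM_add (P Q : MatPoly N) (x : ℝ) : evalM (P + Q) x = evalM P x + evalM Q x := by
  funext i j; simp [evalM, Matrix.add_apply]

lemma evalM_sub (P Q : MatPoly N) (x : ℝ) : evalM (P - Q) x = evalM P x - evalM Q x := by
  funext i j; simp [evalM, Matrix.sub_apply]

lemma evalM_sum {α : Type*} (s : Finset α) (f : α → MatPoly N) (x : ℝ) :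
    evalM (∑ a ∈ s, f a) x = ∑ a ∈ s, evalM (f a) x := by
  funext i j
  simp [evalM, Matrix.sum_apply, Polynomial.eval_finset_sum]

lemma evalM_constM_mul (A : Matrix (Fin N) (Fin N) ℂ) (Q : MatPoly N) (x : ℝ) :
    evalM (constM A * Q) x = A * evalM Q x := by
  funext i j
  simp [evalM, constM, Matrix.mul_apply, Polynomial.eval_finset_sum]

lemma evalM_XmulM (P : MatPoly N) (x : ℝ) :
    evalM (XmulM P) x = (x : ℂ) • evalM P x := by
  funext i j; simp [evalM, XmulM, Matrix.smul_apply]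

lemma evalM_compSqM (P : MatPoly N) (x : ℝ) :
    evalM (compSqM P) x = evalM P (x ^ 2) := by
  funext i j
  simp only [evalM, compSqM, Polynomial.eval_comp, Polynomial.eval_pow, Polynomial.eval_X]
  norm_cast

-- coeffM algebra
lemma coeffM_sub (P Q : MatPoly N) (k : ℕ) : coeffM (P - Q) k = coeffM P k - coeffM Q k := by
  funext i j; simp [coeffM, Matrix.sub_apply]

lemma coeffM_constM_mul (A : Matrix (Fin N) (Fin N) ℂ) (Q : MatPoly N) (k : ℕ) :
    coeffM (constM A * Q) k = A * coeffM Q k := by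
  funext i j
  simp [coeffM, constM, Matrix.mul_apply, Polynomial.finset_sum_coeff]

lemma matPoly_eq_zero {Q : MatPoly N} (h : ∀ k, coeffM Q k = 0) : Q = 0 := by
  funext i j
  ext k
  have := congrFun (congrFun (h k) i) j
  simpa [coeffM] using this

-- coeff of comp with X^2
lemma coeff_comp_sq (p : Polynomial ℂ) (m : ℕ) :
    (p.comp (Polynomial.X ^ 2)).coeff m = if m % 2 = 0 then p.coeff (m / 2) else 0 := by
  rw [Polynomial.comp_eq_sum_left, Polynomial.sum_def, Polynomial.finset_sum_coeff]
  have hterm : ∀ e ∈ p.support,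
      (Polynomial.C (p.coeff e) * (Polynomial.X ^ 2) ^ e).coeff m
        = if m = 2 * e then p.coeff e else 0 := by
    intro e _
    rw [← pow_mul, Polynomial.coeff_C_mul, Polynomial.coeff_X_pow]
    simp [mul_ite]
  rw [Finset.sum_congr rfl hterm]
  rcases Nat.even_or_odd m with he | ho
  · obtain ⟨t, ht⟩ := he
    have hmod : m % 2 = 0 := by omega
    have hdiv : m / 2 = t := by omega
    rw [if_pos hmod, hdiv]
    have : ∀ e ∈ p.support, (if m = 2 * e then p.coeff e else 0)
        = if e = t then p.coeff e else 0 := by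
      intro e _; congr 1; simp only [eq_iff_iff]; omega
    rw [Finset.sum_congr rfl this, Finset.sum_ite_eq' p.support t]
    split_ifs with h
    · rfl
    · exact (Polynomial.notMem_support_iff.mp h).symm
  · obtain ⟨t, ht⟩ := ho
    have hmod : ¬ m % 2 = 0 := by omega
    rw [if_neg hmod]
    refine Finset.sum_eq_zero fun e _ => ?_
    rw [if_neg (by omega)]

lemma coeffM_compSqM (P : MatPoly N) (m : ℕ) :
    coeffM (compSqM P) m = if m % 2 = 0 then coeffM P (m / 2) else 0 := by
  funext i j
  simp only [coeffM, compSqM, coeff_comp_sq]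
  split_ifs <;> simp [coeffM]

lemma coeffM_XmulM (P : MatPoly N) (m : ℕ) :
    coeffM (XmulM P) m = if m = 0 then 0 else coeffM P (m - 1) := by
  funext i j
  rcases m with _ | m
  · simp [coeffM, XmulM, Polynomial.mul_coeff_zero]
  · simp [coeffM, XmulM, Polynomial.coeff_X_mul]

lemma isMonicDeg_G {P : MatPoly N} {n : ℕ} (h : IsMonicDeg P n) :
    IsMonicDeg (XmulM (compSqM P)) (2 * n + 1) := by
  constructor
  · rw [coeffM_XmulM, if_neg (by omega), coeffM_compSqM]
    have : (2 * n + 1 - 1) = 2 * n := by omega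
    rw [this, if_pos (by omega)]
    have : 2 * n / 2 = n := by omega
    rw [this, h.1]
  · intro k hk
    rw [coeffM_XmulM, if_neg (by omega), coeffM_compSqM]
    split_ifs with hmod
    · exact h.2 _ (by omega)
    · rfl
-- expansion in a monic family
lemma expand_monic (M : ℕ → MatPoly N) (hM : ∀ n, IsMonicDeg (M n) n) :
    ∀ m (Q : MatPoly N), (∀ k, m ≤ k → coeffM Q k = 0) →
      ∃ A : ℕ → Matrix (Fin N) (Fin N) ℂ,
        Q = ∑ k ∈ Finset.range m, constM (A k) * M k := by
  intro m
  induction m with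
  | zero =>
    intro Q hQ
    exact ⟨0, by simpa using matPoly_eq_zero fun k => hQ k (Nat.zero_le k)⟩
  | succ m ih =>
    intro Q hQ
    set Am := coeffM Q m with hAm
    have hQ' : ∀ k, m ≤ k → coeffM (Q - constM Am * M m) k = 0 := by
      intro k hk
      rw [coeffM_sub, coeffM_constM_mul]
      rcases eq_or_lt_of_le hk with rfl | hlt
      · rw [(hM m).1, mul_one, hAm, sub_self]
      · rw [hQ k (by omega), (hM m).2 k hlt, mul_zero, sub_self]
    obtain ⟨A, hA⟩ := ih _ hQ'
    refine ⟨fun k => if k = m then Am else A k, ?_⟩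
    have hsum : ∑ k ∈ Finset.range (m + 1), constM (if k = m then Am else A k) * M k
        = (∑ k ∈ Finset.range m, constM (A k) * M k) + constM Am * M m := by
      rw [Finset.sum_range_succ, if_pos rfl]
      congr 1
      refine Finset.sum_congr rfl fun k hk => by rw [if_neg (by simp at hk; omega)]
    rw [hsum, ← hA]
    abel

-- innerW linearity (over univ, where we have integrability)
lemma innerW_sub_left {W : ℝ → Matrix (Fin N) (Fin N) ℂ} (hW : IsWeight Set.univ W)
    (P Q R : MatPoly N) :
    innerW Set.univ W (P - Q) R = innerW Set.univ W P R - innerW Set.univ W Q R := by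
  funext i j
  simp only [innerW, matInt, Matrix.sub_apply]
  rw [← integral_sub]
  · congr 1
    funext x
    simp [evalM_sub, Matrix.sub_mul, Matrix.sub_apply]
  · exact (integrable_inner hW P R i j).integrableOn
  · exact (integrable_inner hW Q R i j).integrableOn

lemma innerW_add_right {W : ℝ → Matrix (Fin N) (Fin N) ℂ} (hW : IsWeight Set.univ W)
    (P Q R : MatPoly N) :
    innerW Set.univ W P (Q + R) = innerW Set.univ W P Q + innerW Set.univ W P R := by
  funext i j
  simp only [innerW, matInt, Matrix.add_apply]
  rw [← integral_add]
  · congr 1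
    funext x
    simp [evalM_add, Matrix.conjTranspose_add, Matrix.mul_add, Matrix.add_apply]
  · exact (integrable_inner hW P Q i j).integrableOn
  · exact (integrable_inner hW P R i j).integrableOn

lemma innerW_sum_right {W : ℝ → Matrix (Fin N) (Fin N) ℂ} (hW : IsWeight Set.univ W)
    (P : MatPoly N) {α : Type*} (s : Finset α) (f : α → MatPoly N) :
    innerW Set.univ W P (∑ a ∈ s, f a) = ∑ a ∈ s, innerW Set.univ W P (f a) := by
  funext i j
  simp only [innerW, matInt, Matrix.sum_apply]
  rw [← integral_finset_sum]
  · congr 1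
    funext x
    simp [evalM_sum, Matrix.conjTranspose_sum, Matrix.mul_sum, Matrix.sum_apply]
  · exact fun a _ => (integrable_inner hW P (f a) i j).integrableOn

lemma innerW_constM_mul_right {W : ℝ → Matrix (Fin N) (Fin N) ℂ} (hW : IsWeight Set.univ W)
    (A : Matrix (Fin N) (Fin N) ℂ) (P Q : MatPoly N) :
    innerW Set.univ W P (constM A * Q) = innerW Set.univ W P Q * Aᴴ := by
  funext i j
  have hR : (innerW Set.univ W P Q * Aᴴ) i j
      = ∑ l : Fin N, (∫ x in Set.univ, (evalM P x * W x * (evalM Q x)ᴴ) i l) * Aᴴ l j := by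
    simp [innerW, matInt, Matrix.mul_apply]
  rw [hR]
  have hL : ∀ x : ℝ, (evalM P x * W x * (evalM (constM A * Q) x)ᴴ) i j
      = ∑ l : Fin N, (evalM P x * W x * (evalM Q x)ᴴ) i l * Aᴴ l j := by
    intro x
    rw [evalM_constM_mul, Matrix.conjTranspose_mul, ← Matrix.mul_assoc]
    simp [Matrix.mul_apply]
  simp only [innerW, matInt]
  simp only [hL]
  rw [integral_finset_sum _ (fun l _ => ((integrable_inner hW P Q i l).mul_const _).integrableOn)]
  refine Finset.sum_congr rfl fun l _ => ?_
  rw [← smul_eq_mul, ← integral_smul_const]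
  simp_rw [smul_eq_mul]
-- distribution lemmas
lemma compSqM_constM_mul (A : Matrix (Fin N) (Fin N) ℂ) (R : MatPoly N) :
    compSqM (constM A * R) = constM A * compSqM R := by
  funext i j
  simp [compSqM, constM, Matrix.mul_apply]

lemma XmulM_constM_mul (A : Matrix (Fin N) (Fin N) ℂ) (R : MatPoly N) :
    XmulM (constM A * R) = constM A * XmulM R := by
  funext i j
  simp only [XmulM, constM, Matrix.mul_apply, Finset.mul_sum, Matrix.map_apply]
  exact Finset.sum_congr rfl fun l _ => by ring

lemma compSqM_sum {α : Type*} (s : Finset α) (f : α → MatPoly N) :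
    compSqM (∑ a ∈ s, f a) = ∑ a ∈ s, compSqM (f a) := by
  funext i j
  simp [compSqM, Matrix.sum_apply]

lemma XmulM_sum {α : Type*} (s : Finset α) (f : α → MatPoly N) :
    XmulM (∑ a ∈ s, f a) = ∑ a ∈ s, XmulM (f a) := by
  funext i j
  simp [XmulM, Matrix.sum_apply, Finset.mul_sum]

-- even/odd integral lemmas
lemma integral_comp_neg' (f : ℝ → ℂ) : ∫ x : ℝ, f (-x) = ∫ x : ℝ, f x := by
  have A : MeasurableEmbedding fun x : ℝ => -x :=
    (Homeomorph.neg ℝ).isClosedEmbedding.measurableEmbedding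
  conv_rhs => rw [← Measure.map_neg_eq_self (volume : Measure ℝ)]
  rw [A.integral_map]

lemma odd_integral_zero (g : ℝ → ℂ) (ho : ∀ᵐ x : ℝ, g (-x) = -g x) :
    ∫ x in Set.univ, g x = 0 := by
  rw [setIntegral_univ]
  have h1 : ∫ x : ℝ, g (-x) = ∫ x : ℝ, g x := integral_comp_neg' g
  have h2 : ∫ x : ℝ, g (-x) = ∫ x : ℝ, -g x := integral_congr_ae ho
  rw [integral_neg] at h2
  linear_combination (h1.symm.trans h2) / 2

lemma even_integral_split (g : ℝ → ℂ) (hg : Integrable g) (he : ∀ᵐ x : ℝ, g (-x) = g x) :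
    ∫ x in Set.univ, g x = 2 * ∫ x in Set.Ioi (0:ℝ), g x := by
  rw [setIntegral_univ]
  have hsplit : ∫ x : ℝ, g x = (∫ x in Set.Iic (0:ℝ), g x) + ∫ x in Set.Ioi (0:ℝ), g x := by
    rw [← setIntegral_union (Set.Iic_disjoint_Ioi le_rfl) measurableSet_Ioi
      hg.integrableOn hg.integrableOn, Set.Iic_union_Ioi, setIntegral_univ]
  have hneg : ∫ x in Set.Ioi (0:ℝ), g (-x) = ∫ x in Set.Iic (0:ℝ), g x := by
    simpa using integral_comp_neg_Ioi 0 g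
  have hcong : ∫ x in Set.Ioi (0:ℝ), g (-x) = ∫ x in Set.Ioi (0:ℝ), g x :=
    integral_congr_ae (ae_restrict_of_ae he)
  rw [hsplit, ← hneg, hcong]
  ring
lemma evalM_G_neg (R : MatPoly N) (x : ℝ) :
    evalM (XmulM (compSqM R)) (-x) = - evalM (XmulM (compSqM R)) x := by
  rw [evalM_XmulM, evalM_XmulM, evalM_compSqM, evalM_compSqM]
  have h : (-x) ^ 2 = x ^ 2 := by ring
  rw [h, Complex.ofReal_neg, neg_smul]

lemma key_subst {W : ℝ → Matrix (Fin N) (Fin N) ℂ} (hW : IsWeight Set.univ W)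
    (hsymm : ∀ᵐ x : ℝ, W x = W (-x)) (P Q : MatPoly N) :
    innerW (Set.Ioi 0) (UWeight W) P Q
      = innerW Set.univ W (XmulM (compSqM P)) (XmulM (compSqM Q)) := by
  funext i j
  set P' := XmulM (compSqM P) with hP'
  set Q' := XmulM (compSqM Q) with hQ'
  set g : ℝ → ℂ := fun x => (evalM P' x * W x * (evalM Q' x)ᴴ) i j with hg
  have heven : ∀ᵐ x : ℝ, g (-x) = g x := by
    filter_upwards [hsymm] with x hx
    simp only [hg, hP', hQ', evalM_G_neg, ← hx]
    simp [Matrix.conjTranspose_neg, Matrix.neg_mul, Matrix.mul_neg]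
  have hsplit := even_integral_split g (integrable_inner hW P' Q' i j) heven
  have himg : (fun x : ℝ => x ^ 2) '' Set.Ioi (0:ℝ) = Set.Ioi 0 := by
    ext y
    constructor
    · rintro ⟨x, hx, rfl⟩
      exact Set.mem_Ioi.mpr (pow_pos (Set.mem_Ioi.mp hx) 2)
    · intro hy
      exact ⟨Real.sqrt y, Real.sqrt_pos.mpr hy, Real.sq_sqrt hy.le⟩
  have hderiv : ∀ x ∈ Set.Ioi (0:ℝ),
      HasDerivWithinAt (fun x : ℝ => x ^ 2) (2 * x) (Set.Ioi 0) x := by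
    intro x _
    simpa using (hasDerivAt_pow 2 x).hasDerivWithinAt
  have hinj : Set.InjOn (fun x : ℝ => x ^ 2) (Set.Ioi 0) := by
    intro a ha b hb hab
    simp only at hab
    have h2 := congrArg Real.sqrt hab
    rwa [Real.sqrt_sq (le_of_lt ha), Real.sqrt_sq (le_of_lt hb)] at h2
  set h : ℝ → ℂ := fun y => (evalM P y * UWeight W y * (evalM Q y)ᴴ) i j with hh
  show (∫ y in Set.Ioi (0:ℝ), h y) = ∫ x in Set.univ, g x
  calc ∫ y in Set.Ioi (0:ℝ), h y
      = ∫ y in (fun x : ℝ => x ^ 2) '' Set.Ioi 0, h y := by rw [himg]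
    _ = ∫ x in Set.Ioi (0:ℝ), |2 * x| • h (x ^ 2) :=
        integral_image_eq_integral_abs_deriv_smul measurableSet_Ioi hderiv hinj h
    _ = ∫ x in Set.Ioi (0:ℝ), (2 : ℂ) • g x := by
        refine setIntegral_congr_fun measurableSet_Ioi fun x hx => ?_
        have hx0 : (0:ℝ) < x := hx
        have hsq : Real.sqrt (x ^ 2) = x := Real.sqrt_sq hx0.le
        have habs : |2 * x| = 2 * x := abs_of_pos (by linarith)
        simp only [hh, UWeight, hsq, hg, hP', hQ', evalM_XmulM, evalM_compSqM, habs]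
        simp only [Matrix.smul_mul, Matrix.mul_smul, Matrix.conjTranspose_smul,
          RCLike.star_def, Complex.conj_ofReal, Matrix.smul_apply, Complex.real_smul,
          smul_eq_mul, Complex.ofReal_mul]
        push_cast
        ring
    _ = (2:ℂ) * ∫ x in Set.Ioi (0:ℝ), g x := by rw [integral_smul]; norm_num
    _ = ∫ x in Set.univ, g x := by rw [hsplit]
lemma coeff_sum_even (a : ℕ → ℂ) (n m : ℕ) :
    (∑ k ∈ Finset.range n, Polynomial.C (a k) * Polynomial.X ^ (2 * k)).coeff m
      = if m % 2 = 0 ∧ m / 2 < n then a (m / 2) else 0 := by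
  rw [Polynomial.finset_sum_coeff]
  simp only [Polynomial.coeff_C_mul, Polynomial.coeff_X_pow, mul_ite, mul_one, mul_zero]
  by_cases h : m % 2 = 0 ∧ m / 2 < n
  · rw [if_pos h]
    have : ∀ k ∈ Finset.range n, (if m = 2 * k then a k else 0)
        = if k = m / 2 then a k else 0 := by
      intro k _; congr 1; simp only [eq_iff_iff]; omega
    rw [Finset.sum_congr rfl this, Finset.sum_ite_eq' (Finset.range n) (m / 2) a,
      if_pos (Finset.mem_range.mpr h.2)]
  · rw [if_neg h]
    refine Finset.sum_eq_zero fun k hk => ?_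
    simp only [Finset.mem_range] at hk
    rw [if_neg (by omega)]

lemma coeff_sum_odd (a : ℕ → ℂ) (n m : ℕ) :
    (∑ k ∈ Finset.range n, Polynomial.C (a k) * Polynomial.X ^ (2 * k + 1)).coeff m
      = if m % 2 = 1 ∧ m / 2 < n then a (m / 2) else 0 := by
  rw [Polynomial.finset_sum_coeff]
  simp only [Polynomial.coeff_C_mul, Polynomial.coeff_X_pow, mul_ite, mul_one, mul_zero]
  by_cases h : m % 2 = 1 ∧ m / 2 < n
  · rw [if_pos h]
    have : ∀ k ∈ Finset.range n, (if m = 2 * k + 1 then a k else 0)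
        = if k = m / 2 then a k else 0 := by
      intro k _; congr 1; simp only [eq_iff_iff]; omega
    rw [Finset.sum_congr rfl this, Finset.sum_ite_eq' (Finset.range n) (m / 2) a,
      if_pos (Finset.mem_range.mpr h.2)]
  · rw [if_neg h]
    refine Finset.sum_eq_zero fun k hk => ?_
    simp only [Finset.mem_range] at hk
    rw [if_neg (by omega)]

lemma comp_sq_sum (a : ℕ → ℂ) (n : ℕ) :
    (∑ k ∈ Finset.range n, Polynomial.C (a k) * Polynomial.X ^ k).comp (Polynomial.X ^ 2)
      = ∑ k ∈ Finset.range n, Polynomial.C (a k) * Polynomial.X ^ (2 * k) := by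
  rw [Polynomial.sum_comp]
  refine Finset.sum_congr rfl fun k _ => ?_
  rw [Polynomial.mul_comp, Polynomial.C_comp, Polynomial.pow_comp, Polynomial.X_comp,
    ← pow_mul]
  try rw [mul_comm k 2]

lemma scalar_decomp (p : Polynomial ℂ) (n : ℕ) (hp : ∀ k, 2 * n + 1 ≤ k → p.coeff k = 0) :
    p = (∑ k ∈ Finset.range (n + 1),
            Polynomial.C (p.coeff (2 * k)) * Polynomial.X ^ k).comp (Polynomial.X ^ 2)
        + Polynomial.X * (∑ k ∈ Finset.range n,
            Polynomial.C (p.coeff (2 * k + 1)) * Polynomial.X ^ k).comp (Polynomial.X ^ 2) := by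
  have hodd : Polynomial.X * (∑ k ∈ Finset.range n,
        Polynomial.C (p.coeff (2 * k + 1)) * Polynomial.X ^ k).comp (Polynomial.X ^ 2)
      = ∑ k ∈ Finset.range n, Polynomial.C (p.coeff (2 * k + 1)) * Polynomial.X ^ (2 * k + 1) := by
    rw [comp_sq_sum, Finset.mul_sum]
    exact Finset.sum_congr rfl fun k _ => by ring
  rw [comp_sq_sum, hodd]
  ext m
  rw [Polynomial.coeff_add, coeff_sum_even, coeff_sum_odd]
  rcases Nat.even_or_odd m with ⟨t, ht⟩ | ⟨t, ht⟩
  · by_cases hle : m / 2 < n + 1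
    · rw [if_pos ⟨by omega, hle⟩, if_neg (by omega)]
      have : 2 * (m / 2) = m := by omega
      rw [this, add_zero]
    · rw [if_neg (by omega), if_neg (by omega), hp m (by omega), add_zero]
  · by_cases hle : m / 2 < n
    · rw [if_neg (by omega), if_pos ⟨by omega, hle⟩, zero_add]
      have : 2 * (m / 2) + 1 = m := by omega
      rw [this]
    · rw [if_neg (by omega), if_neg (by omega), hp m (by omega), add_zero]
lemma orthoG {W : ℝ → Matrix (Fin N) (Fin N) ℂ} (hW : IsWeight Set.univ W)
    (hsymm : ∀ᵐ x : ℝ, W x = W (-x)) (F : ℕ → MatPoly N)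
    (hF : MonicOPS (Set.Ioi 0) (UWeight W) F) (n : ℕ)
    (Q : MatPoly N) (hQ : ∀ k, 2 * n + 1 ≤ k → coeffM Q k = 0) :
    innerW Set.univ W (XmulM (compSqM (F n))) Q = 0 := by
  set G := XmulM (compSqM (F n)) with hG
  set Qe : MatPoly N := fun i j => ∑ k ∈ Finset.range (n + 1),
    Polynomial.C ((Q i j).coeff (2 * k)) * Polynomial.X ^ k with hQe
  set Qo : MatPoly N := fun i j => ∑ k ∈ Finset.range n,
    Polynomial.C ((Q i j).coeff (2 * k + 1)) * Polynomial.X ^ k with hQo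
  have hdecomp : Q = compSqM Qe + XmulM (compSqM Qo) := by
    funext i j
    have hp : ∀ k, 2 * n + 1 ≤ k → (Q i j).coeff k = 0 := by
      intro k hk
      have := congrFun (congrFun (hQ k hk) i) j
      simpa [coeffM] using this
    simpa [Matrix.add_apply, compSqM, XmulM, hQe, hQo] using scalar_decomp (Q i j) n hp
  have h1 : innerW Set.univ W G (compSqM Qe) = 0 := by
    funext i j
    show (∫ x in Set.univ, (evalM G x * W x * (evalM (compSqM Qe) x)ᴴ) i j) = 0
    rw [odd_integral_zero]
    filter_upwards [hsymm] with x hx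
    rw [hG, evalM_G_neg, ← hx, evalM_compSqM, evalM_compSqM]
    have h2 : (-x) ^ 2 = x ^ 2 := by ring
    rw [h2]
    simp [Matrix.neg_mul, Matrix.mul_neg, Matrix.neg_apply]
  have hQodeg : ∀ k, n ≤ k → coeffM Qo k = 0 := by
    intro k hk
    funext i j
    simp only [coeffM, hQo, Polynomial.finset_sum_coeff, Polynomial.coeff_C_mul,
      Polynomial.coeff_X_pow, Matrix.zero_apply, mul_ite, mul_one, mul_zero]
    refine Finset.sum_eq_zero fun l hl => ?_
    simp only [Finset.mem_range] at hl
    rw [if_neg (by omega)]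
  obtain ⟨A, hA⟩ := expand_monic F hF.1 n Qo hQodeg
  have h2 : innerW Set.univ W G (XmulM (compSqM Qo)) = 0 := by
    rw [hG, ← key_subst hW hsymm, hA, key_subst hW hsymm, compSqM_sum, XmulM_sum]
    have hterm : ∀ k, XmulM (compSqM (constM (A k) * F k))
        = constM (A k) * XmulM (compSqM (F k)) := by
      intro k
      rw [compSqM_constM_mul, XmulM_constM_mul]
    have : ∑ k ∈ Finset.range n, XmulM (compSqM (constM (A k) * F k))
        = ∑ k ∈ Finset.range n, constM (A k) * XmulM (compSqM (F k)) :=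
      Finset.sum_congr rfl fun k _ => hterm k
    rw [this, innerW_sum_right hW]
    refine Finset.sum_eq_zero fun k hk => ?_
    rw [innerW_constM_mul_right hW, ← key_subst hW hsymm,
      hF.2 n k (by simp only [Finset.mem_range] at hk; omega), Matrix.zero_mul]
  rw [hdecomp, innerW_add_right hW, h1, h2, add_zero]
lemma diag_identity (E Wm : Matrix (Fin N) (Fin N) ℂ) (i : Fin N) :
    (E * Wm * Eᴴ) i i
      = dotProduct (star fun k => star (E i k)) (Wm *ᵥ fun k => star (E i k)) := by
  simp only [Matrix.mul_apply, Matrix.conjTranspose_apply, dotProduct, Matrix.mulVec,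
    Pi.star_apply, star_star, Finset.sum_mul, Finset.mul_sum]
  rw [Finset.sum_comm]
  exact Finset.sum_congr rfl fun j _ => Finset.sum_congr rfl fun k _ => by ring

lemma poly_aezero (p : Polynomial ℂ) (h : ∀ᵐ x : ℝ, p.eval (x : ℂ) = 0) : p = 0 := by
  by_contra hp
  have hsub : {x : ℝ | p.eval (x : ℂ) = 0}
      ⊆ (fun x : ℝ => (x : ℂ)) ⁻¹' (p.roots.toFinset : Set ℂ) := by
    intro x hx
    have hmem : (x : ℂ) ∈ p.roots.toFinset := by
      rw [Multiset.mem_toFinset, Polynomial.mem_roots hp]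
      exact hx
    exact hmem
  have hfin : {x : ℝ | p.eval (x : ℂ) = 0}.Finite :=
    Set.Finite.subset
      (Set.Finite.preimage (Set.injOn_of_injective Complex.ofReal_injective)
        (Finset.finite_toSet _)) hsub
  have h0 : volume {x : ℝ | ¬ p.eval (x : ℂ) = 0} = 0 := ae_iff.mp h
  have hle := measure_union_le (μ := volume) {x : ℝ | p.eval (x : ℂ) = 0}
    {x : ℝ | p.eval (x : ℂ) = 0}ᶜ
  rw [Set.union_compl_self, hfin.measure_zero, Set.compl_setOf] at hle
  simp only [Real.volume_univ] at hle
  rw [h0, add_zero] at hle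
  simp at hle

end Helpers

/-- If `W(x) = W(-x)` a.e., `H` are the monic orthogonal polynomials
of `W` on `ℝ` and `F` those of `U(y) = y^{1/2} W(√y)` on `(0,∞)`, then
`H_{2n+1}(x) = x · F_n(x²)` for all `n`. -/
theorem stmt5 {N : ℕ} (W : ℝ → Matrix (Fin N) (Fin N) ℂ)
    (hW : IsWeight Set.univ W)
    (hsymm : ∀ᵐ x : ℝ, W x = W (-x))
    (H : ℕ → MatPoly N) (hH : MonicOPS Set.univ W H)
    (F : ℕ → MatPoly N) (hF : MonicOPS (Set.Ioi 0) (UWeight W) F) :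
    ∀ n : ℕ, H (2 * n + 1) = XmulM (compSqM (F n)) := by
  intro n
  set G := XmulM (compSqM (F n)) with hGdef
  have hGmon : IsMonicDeg G (2 * n + 1) := isMonicDeg_G (hF.1 n)
  set D := H (2 * n + 1) - G with hD
  have hDdeg : ∀ k, 2 * n + 1 ≤ k → coeffM D k = 0 := by
    intro k hk
    rw [hD, coeffM_sub]
    rcases eq_or_lt_of_le hk with rfl | hlt
    · rw [(hH.1 _).1, hGmon.1, sub_self]
    · rw [(hH.1 _).2 k hlt, hGmon.2 k hlt, sub_self]
  have h1 : innerW Set.univ W (H (2 * n + 1)) D = 0 := by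
    obtain ⟨B, hB⟩ := expand_monic H hH.1 (2 * n + 1) D hDdeg
    rw [hB, innerW_sum_right hW]
    refine Finset.sum_eq_zero fun k hk => ?_
    rw [innerW_constM_mul_right hW, hH.2 (2 * n + 1) k
      (by simp only [Finset.mem_range] at hk; omega), Matrix.zero_mul]
  have h2 : innerW Set.univ W G D = 0 := orthoG hW hsymm F hF n D hDdeg
  have hDD : innerW Set.univ W D D = 0 := by
    have hsub := innerW_sub_left hW (H (2 * n + 1)) G D
    rw [← hD] at hsub
    rw [hsub, h1, h2, sub_zero]
  -- positivity
  have hposdef : ∀ᵐ x : ℝ, (W x).PosDef := by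
    have := hW.posdef
    rwa [Measure.restrict_univ] at this
  have haezero : ∀ᵐ x : ℝ, evalM D x = 0 := by
    have hint : ∀ i : Fin N, Integrable (fun x : ℝ => (evalM D x * W x * (evalM D x)ᴴ) i i) :=
      fun i => integrable_inner hW D D i i
    have hint0 : ∀ i : Fin N, ∫ x : ℝ, (evalM D x * W x * (evalM D x)ᴴ) i i = 0 := by
      intro i
      have := congrFun (congrFun hDD i) i
      simp only [innerW, matInt, Matrix.zero_apply] at this
      rwa [Measure.restrict_univ] at this
    have hdiagpos : ∀ᵐ x : ℝ, ∀ i : Fin N, 0 ≤ (evalM D x * W x * (evalM D x)ᴴ) i i := by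
      filter_upwards [hposdef] with x hx
      intro i
      rw [diag_identity]
      exact hx.posSemidef.dotProduct_mulVec_nonneg _
    have hu_int : Integrable (fun x : ℝ => ∑ i : Fin N, ((evalM D x * W x * (evalM D x)ᴴ) i i).re) :=
      integrable_finset_sum _ fun i _ => (hint i).re
    have hu_nonneg : 0 ≤ᵐ[volume]
        fun x : ℝ => ∑ i : Fin N, ((evalM D x * W x * (evalM D x)ᴴ) i i).re := by
      filter_upwards [hdiagpos] with x hx
      exact Finset.sum_nonneg fun i _ => (Complex.nonneg_iff.mp (hx i)).1
    have hu_zero : ∫ x : ℝ, ∑ i : Fin N, ((evalM D x * W x * (evalM D x)ᴴ) i i).re = 0 := by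
      have hre_int : ∀ i ∈ (Finset.univ : Finset (Fin N)),
          Integrable (fun x : ℝ => ((evalM D x * W x * (evalM D x)ᴴ) i i).re) volume :=
        fun i _ => (hint i).re
      rw [integral_finset_sum _ hre_int]
      refine Finset.sum_eq_zero fun i _ => ?_
      have hri := integral_re (hint i)
      simp only [RCLike.re_to_complex] at hri
      rw [hri, hint0 i, Complex.zero_re]
    have hae := (integral_eq_zero_iff_of_nonneg_ae hu_nonneg hu_int).mp hu_zero
    filter_upwards [hae, hdiagpos, hposdef] with x hx1 hx2 hx3
    have hre : ∀ i : Fin N, ((evalM D x * W x * (evalM D x)ᴴ) i i).re = 0 := by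
      intro i
      have hsum : ∑ i : Fin N, ((evalM D x * W x * (evalM D x)ᴴ) i i).re = 0 := hx1
      exact (Finset.sum_eq_zero_iff_of_nonneg
        (fun i _ => (Complex.nonneg_iff.mp (hx2 i)).1)).mp hsum i (Finset.mem_univ i)
    have hMii : ∀ i : Fin N, (evalM D x * W x * (evalM D x)ᴴ) i i = 0 := by
      intro i
      have him := (Complex.nonneg_iff.mp (hx2 i)).2
      exact Complex.ext (hre i) him.symm
    funext i j
    by_contra hne
    have hy0 : (fun k => star (evalM D x i k)) ≠ 0 := by
      intro hzero
      apply hne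
      have := congrFun hzero j
      simp only [Pi.zero_apply, star_eq_zero] at this
      simpa [Matrix.zero_apply] using this
    have hlt := hx3.dotProduct_mulVec_pos hy0
    rw [← diag_identity, hMii i] at hlt
    exact lt_irrefl _ hlt
  have hD0 : D = 0 := by
    funext i j
    apply poly_aezero
    filter_upwards [haezero] with x hx
    have := congrFun (congrFun hx i) j
    simpa [evalM, Matrix.zero_apply] using this
  have : H (2 * n + 1) - G = 0 := by rw [← hD]; exact hD0
  exact sub_eq_zero.mp this
end
end

section
/- Let W be an N×N weight matrix on ℝ satisfying W(x) = W(−x) for almost every x, and let V(y) = y^{−1/2} W(√y) and U(y) = y^{1/2} W(√y) be the associated weight matrices on (0,∞). Let {Q_n}_{n≥0} be any sequence of orthogonal polynomials with respect to W. Then there exist N×N matrix polynomials P_n and R_n of degree n such that Q_{2n}(x) = P_n(x²) and Q_{2n+1}(x) = x · R_n(x²) for all n ≥ 0, and {P_n}_{n≥0} is a sequence of orthogonal polynomials with respect to V while {R_n}_{n≥0} is a sequence of orthogonal polynomials with respect to U. -/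
open MeasureTheory Polynomial Set Matrix
open scoped ComplexOrder

noncomputable section

namespace Stmt6Aux

/-! ### Scalar polynomial lemmas -/

lemma coeff_comp_neg_X (p : Polynomial ℂ) (k : ℕ) :
    (p.comp (-X)).coeff k = (-1) ^ k * p.coeff k := by
  induction p using Polynomial.induction_on' with
  | add p q hp hq => simp [add_comp, hp, hq, mul_add]
  | monomial n a =>
      rw [← C_mul_X_pow_eq_monomial, mul_comp, C_comp, pow_comp, X_comp, neg_pow (X : Polynomial ℂ) n,
        show ((-1 : Polynomial ℂ) ^ n) = C ((-1 : ℂ) ^ n) by rw [← C_1, ← C_neg, ← C_pow],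
        mul_left_comm, coeff_C_mul, coeff_C_mul, coeff_X_pow]
      by_cases h : k = n
      · subst h; ring
      · simp [h]

lemma comp_neg_X_comp_neg_X (p : Polynomial ℂ) :
    (p.comp (-X)).comp (-X) = p := by
  rw [comp_assoc]; simp

lemma coeff_comp_X_sq_even (q : Polynomial ℂ) (k : ℕ) :
    (q.comp (X ^ 2)).coeff (2 * k) = q.coeff k := by
  induction q using Polynomial.induction_on' with
  | add p q hp hq => simp [add_comp, hp, hq]
  | monomial n a =>
      rw [← C_mul_X_pow_eq_monomial, mul_comp, C_comp, pow_comp, X_comp, ← pow_mul,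
        coeff_C_mul, coeff_X_pow, coeff_C_mul, coeff_X_pow]
      by_cases h : k = n
      · subst h; rw [if_pos (by ring), if_pos rfl]
      · rw [if_neg (by omega), if_neg h]

lemma coeff_comp_X_sq_odd (q : Polynomial ℂ) (k : ℕ) :
    (q.comp (X ^ 2)).coeff (2 * k + 1) = 0 := by
  induction q using Polynomial.induction_on' with
  | add p q hp hq => simp [add_comp, hp, hq]
  | monomial n a =>
      rw [← C_mul_X_pow_eq_monomial, mul_comp, C_comp, pow_comp, X_comp, ← pow_mul,
        coeff_C_mul, coeff_X_pow, if_neg (by omega), mul_zero]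

/-- Even part: `p(x) = e(x²)` when `p` has only even coefficients. -/
def evenP (p : Polynomial ℂ) : Polynomial ℂ :=
  ∑ k ∈ Finset.range (p.natDegree + 1), Polynomial.C (p.coeff (2 * k)) * X ^ k

def oddP (p : Polynomial ℂ) : Polynomial ℂ :=
  ∑ k ∈ Finset.range (p.natDegree + 1), Polynomial.C (p.coeff (2 * k + 1)) * X ^ k

lemma coeff_evenP (p : Polynomial ℂ) (k : ℕ) : (evenP p).coeff k = p.coeff (2 * k) := by
  rw [evenP, finset_sum_coeff]
  simp only [coeff_C_mul, coeff_X_pow, mul_ite, mul_one, mul_zero]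
  rw [Finset.sum_ite_eq (Finset.range (p.natDegree + 1)) k (fun j => p.coeff (2 * j))]
  by_cases h : k ∈ Finset.range (p.natDegree + 1)
  · rw [if_pos h]
  · rw [if_neg h]
    exact (coeff_eq_zero_of_natDegree_lt (by simp at h; omega)).symm

lemma coeff_oddP (p : Polynomial ℂ) (k : ℕ) : (oddP p).coeff k = p.coeff (2 * k + 1) := by
  rw [oddP, finset_sum_coeff]
  simp only [coeff_C_mul, coeff_X_pow, mul_ite, mul_one, mul_zero]
  rw [Finset.sum_ite_eq (Finset.range (p.natDegree + 1)) k (fun j => p.coeff (2 * j + 1))]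
  by_cases h : k ∈ Finset.range (p.natDegree + 1)
  · rw [if_pos h]
  · rw [if_neg h]
    exact (coeff_eq_zero_of_natDegree_lt (by simp at h; omega)).symm

lemma evenP_comp (p : Polynomial ℂ) (hp : ∀ k, Odd k → p.coeff k = 0) :
    (evenP p).comp (X ^ 2) = p := by
  ext m
  rcases Nat.even_or_odd m with ⟨k, hk⟩ | hm
  · rw [show m = 2 * k by omega, coeff_comp_X_sq_even, coeff_evenP]
  · obtain ⟨k, hk⟩ := hm
    subst hk
    rw [coeff_comp_X_sq_odd, (hp _ ⟨k, rfl⟩).symm]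

lemma oddP_comp (p : Polynomial ℂ) (hp : ∀ k, Even k → p.coeff k = 0) :
    X * (oddP p).comp (X ^ 2) = p := by
  ext m
  match m with
  | 0 => simp [mul_coeff_zero, hp 0 ⟨0, rfl⟩]
  | (m + 1) =>
      rw [coeff_X_mul]
      rcases Nat.even_or_odd m with ⟨k, hk⟩ | hm
      · rw [show m = 2 * k by omega, coeff_comp_X_sq_even, coeff_oddP]
      · obtain ⟨k, hk⟩ := hm
        subst hk
        rw [coeff_comp_X_sq_odd, (hp (2 * k + 1 + 1) ⟨k + 1, by ring⟩).symm]

/-! ### Matrix polynomial algebra lemmas -/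

variable {N : ℕ}

lemma coeffM_constM_mul (A : Matrix (Fin N) (Fin N) ℂ) (T : MatPoly N) (k : ℕ) :
    coeffM (constM A * T) k = A * coeffM T k := by
  ext i j
  simp [coeffM, constM, Matrix.mul_apply, finset_sum_coeff, coeff_C_mul]

lemma coeffM_sub (S T : MatPoly N) (k : ℕ) :
    coeffM (S - T) k = coeffM S k - coeffM T k := by
  ext i j; simp [coeffM, Matrix.sub_apply]

lemma coeffM_reflectM (P : MatPoly N) (k : ℕ) :
    coeffM (reflectM P) k = ((-1 : ℂ) ^ k) • coeffM P k := by
  ext i j; simp [coeffM, reflectM, coeff_comp_neg_X]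

lemma reflectM_reflectM (P : MatPoly N) : reflectM (reflectM P) = P := by
  funext i j; exact comp_neg_X_comp_neg_X _

lemma evalM_reflectM (P : MatPoly N) (x : ℝ) :
    evalM (reflectM P) x = evalM P (-x) := by
  ext i j
  simp [evalM, reflectM, eval_comp]

lemma evalM_compSqM (P : MatPoly N) (x : ℝ) :
    evalM (compSqM P) x = evalM P (x ^ 2) := by
  ext i j
  simp [evalM, compSqM, eval_comp]

lemma evalM_XmulM (P : MatPoly N) (x : ℝ) :
    evalM (XmulM P) x = (x : ℂ) • evalM P x := by
  ext i j
  simp [evalM, XmulM]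

lemma evalM_constM_mul (A : Matrix (Fin N) (Fin N) ℂ) (T : MatPoly N) (x : ℝ) :
    evalM (constM A * T) x = A * evalM T x := by
  ext i j
  simp [evalM, constM, Matrix.mul_apply, eval_finset_sum]

lemma evalM_sub (S T : MatPoly N) (x : ℝ) :
    evalM (S - T) x = evalM S x - evalM T x := by
  ext i j; simp [evalM, Matrix.sub_apply]

lemma evalM_sum {α : Type*} (s : Finset α) (P : α → MatPoly N) (x : ℝ) :
    evalM (∑ a ∈ s, P a) x = ∑ a ∈ s, evalM (P a) x := by
  ext i j
  simp [evalM, Finset.sum_apply, Matrix.sum_apply, eval_finset_sum]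

/-! ### Integrability of inner product entries -/

lemma integrable_entry {I : Set ℝ} {W : ℝ → Matrix (Fin N) (Fin N) ℂ}
    (hm : ∀ (n : ℕ) (i j : Fin N), IntegrableOn (fun x : ℝ => (x : ℂ) ^ n * W x i j) I)
    (P T : MatPoly N) (i j : Fin N) :
    IntegrableOn (fun x : ℝ => (evalM P x * W x * (evalM T x)ᴴ) i j) I := by
  have key : ∀ (p q : Polynomial ℂ) (k l : Fin N),
      IntegrableOn (fun x : ℝ =>
        p.eval (x : ℂ) * W x k l * (starRingEnd ℂ) (q.eval (x : ℂ))) I := by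
    intro p q k l
    induction p using Polynomial.induction_on' with
    | add p₁ p₂ h1 h2 =>
        have heq : (fun x : ℝ =>
            (p₁ + p₂).eval (x : ℂ) * W x k l * (starRingEnd ℂ) (q.eval (x : ℂ)))
            = (fun x : ℝ => p₁.eval (x : ℂ) * W x k l * (starRingEnd ℂ) (q.eval (x : ℂ)))
              + fun x : ℝ => p₂.eval (x : ℂ) * W x k l * (starRingEnd ℂ) (q.eval (x : ℂ)) := by
          funext x; simp [eval_add]; ring
        rw [heq]; exact h1.add h2
    | monomial n a =>
        induction q using Polynomial.induction_on' with
        | add q₁ q₂ h1 h2 =>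
            have heq : (fun x : ℝ =>
                ((Polynomial.monomial n) a).eval (x : ℂ) * W x k l
                  * (starRingEnd ℂ) ((q₁ + q₂).eval (x : ℂ)))
                = (fun x : ℝ => ((Polynomial.monomial n) a).eval (x : ℂ) * W x k l
                    * (starRingEnd ℂ) (q₁.eval (x : ℂ)))
                  + fun x : ℝ => ((Polynomial.monomial n) a).eval (x : ℂ) * W x k l
                    * (starRingEnd ℂ) (q₂.eval (x : ℂ)) := by
              funext x; simp [eval_add]; ring
            rw [heq]; exact h1.add h2
        | monomial m b =>
            have heq : (fun x : ℝ =>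
                ((Polynomial.monomial n) a).eval (x : ℂ) * W x k l
                  * (starRingEnd ℂ) (((Polynomial.monomial m) b).eval (x : ℂ)))
                = fun x : ℝ => (a * (starRingEnd ℂ) b) * ((x : ℂ) ^ (n + m) * W x k l) := by
              funext x
              simp only [eval_monomial, _root_.map_mul, map_pow, Complex.conj_ofReal, pow_add]
              ring
            rw [heq]
            exact (hm (n + m) k l).const_mul _
  have heq : (fun x : ℝ => (evalM P x * W x * (evalM T x)ᴴ) i j)
      = fun x : ℝ => ∑ l, ∑ k,
          (P i k).eval (x : ℂ) * W x k l * (starRingEnd ℂ) ((T j l).eval (x : ℂ)) := by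
    funext x
    simp [Matrix.mul_apply, Matrix.conjTranspose_apply, evalM, Finset.sum_mul]
  rw [heq]
  exact MeasureTheory.integrable_finset_sum _ fun l _ =>
    MeasureTheory.integrable_finset_sum _ fun k _ => key (P i k) (T j l) k l

/-! ### Linearity of the inner product -/

section Inner

variable {I : Set ℝ} {W : ℝ → Matrix (Fin N) (Fin N) ℂ}
  (hm : ∀ (n : ℕ) (i j : Fin N), IntegrableOn (fun x : ℝ => (x : ℂ) ^ n * W x i j) I)

include hm

lemma innerW_sub_left (P T G : MatPoly N) :
    innerW I W (P - T) G = innerW I W P G - innerW I W T G := by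
  ext i j
  have h1 := integrable_entry hm P G i j
  have h2 := integrable_entry hm T G i j
  have heq : (fun x : ℝ => (evalM (P - T) x * W x * (evalM G x)ᴴ) i j)
      = fun x : ℝ => (evalM P x * W x * (evalM G x)ᴴ) i j
        - (evalM T x * W x * (evalM G x)ᴴ) i j := by
    funext x
    rw [evalM_sub, Matrix.sub_mul, Matrix.sub_mul, Matrix.sub_apply]
  show (∫ x in I, (evalM (P - T) x * W x * (evalM G x)ᴴ) i j) = _
  rw [heq, MeasureTheory.integral_sub h1 h2]
  simp [innerW, matInt, Matrix.sub_apply]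

lemma innerW_sum_left {α : Type*} (s : Finset α) (P : α → MatPoly N) (G : MatPoly N) :
    innerW I W (∑ a ∈ s, P a) G = ∑ a ∈ s, innerW I W (P a) G := by
  ext i j
  have heq : (fun x : ℝ => (evalM (∑ a ∈ s, P a) x * W x * (evalM G x)ᴴ) i j)
      = fun x : ℝ => ∑ a ∈ s, (evalM (P a) x * W x * (evalM G x)ᴴ) i j := by
    funext x
    rw [evalM_sum]
    simp [Finset.sum_mul, Finset.sum_apply, Matrix.sum_apply]
  show (∫ x in I, (evalM (∑ a ∈ s, P a) x * W x * (evalM G x)ᴴ) i j) = _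
  rw [heq, MeasureTheory.integral_finset_sum s fun a _ => integrable_entry hm (P a) G i j]
  simp [innerW, matInt, Finset.sum_apply, Matrix.sum_apply]

lemma innerW_constM_mul_left (A : Matrix (Fin N) (Fin N) ℂ) (P G : MatPoly N) :
    innerW I W (constM A * P) G = A * innerW I W P G := by
  ext i j
  have heq : (fun x : ℝ => (evalM (constM A * P) x * W x * (evalM G x)ᴴ) i j)
      = fun x : ℝ => ∑ l, A i l * (evalM P x * W x * (evalM G x)ᴴ) l j := by
    funext x
    rw [evalM_constM_mul, Matrix.mul_assoc, Matrix.mul_assoc, Matrix.mul_apply]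
    simp [Matrix.mul_assoc]
  show (∫ x in I, (evalM (constM A * P) x * W x * (evalM G x)ᴴ) i j) = _
  rw [heq, MeasureTheory.integral_finset_sum _ fun l _ =>
    (integrable_entry hm P G l j).const_mul (A i l)]
  simp only [MeasureTheory.integral_const_mul]
  simp [innerW, matInt, Matrix.mul_apply]

omit hm in
lemma innerW_conj (hherm : ∀ᵐ x ∂(volume.restrict I), (W x).IsHermitian)
    (P G : MatPoly N) :
    innerW I W P G = (innerW I W G P)ᴴ := by
  ext i j
  show (∫ x in I, (evalM P x * W x * (evalM G x)ᴴ) i j)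
      = (starRingEnd ℂ) (∫ x in I, (evalM G x * W x * (evalM P x)ᴴ) j i)
  rw [← integral_conj]
  apply MeasureTheory.integral_congr_ae
  filter_upwards [hherm] with x hx
  have : (evalM G x * W x * (evalM P x)ᴴ)ᴴ = evalM P x * W x * (evalM G x)ᴴ := by
    rw [Matrix.conjTranspose_mul, Matrix.conjTranspose_mul, Matrix.conjTranspose_conjTranspose,
      hx.eq, Matrix.mul_assoc]
  rw [← this, Matrix.conjTranspose_apply]
  rfl

end Inner

/-! ### Definiteness -/

lemma quad_diag (A M : Matrix (Fin N) (Fin N) ℂ) (i : Fin N) :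
    (A * M * Aᴴ) i i = dotProduct (star (star (A i))) (M *ᵥ star (A i)) := by
  simp only [Matrix.mul_apply, Matrix.conjTranspose_apply, dotProduct, Matrix.mulVec,
    star_star, Pi.star_apply, Finset.mul_sum, Finset.sum_mul]
  rw [Finset.sum_comm]
  apply Finset.sum_congr rfl; intro k _
  apply Finset.sum_congr rfl; intro l _
  ring

lemma eq_zero_of_inner_self {W : ℝ → Matrix (Fin N) (Fin N) ℂ}
    (hW : IsWeight Set.univ W) (S : MatPoly N)
    (h : innerW Set.univ W S S = 0) : S = 0 := by
  have hpos : ∀ᵐ x : ℝ, (W x).PosDef := by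
    have := hW.posdef; rwa [MeasureTheory.Measure.restrict_univ] at this
  -- each diagonal entry function vanishes a.e.
  have hdiag : ∀ i : Fin N, ∀ᵐ x : ℝ,
      ((evalM S x * W x * (evalM S x)ᴴ) i i).re = 0 := by
    intro i
    have hint : MeasureTheory.Integrable
        (fun x : ℝ => (evalM S x * W x * (evalM S x)ᴴ) i i) := by
      have := integrable_entry hW.moments S S i i
      rwa [MeasureTheory.IntegrableOn, MeasureTheory.Measure.restrict_univ] at this
    have hnn : 0 ≤ᵐ[volume] fun x : ℝ => ((evalM S x * W x * (evalM S x)ᴴ) i i).re := by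
      filter_upwards [hpos] with x hx
      rw [quad_diag]
      rcases eq_or_ne (star (evalM S x i)) 0 with h0 | h0
      · simp [h0]
      · have hlt := hx.dotProduct_mulVec_pos h0
        have hre := (Complex.lt_def.mp hlt).1
        simpa using hre.le
    have hzero : (∫ x : ℝ, ((evalM S x * W x * (evalM S x)ᴴ) i i).re) = 0 := by
      have h2 : (∫ x : ℝ, (evalM S x * W x * (evalM S x)ᴴ) i i) = 0 := by
        have := congrFun (congrFun h i) i
        simpa [innerW, matInt, MeasureTheory.Measure.restrict_univ] using this
      have h3 := integral_re (𝕜 := ℂ) hint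
      simp only [RCLike.re_to_complex] at h3
      rw [h3, h2, Complex.zero_re]
    have h4 := (MeasureTheory.integral_eq_zero_iff_of_nonneg_ae hnn hint.re).mp ?hz
    case hz => simpa [RCLike.re_to_complex] using hzero
    filter_upwards [h4] with x hx using hx
  -- pointwise vanishing a.e.
  have hae : ∀ᵐ x : ℝ, ∀ i k : Fin N, (S i k).eval (x : ℂ) = 0 := by
    have hall : ∀ᵐ x : ℝ, (W x).PosDef ∧ ∀ i : Fin N,
        ((evalM S x * W x * (evalM S x)ᴴ) i i).re = 0 := by
      refine hpos.and ?_
      rw [MeasureTheory.ae_all_iff]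
      exact hdiag
    filter_upwards [hall] with x hx
    intro i k
    by_contra hne
    have hu : star (evalM S x i) ≠ 0 := by
      intro h0
      have := congrFun h0 k
      simp only [Pi.star_apply, Pi.zero_apply, star_eq_zero] at this
      exact hne this
    have hlt := hx.1.dotProduct_mulVec_pos hu
    have hre := (Complex.lt_def.mp hlt).1
    rw [← quad_diag (evalM S x) (W x) i] at hre
    rw [hx.2 i] at hre
    simp at hre
  -- conclude each entry polynomial is zero
  funext i k
  by_contra hp
  have hfin : {x : ℝ | (S i k).eval (x : ℂ) = 0}.Finite := by
    have : {x : ℝ | (S i k).eval (x : ℂ) = 0}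
        = Complex.ofReal ⁻¹' {z : ℂ | (S i k).IsRoot z} := rfl
    rw [this]
    exact (Polynomial.finite_setOf_isRoot hp).preimage Complex.ofReal_injective.injOn
  have hnull : volume {x : ℝ | ¬ (S i k).eval (x : ℂ) = 0} = 0 := by
    have : ∀ᵐ x : ℝ, (S i k).eval (x : ℂ) = 0 := by
      filter_upwards [hae] with x hx using hx i k
    exact this
  have : (volume : MeasureTheory.Measure ℝ) Set.univ
      ≤ volume {x : ℝ | (S i k).eval (x : ℂ) = 0}
        + volume {x : ℝ | ¬ (S i k).eval (x : ℂ) = 0} := by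
    refine le_trans (MeasureTheory.measure_mono ?_) (MeasureTheory.measure_union_le _ _)
    intro x _
    by_cases hx : (S i k).eval (x : ℂ) = 0
    · exact Or.inl hx
    · exact Or.inr hx
  rw [hnull, hfin.measure_zero, Real.volume_univ] at this
  simp at this

/-! ### Span and orthogonality to lower degrees -/

lemma span {Q : ℕ → MatPoly N}
    (hQ1 : ∀ n, IsUnit (coeffM (Q n) n) ∧ ∀ k, n < k → coeffM (Q n) k = 0) :
    ∀ m (S : MatPoly N), (∀ k, m ≤ k → coeffM S k = 0) →
      ∃ A : ℕ → Matrix (Fin N) (Fin N) ℂ,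
        S = ∑ j ∈ Finset.range m, constM (A j) * Q j := by
  intro m
  induction m with
  | zero =>
      intro S hS
      refine ⟨fun _ => 0, ?_⟩
      rw [Finset.range_zero, Finset.sum_empty]
      funext i j
      apply Polynomial.ext
      intro k
      have h := congrFun (congrFun (hS k (Nat.zero_le k)) i) j
      simpa [coeffM] using h
  | succ m IH =>
      intro S hS
      obtain ⟨B, hB1, hB2⟩ := isUnit_iff_exists.mp (hQ1 m).1
      set Am : Matrix (Fin N) (Fin N) ℂ := coeffM S m * B with hAm
      have hAmu : Am * coeffM (Q m) m = coeffM S m := by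
        rw [hAm, mul_assoc, hB2, mul_one]
      set S' : MatPoly N := S - constM Am * Q m with hS'def
      have hS' : ∀ k, m ≤ k → coeffM S' k = 0 := by
        intro k hk
        rw [hS'def, coeffM_sub, coeffM_constM_mul]
        rcases eq_or_lt_of_le hk with rfl | hlt
        · rw [hAmu, sub_self]
        · rw [hS k hlt, (hQ1 m).2 k hlt, mul_zero, sub_zero]
      obtain ⟨A', hA'⟩ := IH S' hS'
      refine ⟨fun j => if j = m then Am else A' j, ?_⟩
      rw [Finset.sum_range_succ]
      have hite : (fun j => if j = m then Am else A' j) m = Am := if_pos rfl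
      rw [hite]
      have hsame : ∑ j ∈ Finset.range m, constM (if j = m then Am else A' j) * Q j
          = ∑ j ∈ Finset.range m, constM (A' j) * Q j := by
        apply Finset.sum_congr rfl
        intro j hj
        rw [if_neg (by have := Finset.mem_range.mp hj; omega)]
      rw [hsame, ← hA', hS'def, sub_add_cancel]

lemma orth_lower {W : ℝ → Matrix (Fin N) (Fin N) ℂ} {Q : ℕ → MatPoly N}
    (hW : IsWeight Set.univ W) (hQ : IsOPS Set.univ W Q)
    (n : ℕ) (S : MatPoly N) (hS : ∀ k, n ≤ k → coeffM S k = 0) :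
    innerW Set.univ W S (Q n) = 0 := by
  obtain ⟨A, hA⟩ := span hQ.1 n S hS
  rw [hA, innerW_sum_left hW.moments]
  apply Finset.sum_eq_zero
  intro j hj
  rw [innerW_constM_mul_left hW.moments, hQ.2 j n (by have := Finset.mem_range.mp hj; omega),
    mul_zero]

lemma hermAE {W : ℝ → Matrix (Fin N) (Fin N) ℂ} (hW : IsWeight Set.univ W) :
    ∀ᵐ x ∂(volume.restrict Set.univ), (W x).IsHermitian := by
  filter_upwards [hW.posdef] with x hx using hx.1

lemma orth_lower' {W : ℝ → Matrix (Fin N) (Fin N) ℂ} {Q : ℕ → MatPoly N}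
    (hW : IsWeight Set.univ W) (hQ : IsOPS Set.univ W Q)
    (n : ℕ) (S : MatPoly N) (hS : ∀ k, n ≤ k → coeffM S k = 0) :
    innerW Set.univ W (Q n) S = 0 := by
  rw [innerW_conj (hermAE hW), orth_lower hW hQ n S hS, Matrix.conjTranspose_zero]

/-! ### Reflection invariance and parity -/

lemma reflect_inner {W : ℝ → Matrix (Fin N) (Fin N) ℂ}
    (hsymm : ∀ᵐ x : ℝ, W x = W (-x)) (P T : MatPoly N) :
    innerW Set.univ W (reflectM P) (reflectM T) = innerW Set.univ W P T := by
  funext i j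
  show (∫ x in Set.univ, (evalM (reflectM P) x * W x * (evalM (reflectM T) x)ᴴ) i j)
      = ∫ x in Set.univ, (evalM P x * W x * (evalM T x)ᴴ) i j
  rw [MeasureTheory.setIntegral_univ, MeasureTheory.setIntegral_univ]
  have hcong : (fun x : ℝ => (evalM (reflectM P) x * W x * (evalM (reflectM T) x)ᴴ) i j)
      =ᵐ[volume] fun x : ℝ => (evalM P (-x) * W (-x) * (evalM T (-x))ᴴ) i j := by
    filter_upwards [hsymm] with x hx
    rw [evalM_reflectM, evalM_reflectM, ← hx]
  rw [MeasureTheory.integral_congr_ae hcong]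
  exact MeasureTheory.integral_neg_eq_self
    (fun x : ℝ => (evalM P x * W x * (evalM T x)ᴴ) i j) volume

lemma parity {W : ℝ → Matrix (Fin N) (Fin N) ℂ} {Q : ℕ → MatPoly N}
    (hW : IsWeight Set.univ W) (hsymm : ∀ᵐ x : ℝ, W x = W (-x))
    (hQ : IsOPS Set.univ W Q) (n k : ℕ) (hnk : n % 2 ≠ k % 2) :
    coeffM (Q n) k = 0 := by
  have hm := hW.moments
  set D : Matrix (Fin N) (Fin N) ℂ := ((-1 : ℂ) ^ n) • 1 with hD
  have hDmul : ∀ M : Matrix (Fin N) (Fin N) ℂ, D * M = ((-1 : ℂ) ^ n) • M := by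
    intro M; rw [hD, Matrix.smul_mul, Matrix.one_mul]
  set S : MatPoly N := reflectM (Q n) - constM D * Q n with hSdef
  have hcoeffS : ∀ k, n ≤ k → coeffM S k = 0 := by
    intro k hk
    rw [hSdef, coeffM_sub, coeffM_constM_mul, coeffM_reflectM, hDmul]
    rcases eq_or_lt_of_le hk with rfl | hlt
    · rw [sub_self]
    · rw [(hQ.1 n).2 k hlt, smul_zero, smul_zero, sub_self]
  have hSQ : ∀ j, j < n → innerW Set.univ W S (Q j) = 0 := by
    intro j hj
    rw [hSdef, innerW_sub_left hm, innerW_constM_mul_left hm]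
    have h1 : innerW Set.univ W (reflectM (Q n)) (Q j) = 0 := by
      conv_lhs => rw [show Q j = reflectM (reflectM (Q j)) from (reflectM_reflectM _).symm]
      rw [reflect_inner hsymm]
      apply orth_lower' hW hQ
      intro k hk
      rw [coeffM_reflectM, (hQ.1 j).2 k (by omega), smul_zero]
    rw [h1, hQ.2 n j (by omega), mul_zero, sub_zero]
  obtain ⟨A, hA⟩ := span hQ.1 n S hcoeffS
  have hself : innerW Set.univ W S S = 0 := by
    conv_lhs => rw [hA]
    rw [innerW_sum_left hm]
    apply Finset.sum_eq_zero
    intro j hj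
    rw [innerW_constM_mul_left hm]
    have hz : innerW Set.univ W (Q j)
        (∑ j ∈ Finset.range n, constM (A j) * Q j) = 0 := by
      rw [← hA, innerW_conj (hermAE hW), hSQ j (Finset.mem_range.mp hj),
        Matrix.conjTranspose_zero]
    rw [hz, mul_zero]
  have hS0 : S = 0 := eq_zero_of_inner_self hW S hself
  have hrefl : reflectM (Q n) = constM D * Q n := by
    rw [hSdef] at hS0; rwa [sub_eq_zero] at hS0
  have hc : coeffM (reflectM (Q n)) k = coeffM (constM D * Q n) k := by rw [hrefl]
  rw [coeffM_reflectM, coeffM_constM_mul, hDmul] at hc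
  have hsign : ((-1 : ℂ)) ^ k = -((-1 : ℂ)) ^ n := by
    rcases Nat.even_or_odd n with he | ho
    · have hk : Odd k := by
        rcases Nat.even_or_odd k with h | h
        · exfalso; apply hnk
          rw [Nat.even_iff] at he h; omega
        · exact h
      rw [hk.neg_one_pow, he.neg_one_pow]
    · have hk : Even k := by
        rcases Nat.even_or_odd k with h | h
        · exact h
        · exfalso; apply hnk
          rw [Nat.odd_iff] at ho h; omega
      rw [hk.neg_one_pow, ho.neg_one_pow, neg_neg]
  rw [hsign, neg_smul, eq_comm, eq_neg_iff_add_eq_zero, ← two_smul ℂ] at hc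
  have h2 : ((-1 : ℂ) ^ n) • coeffM (Q n) k = 0 := by
    have := smul_eq_zero.mp hc
    rcases this with h | h
    · norm_num at h
    · exact h
  rcases smul_eq_zero.mp h2 with h | h
  · exfalso
    have : ((-1 : ℂ) ^ n) ≠ 0 := by
      apply pow_ne_zero; norm_num
    exact this h
  · exact h

/-! ### Change of variables -/

lemma sq_image_Ioi : (fun x : ℝ => x ^ 2) '' Set.Ioi 0 = Set.Ioi 0 := by
  ext y
  constructor
  · rintro ⟨x, hx, rfl⟩
    exact pow_pos (mem_Ioi.mp hx) 2
  · intro hy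
    exact ⟨Real.sqrt y, Real.sqrt_pos.mpr hy, Real.sq_sqrt hy.le⟩

lemma sq_injOn : Set.InjOn (fun x : ℝ => x ^ 2) (Set.Ioi 0) := fun _ ha _ hb h =>
  (sq_eq_sq₀ (le_of_lt ha) (le_of_lt hb)).mp h

lemma sq_hasDeriv : ∀ x ∈ Set.Ioi (0:ℝ),
    HasDerivWithinAt (fun x : ℝ => x ^ 2) (2 * x) (Set.Ioi 0) x := by
  intro x _
  simpa using (hasDerivAt_pow 2 x).hasDerivWithinAt

lemma smul_entry (c : ℂ) (A M B : Matrix (Fin N) (Fin N) ℂ) (i j : Fin N) :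
    ((c • A) * M * (c • B)ᴴ) i j = (c * star c) * ((A * M * Bᴴ) i j) := by
  simp only [Matrix.conjTranspose_smul, Matrix.smul_mul, Matrix.mul_smul, Matrix.smul_apply,
    smul_eq_mul]
  ring

lemma cov_V {W : ℝ → Matrix (Fin N) (Fin N) ℂ}
    (hm : ∀ (n : ℕ) (i j : Fin N), IntegrableOn (fun x : ℝ => (x : ℂ) ^ n * W x i j) Set.univ)
    (hsymm : ∀ᵐ x : ℝ, W x = W (-x)) (F G : MatPoly N) :
    innerW (Set.Ioi 0) (VWeight W) F G
      = innerW Set.univ W (compSqM F) (compSqM G) := by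
  funext i j
  show (∫ y in Set.Ioi (0:ℝ), (evalM F y * VWeight W y * (evalM G y)ᴴ) i j)
      = ∫ x in Set.univ, (evalM (compSqM F) x * W x * (evalM (compSqM G) x)ᴴ) i j
  set φ : ℝ → ℂ := fun x => (evalM (compSqM F) x * W x * (evalM (compSqM G) x)ᴴ) i j with hφ
  set ψ : ℝ → ℂ := fun y => (evalM F y * VWeight W y * (evalM G y)ᴴ) i j with hψ
  have hint : IntegrableOn φ Set.univ := integrable_entry hm _ _ i j
  have heven : ∀ x : ℝ, W x = W (-x) → φ (-x) = φ x := by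
    intro x hx
    simp only [hφ]
    rw [evalM_compSqM, evalM_compSqM, evalM_compSqM, evalM_compSqM, neg_sq, ← hx]
  have h2' := integral_comp_neg_Ioi (0:ℝ) φ
  rw [neg_zero] at h2'
  have h2 : (∫ x in Set.Iic (0:ℝ), φ x) = ∫ x in Set.Ioi (0:ℝ), φ x := by
    rw [← h2']
    apply MeasureTheory.integral_congr_ae
    apply MeasureTheory.ae_restrict_of_ae
    filter_upwards [hsymm] with x hx
    exact heven x hx
  have hsplit : (∫ x in Set.univ, φ x)
      = (∫ x in Set.Iic (0:ℝ), φ x) + ∫ x in Set.Ioi (0:ℝ), φ x := by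
    rw [MeasureTheory.setIntegral_univ]
    exact (intervalIntegral.integral_Iic_add_Ioi
      (hint.mono_set (Set.subset_univ _)) (hint.mono_set (Set.subset_univ _))).symm
  have key : (∫ y in Set.Ioi (0:ℝ), ψ y)
      = ∫ x in Set.Ioi (0:ℝ), |2 * x| • ψ (x ^ 2) := by
    conv_lhs => rw [← sq_image_Ioi]
    exact MeasureTheory.integral_image_eq_integral_abs_deriv_smul
      measurableSet_Ioi sq_hasDeriv sq_injOn ψ
  have hpt : ∀ x ∈ Set.Ioi (0:ℝ), |2 * x| • ψ (x ^ 2) = (2:ℝ) • φ x := by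
    intro x hx
    have hx0 : (0:ℝ) < x := hx
    simp only [hψ, hφ]
    rw [show VWeight W (x ^ 2) = x⁻¹ • W x by rw [VWeight, Real.sqrt_sq hx0.le],
      show evalM F ((x:ℝ) ^ 2) = evalM (compSqM F) x from (evalM_compSqM F x).symm,
      show evalM G ((x:ℝ) ^ 2) = evalM (compSqM G) x from (evalM_compSqM G x).symm,
      Matrix.mul_smul, Matrix.smul_mul, Matrix.smul_apply, smul_smul,
      abs_of_pos (by positivity : (0:ℝ) < 2 * x), mul_assoc,
      mul_inv_cancel₀ (ne_of_gt hx0), mul_one]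
  calc (∫ y in Set.Ioi (0:ℝ), ψ y)
      = ∫ x in Set.Ioi (0:ℝ), |2 * x| • ψ (x ^ 2) := key
    _ = ∫ x in Set.Ioi (0:ℝ), (2:ℝ) • φ x :=
        MeasureTheory.setIntegral_congr_fun measurableSet_Ioi fun x hx => hpt x hx
    _ = (2:ℝ) • ∫ x in Set.Ioi (0:ℝ), φ x := by rw [MeasureTheory.integral_smul]
    _ = (∫ x in Set.Iic (0:ℝ), φ x) + ∫ x in Set.Ioi (0:ℝ), φ x := by
        rw [h2, two_smul]
    _ = ∫ x in Set.univ, φ x := hsplit.symm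

lemma cov_U {W : ℝ → Matrix (Fin N) (Fin N) ℂ}
    (hm : ∀ (n : ℕ) (i j : Fin N), IntegrableOn (fun x : ℝ => (x : ℂ) ^ n * W x i j) Set.univ)
    (hsymm : ∀ᵐ x : ℝ, W x = W (-x)) (F G : MatPoly N) :
    innerW (Set.Ioi 0) (UWeight W) F G
      = innerW Set.univ W (XmulM (compSqM F)) (XmulM (compSqM G)) := by
  funext i j
  show (∫ y in Set.Ioi (0:ℝ), (evalM F y * UWeight W y * (evalM G y)ᴴ) i j)
      = ∫ x in Set.univ,
          (evalM (XmulM (compSqM F)) x * W x * (evalM (XmulM (compSqM G)) x)ᴴ) i j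
  set φ : ℝ → ℂ := fun x =>
    (evalM (XmulM (compSqM F)) x * W x * (evalM (XmulM (compSqM G)) x)ᴴ) i j with hφ
  set ψ : ℝ → ℂ := fun y => (evalM F y * UWeight W y * (evalM G y)ᴴ) i j with hψ
  have hint : IntegrableOn φ Set.univ := integrable_entry hm _ _ i j
  have heven : ∀ x : ℝ, W x = W (-x) → φ (-x) = φ x := by
    intro x hx
    simp only [hφ, evalM_XmulM]
    rw [smul_entry, smul_entry]
    rw [evalM_compSqM, evalM_compSqM, evalM_compSqM, evalM_compSqM, neg_sq, ← hx]
    congr 1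
    push_cast
    rw [star_neg]
    ring
  have h2' := integral_comp_neg_Ioi (0:ℝ) φ
  rw [neg_zero] at h2'
  have h2 : (∫ x in Set.Iic (0:ℝ), φ x) = ∫ x in Set.Ioi (0:ℝ), φ x := by
    rw [← h2']
    apply MeasureTheory.integral_congr_ae
    apply MeasureTheory.ae_restrict_of_ae
    filter_upwards [hsymm] with x hx
    exact heven x hx
  have hsplit : (∫ x in Set.univ, φ x)
      = (∫ x in Set.Iic (0:ℝ), φ x) + ∫ x in Set.Ioi (0:ℝ), φ x := by
    rw [MeasureTheory.setIntegral_univ]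
    exact (intervalIntegral.integral_Iic_add_Ioi
      (hint.mono_set (Set.subset_univ _)) (hint.mono_set (Set.subset_univ _))).symm
  have key : (∫ y in Set.Ioi (0:ℝ), ψ y)
      = ∫ x in Set.Ioi (0:ℝ), |2 * x| • ψ (x ^ 2) := by
    conv_lhs => rw [← sq_image_Ioi]
    exact MeasureTheory.integral_image_eq_integral_abs_deriv_smul
      measurableSet_Ioi sq_hasDeriv sq_injOn ψ
  have hpt : ∀ x ∈ Set.Ioi (0:ℝ), |2 * x| • ψ (x ^ 2) = (2:ℝ) • φ x := by
    intro x hx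
    have hx0 : (0:ℝ) < x := hx
    simp only [hψ, hφ, evalM_XmulM]
    rw [show UWeight W (x ^ 2) = x • W x by rw [UWeight, Real.sqrt_sq hx0.le],
      show evalM F ((x:ℝ) ^ 2) = evalM (compSqM F) x from (evalM_compSqM F x).symm,
      show evalM G ((x:ℝ) ^ 2) = evalM (compSqM G) x from (evalM_compSqM G x).symm,
      Matrix.mul_smul, Matrix.smul_mul, Matrix.smul_apply, smul_entry, smul_smul,
      abs_of_pos (by positivity : (0:ℝ) < 2 * x)]
    rw [Complex.real_smul, Complex.real_smul, RCLike.star_def, Complex.conj_ofReal]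
    push_cast
    ring
  calc (∫ y in Set.Ioi (0:ℝ), ψ y)
      = ∫ x in Set.Ioi (0:ℝ), |2 * x| • ψ (x ^ 2) := key
    _ = ∫ x in Set.Ioi (0:ℝ), (2:ℝ) • φ x :=
        MeasureTheory.setIntegral_congr_fun measurableSet_Ioi fun x hx => hpt x hx
    _ = (2:ℝ) • ∫ x in Set.Ioi (0:ℝ), φ x := by rw [MeasureTheory.integral_smul]
    _ = (∫ x in Set.Iic (0:ℝ), φ x) + ∫ x in Set.Ioi (0:ℝ), φ x := by
        rw [h2, two_smul]
    _ = ∫ x in Set.univ, φ x := hsplit.symm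

end Stmt6Aux

/-- If `W(x) = W(-x)` a.e. and `Q` is any sequence of orthogonal
polynomials for `W`, then there are matrix polynomials `P_n`, `R_n` (of degree `n`,
with invertible leading coefficient, as part of `IsOPS`) with `Q_{2n}(x) = P_n(x²)`
and `Q_{2n+1}(x) = x · R_n(x²)`, and `P`, `R` are sequences of orthogonal polynomials
for `V(y) = y^{-1/2} W(√y)` and `U(y) = y^{1/2} W(√y)` on `(0,∞)`, respectively. -/
theorem stmt6 {N : ℕ} (W : ℝ → Matrix (Fin N) (Fin N) ℂ)
    (hW : IsWeight Set.univ W)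
    (hsymm : ∀ᵐ x : ℝ, W x = W (-x))
    (Q : ℕ → MatPoly N) (hQ : IsOPS Set.univ W Q) :
    ∃ P R : ℕ → MatPoly N,
      (∀ n : ℕ, Q (2 * n) = compSqM (P n)) ∧
      (∀ n : ℕ, Q (2 * n + 1) = XmulM (compSqM (R n))) ∧
      IsOPS (Set.Ioi 0) (VWeight W) P ∧ IsOPS (Set.Ioi 0) (UWeight W) R := by
  
  have hpar : ∀ n k, n % 2 ≠ k % 2 → coeffM (Q n) k = 0 := Stmt6Aux.parity hW hsymm hQ
  have hPcomp : ∀ n, Q (2 * n)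
      = compSqM (fun i j => Stmt6Aux.evenP (Q (2 * n) i j)) := by
    intro n
    funext i j
    refine (Stmt6Aux.evenP_comp (Q (2 * n) i j) fun k hk => ?_).symm
    have h := hpar (2 * n) k (by rcases hk with ⟨t, ht⟩; omega)
    have h2 := congrFun (congrFun h i) j
    simpa [coeffM] using h2
  have hRcomp : ∀ n, Q (2 * n + 1)
      = XmulM (compSqM (fun i j => Stmt6Aux.oddP (Q (2 * n + 1) i j))) := by
    intro n
    funext i j
    refine (Stmt6Aux.oddP_comp (Q (2 * n + 1) i j) fun k hk => ?_).symm
    have h := hpar (2 * n + 1) k (by rcases hk with ⟨t, ht⟩; omega)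
    have h2 := congrFun (congrFun h i) j
    simpa [coeffM] using h2
  have hPcoeff : ∀ n k, coeffM (fun i j => Stmt6Aux.evenP (Q (2 * n) i j) : MatPoly N) k
      = coeffM (Q (2 * n)) (2 * k) := by
    intro n k
    funext i j
    exact Stmt6Aux.coeff_evenP _ _
  have hRcoeff : ∀ n k, coeffM (fun i j => Stmt6Aux.oddP (Q (2 * n + 1) i j) : MatPoly N) k
      = coeffM (Q (2 * n + 1)) (2 * k + 1) := by
    intro n k
    funext i j
    exact Stmt6Aux.coeff_oddP _ _
  refine ⟨fun n => fun i j => Stmt6Aux.evenP (Q (2 * n) i j),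
          fun n => fun i j => Stmt6Aux.oddP (Q (2 * n + 1) i j),
          hPcomp, hRcomp, ⟨fun n => ⟨?_, ?_⟩, fun n m hnm => ?_⟩,
          ⟨fun n => ⟨?_, ?_⟩, fun n m hnm => ?_⟩⟩
  · rw [hPcoeff]
    exact (hQ.1 (2 * n)).1
  · intro k hk
    rw [hPcoeff]
    exact (hQ.1 (2 * n)).2 (2 * k) (by omega)
  · refine (Stmt6Aux.cov_V hW.moments hsymm _ _).trans ?_
    beta_reduce
    rw [← hPcomp n, ← hPcomp m]
    exact hQ.2 (2 * n) (2 * m) (by omega)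
  · rw [hRcoeff]
    exact (hQ.1 (2 * n + 1)).1
  · intro k hk
    rw [hRcoeff]
    exact (hQ.1 (2 * n + 1)).2 (2 * k + 1) (by omega)
  · refine (Stmt6Aux.cov_U hW.moments hsymm _ _).trans ?_
    beta_reduce
    rw [← hRcomp n, ← hRcomp m]
    exact hQ.2 (2 * n + 1) (2 * m + 1) (by omega)
end
end

section
/- Let W be an N×N weight matrix on ℝ satisfying W(x) = W(−x) for almost every x, with monic orthogonal polynomials {H_n}_{n≥0}. Let D = Σ_{j=0}^s (d^j/dx^j) F_j(x) be a differential operator with N×N matrix polynomial coefficients F_j such that H_n·D = Λ_n H_n for all n ≥ 0 and some constant matrices Λ_n. Then each coefficient satisfies F_j(−x) = (−1)^j F_j(x); that is, F_j is an even polynomial when j is even and an odd polynomial when j is odd. -/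
open MeasureTheory Polynomial Set Matrix
open scoped ComplexOrder

noncomputable section

namespace Aux

variable {N : ℕ}

lemma coeff_comp_neg_X (p : Polynomial ℂ) (k : ℕ) :
    (p.comp (-X)).coeff k = (-1 : ℂ) ^ k * p.coeff k := by
  induction p using Polynomial.induction_on' with
  | add p q hp hq => simp [add_comp, hp, hq, mul_add]
  | monomial n a =>
      rw [← C_mul_X_pow_eq_monomial, mul_comp, C_comp, pow_comp, X_comp, neg_pow]
      have : ((-1 : Polynomial ℂ))^n = C ((-1:ℂ)^n) := by rw [map_pow, Polynomial.C_neg, Polynomial.C_1]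
      rw [this, mul_left_comm, coeff_C_mul, coeff_C_mul, coeff_X_pow]
      by_cases h : k = n
      · subst h; simp
      · simp [Ne.symm h, h]

lemma coeffM_reflectM (P : MatPoly N) (k : ℕ) :
    coeffM (reflectM P) k = ((-1 : ℂ) ^ k) • coeffM P k := by
  funext i j
  simp [coeffM, reflectM, coeff_comp_neg_X]

lemma reflectM_mul (P Q : MatPoly N) : reflectM (P * Q) = reflectM P * reflectM Q := by
  funext i j
  simp [reflectM, Matrix.mul_apply, Polynomial.sum_comp, Polynomial.mul_comp]

lemma reflectM_constM (A : Matrix (Fin N) (Fin N) ℂ) : reflectM (constM A) = constM A := by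
  funext i j; simp [reflectM, constM]

lemma reflectM_smul (c : ℂ) (P : MatPoly N) : reflectM (c • P) = c • reflectM P := by
  funext i j; simp [reflectM, Polynomial.smul_comp]

lemma reflectM_sub (P Q : MatPoly N) : reflectM (P - Q) = reflectM P - reflectM Q := by
  funext i j; simp [reflectM, sub_comp]

lemma derivM_reflectM (P : MatPoly N) : derivM (reflectM P) = -reflectM (derivM P) := by
  funext i j
  simp [derivM, reflectM, Polynomial.derivative_comp]

lemma reflectM_derivM (P : MatPoly N) : reflectM (derivM P) = -derivM (reflectM P) := by
  rw [derivM_reflectM, neg_neg]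

lemma derivM_smul (c : ℂ) (P : MatPoly N) : derivM (c • P) = c • derivM P := by
  funext i j; simp [derivM]

lemma iterDerivM_zero (P : MatPoly N) : iterDerivM 0 P = P := by
  funext i j; simp [iterDerivM]

lemma iterDerivM_succ (k : ℕ) (P : MatPoly N) :
    iterDerivM (k + 1) P = derivM (iterDerivM k P) := by
  funext i j; simp [iterDerivM, derivM, Function.iterate_succ_apply']

lemma iterDerivM_smul (c : ℂ) (k : ℕ) (P : MatPoly N) :
    iterDerivM k (c • P) = c • iterDerivM k P := by
  induction k with
  | zero => rw [iterDerivM_zero, iterDerivM_zero]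
  | succ k ih => rw [iterDerivM_succ, ih, derivM_smul, iterDerivM_succ]

lemma reflectM_iterDerivM (k : ℕ) (P : MatPoly N) :
    reflectM (iterDerivM k P) = ((-1 : ℂ) ^ k) • iterDerivM k (reflectM P) := by
  induction k with
  | zero => rw [iterDerivM_zero, iterDerivM_zero, pow_zero, one_smul]
  | succ k ih =>
      rw [iterDerivM_succ, reflectM_derivM, ih, derivM_smul, ← iterDerivM_succ,
        pow_succ, mul_comm, mul_smul, neg_one_smul]

lemma constM_mul_smul (A : Matrix (Fin N) (Fin N) ℂ) (c : ℂ) (P : MatPoly N) :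
    constM A * (c • P) = c • (constM A * P) := by
  rw [mul_smul_comm]

lemma coeffM_constM_mul (A : Matrix (Fin N) (Fin N) ℂ) (Q : MatPoly N) (k : ℕ) :
    coeffM (constM A * Q) k = A * coeffM Q k := by
  funext i j
  simp [coeffM, constM, Matrix.mul_apply, Polynomial.finset_sum_coeff, coeff_C_mul]

lemma evalM_mul (P Q : MatPoly N) (x : ℝ) : evalM (P * Q) x = evalM P x * evalM Q x := by
  funext i j
  simp [evalM, Matrix.mul_apply, Polynomial.eval_finset_sum]

lemma evalM_constM (A : Matrix (Fin N) (Fin N) ℂ) (x : ℝ) : evalM (constM A) x = A := by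
  funext i j; simp [evalM, constM]

lemma evalM_add (P Q : MatPoly N) (x : ℝ) : evalM (P + Q) x = evalM P x + evalM Q x := by
  funext i j; simp [evalM]

lemma evalM_sub (P Q : MatPoly N) (x : ℝ) : evalM (P - Q) x = evalM P x - evalM Q x := by
  funext i j; simp [evalM]

lemma evalM_smul (c : ℂ) (P : MatPoly N) (x : ℝ) : evalM (c • P) x = c • evalM P x := by
  funext i j; simp [evalM]

lemma evalM_reflectM (P : MatPoly N) (x : ℝ) : evalM (reflectM P) x = evalM P (-x) := by
  funext i j; simp [evalM, reflectM, Polynomial.eval_comp]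

lemma eq_zero_of_coeffM (P : MatPoly N) (h : ∀ k, coeffM P k = 0) : P = 0 := by
  funext i j
  apply Polynomial.ext
  intro k
  have := congrFun (congrFun (h k) i) j
  simpa [coeffM] using this

lemma natDegree_le_of_coeffM {P : MatPoly N} {n : ℕ} (h : ∀ k, n < k → coeffM P k = 0)
    (i j : Fin N) : (P i j).natDegree ≤ n := by
  rw [Polynomial.natDegree_le_iff_coeff_eq_zero]
  intro m hm
  have := congrFun (congrFun (h m hm) i) j
  simpa [coeffM] using this

lemma iterDerivM_eq_zero {P : MatPoly N} {n k : ℕ} (h : ∀ m, n < m → coeffM P m = 0)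
    (hk : n < k) : iterDerivM k P = 0 := by
  funext i j
  have := natDegree_le_of_coeffM h i j
  exact Polynomial.iterate_derivative_eq_zero (lt_of_le_of_lt this hk)

lemma iterDerivM_self {P : MatPoly N} {n : ℕ} (hP : IsMonicDeg P n) :
    iterDerivM n P = constM ((n.factorial : ℂ) • 1) := by
  funext i j
  apply Polynomial.ext
  intro m
  rw [iterDerivM]
  simp only [Polynomial.coeff_iterate_derivative]
  rcases Nat.eq_zero_or_pos m with hm | hm
  · subst hm
    have h1 := congrFun (congrFun hP.1 i) j
    simp only [coeffM] at h1
    simp [constM, h1, Nat.descFactorial_self, Matrix.smul_apply, nsmul_eq_mul]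
  · have h2 := congrFun (congrFun (hP.2 (m + n) (by omega)) i) j
    simp only [coeffM] at h2
    have hm' : m ≠ 0 := Nat.pos_iff_ne_zero.mp hm
    simp [h2, constM, Polynomial.coeff_C, hm']

lemma constM_one : constM (1 : Matrix (Fin N) (Fin N) ℂ) = 1 := by
  funext i j
  simp [constM, Matrix.one_apply, apply_ite Polynomial.C]

lemma constM_smul (c : ℂ) (A : Matrix (Fin N) (Fin N) ℂ) :
    constM (c • A) = c • constM A := by
  funext i j
  simp [constM, Polynomial.smul_eq_C_mul]

lemma constM_smul_one_mul (c : ℂ) (Q : MatPoly N) :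
    constM (c • (1 : Matrix (Fin N) (Fin N) ℂ)) * Q = c • Q := by
  rw [constM_smul, constM_one, smul_mul_assoc, one_mul]

lemma reflectM_sum {ι : Type*} (t : Finset ι) (f : ι → MatPoly N) :
    reflectM (∑ x ∈ t, f x) = ∑ x ∈ t, reflectM (f x) := by
  funext i j
  simp [reflectM, Matrix.sum_apply, Polynomial.sum_comp]

lemma main_alg {s : ℕ} (H : ℕ → MatPoly N) (hmon : ∀ n, IsMonicDeg (H n) n)
    (G : ℕ → MatPoly N) (hG : ∀ n, applyOp s G (H n) = 0) : ∀ k, k ≤ s → G k = 0 := by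
  intro k
  induction k using Nat.strong_induction_on with
  | _ k ih =>
    intro hk
    have h := hG k
    rw [applyOp, Finset.sum_eq_single k] at h
    · rw [iterDerivM_self (hmon k)] at h
      have : ((k.factorial : ℂ)) • G k = 0 := by
        rw [← constM_smul_one_mul]
        exact h
      have hfac : ((k.factorial : ℕ) : ℂ) ≠ 0 := by
        exact_mod_cast Nat.cast_ne_zero.mpr (Nat.factorial_ne_zero k)
      exact (smul_eq_zero.mp this).resolve_left hfac
    · intro b hb hbk
      rcases lt_or_gt_of_ne hbk with hlt | hgt
      · rw [ih b hlt (le_trans (le_of_lt hlt) hk), mul_zero]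
      · rw [iterDerivM_eq_zero (hmon k).2 hgt, zero_mul]
    · intro hk'
      exact absurd (Finset.mem_range.mpr (Nat.lt_succ_of_le hk)) hk'

/-- The purely algebraic part: if `reflectM (H n) = (-1)^n • H n` then the
coefficients satisfy the parity condition. -/
lemma alg_conclusion {s : ℕ} (H : ℕ → MatPoly N) (hmon : ∀ n, IsMonicDeg (H n) n)
    (hrefl : ∀ n, reflectM (H n) = ((-1 : ℂ) ^ n) • H n)
    (F : ℕ → MatPoly N) (Λ : ℕ → Matrix (Fin N) (Fin N) ℂ)
    (hD : ∀ n : ℕ, applyOp s F (H n) = constM (Λ n) * H n) :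
    ∀ j ≤ s, reflectM (F j) = ((-1 : ℂ) ^ j) • F j := by
  set G : ℕ → MatPoly N := fun j => ((-1 : ℂ) ^ j) • reflectM (F j) - F j with hGdef
  have hG : ∀ n, applyOp s G (H n) = 0 := by
    intro n
    have hA : applyOp s (fun j => ((-1 : ℂ) ^ j) • reflectM (F j)) (H n)
        = constM (Λ n) * H n := by
      have h := congrArg reflectM (hD n)
      rw [applyOp, reflectM_sum] at h
      have hL : ∀ j, reflectM (iterDerivM j (H n) * F j)
          = ((-1 : ℂ) ^ n) • (iterDerivM j (H n) * (((-1 : ℂ) ^ j) • reflectM (F j))) := by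
        intro j
        rw [reflectM_mul, reflectM_iterDerivM, hrefl n, iterDerivM_smul,
          smul_mul_assoc, smul_mul_assoc, mul_smul_comm, smul_comm]
      simp only [hL] at h
      rw [← Finset.smul_sum, reflectM_mul, reflectM_constM, hrefl n,
        constM_mul_smul] at h
      have hinj : Function.Injective (fun (Q : MatPoly N) => ((-1 : ℂ) ^ n) • Q) := by
        intro a b hab
        have hne : ((-1 : ℂ) ^ n) ≠ 0 := by
          simp [pow_ne_zero]
        exact smul_right_injective _ hne hab
      have := hinj h
      rw [applyOp]
      exact this
    rw [hGdef]
    have : applyOp s (fun j => ((-1 : ℂ) ^ j) • reflectM (F j) - F j) (H n)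
        = applyOp s (fun j => ((-1 : ℂ) ^ j) • reflectM (F j)) (H n)
          - applyOp s F (H n) := by
      rw [applyOp, applyOp, applyOp, ← Finset.sum_sub_distrib]
      congr 1
      funext j
      rw [mul_sub]
    rw [this, hA, hD n, sub_self]
  have hzero := main_alg H hmon G hG
  intro j hj
  have hGj : ((-1 : ℂ) ^ j) • reflectM (F j) = F j := by
    have := hzero j hj
    rw [hGdef] at this
    have := sub_eq_zero.mp this
    exact this
  have : ((-1 : ℂ) ^ j) • (((-1 : ℂ) ^ j) • reflectM (F j)) = ((-1 : ℂ) ^ j) • F j := by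
    rw [hGj]
  rw [smul_smul, ← mul_pow, neg_mul_neg, one_mul, one_pow, one_smul] at this
  exact this

section Analytic

variable {W : ℝ → Matrix (Fin N) (Fin N) ℂ}

lemma integrable_poly_mul_W (hW : IsWeight Set.univ W) (p q : Polynomial ℂ) (k l : Fin N) :
    Integrable (fun x : ℝ => p.eval (x : ℂ) * (starRingEnd ℂ) (q.eval (x : ℂ)) * W x k l) := by
  have hmom : ∀ (n : ℕ), Integrable (fun x : ℝ => (x : ℂ) ^ n * W x k l) := by
    intro n
    have := hW.moments n k l
    rwa [IntegrableOn, Measure.restrict_univ] at this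
  have hfun : (fun x : ℝ => p.eval (x : ℂ) * (starRingEnd ℂ) (q.eval (x : ℂ)) * W x k l)
      = fun x : ℝ => ∑ a ∈ Finset.range (p.natDegree + 1), ∑ b ∈ Finset.range (q.natDegree + 1),
          (p.coeff a * (starRingEnd ℂ) (q.coeff b)) * ((x : ℂ) ^ (a + b) * W x k l) := by
    funext x
    rw [Polynomial.eval_eq_sum_range (p := p), Polynomial.eval_eq_sum_range (p := q),
      map_sum, Finset.sum_mul_sum, Finset.sum_mul]
    refine Finset.sum_congr rfl fun a _ => ?_
    rw [Finset.sum_mul]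
    refine Finset.sum_congr rfl fun b _ => ?_
    rw [_root_.map_mul, _root_.map_pow, Complex.conj_ofReal, pow_add]
    ring
  rw [hfun]
  refine integrable_finset_sum _ fun a _ => integrable_finset_sum _ fun b _ => ?_
  exact (hmom (a + b)).const_mul _

lemma integrable_entry (hW : IsWeight Set.univ W) (P Q : MatPoly N) (i j : Fin N) :
    Integrable (fun x : ℝ => (evalM P x * W x * (evalM Q x)ᴴ) i j) := by
  have hfun : (fun x : ℝ => (evalM P x * W x * (evalM Q x)ᴴ) i j)
      = fun x : ℝ => ∑ l : Fin N, ∑ k : Fin N,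
          (P i k).eval (x : ℂ) * (starRingEnd ℂ) ((Q j l).eval (x : ℂ)) * W x k l := by
    funext x
    rw [Matrix.mul_apply]
    refine Finset.sum_congr rfl fun l _ => ?_
    rw [Matrix.conjTranspose_apply, Matrix.mul_apply, Finset.sum_mul]
    refine Finset.sum_congr rfl fun k _ => ?_
    simp only [evalM, starRingEnd_apply]
    ring
  rw [hfun]
  exact integrable_finset_sum _ fun l _ => integrable_finset_sum _ fun k _ =>
    integrable_poly_mul_W hW (P i k) (Q j l) k l

lemma innerW_apply (P Q : MatPoly N) (i j : Fin N) :
    innerW Set.univ W P Q i j = ∫ x : ℝ, (evalM P x * W x * (evalM Q x)ᴴ) i j := by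
  rw [innerW, matInt, Measure.restrict_univ]

lemma innerW_sub_left (hW : IsWeight Set.univ W) (P Q R : MatPoly N) :
    innerW Set.univ W (P - Q) R = innerW Set.univ W P R - innerW Set.univ W Q R := by
  funext i j
  simp only [Matrix.sub_apply, innerW_apply]
  rw [← integral_sub (integrable_entry hW P R i j) (integrable_entry hW Q R i j)]
  congr 1
  funext x
  rw [evalM_sub, Matrix.sub_mul, Matrix.sub_mul, Matrix.sub_apply]

lemma innerW_constM_mul_right (hW : IsWeight Set.univ W) (P Q : MatPoly N)
    (A : Matrix (Fin N) (Fin N) ℂ) :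
    innerW Set.univ W P (constM A * Q) = innerW Set.univ W P Q * Aᴴ := by
  funext i j
  rw [innerW_apply, Matrix.mul_apply]
  have hfun : (fun x : ℝ => (evalM P x * W x * (evalM (constM A * Q) x)ᴴ) i j)
      = fun x : ℝ => ∑ l : Fin N, (evalM P x * W x * (evalM Q x)ᴴ) i l * Aᴴ l j := by
    funext x
    rw [evalM_mul, evalM_constM, Matrix.conjTranspose_mul, ← Matrix.mul_assoc,
      Matrix.mul_apply]
  rw [hfun, integral_finset_sum]
  · refine Finset.sum_congr rfl fun l _ => ?_
    rw [integral_mul_const, innerW_apply]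
  · exact fun l _ => (integrable_entry hW P Q i l).mul_const _

lemma innerW_sum_right (hW : IsWeight Set.univ W) (P : MatPoly N) {ι : Type*}
    (t : Finset ι) (T : ι → MatPoly N) :
    innerW Set.univ W P (∑ m ∈ t, T m) = ∑ m ∈ t, innerW Set.univ W P (T m) := by
  classical
  induction t using Finset.induction_on with
  | empty =>
      funext i j
      rw [Finset.sum_empty, Finset.sum_empty, innerW_apply]
      have : (fun x : ℝ => (evalM P x * W x * (evalM (0 : MatPoly N) x)ᴴ) i j) = fun _ => 0 := by
        funext x
        have : evalM (0 : MatPoly N) x = 0 := by funext a b; simp [evalM]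
        rw [this]
        simp
      rw [this, integral_zero, Matrix.zero_apply]
  | @insert a t hm ih =>
      rw [Finset.sum_insert hm, Finset.sum_insert hm, ← ih]
      funext i j
      rw [innerW_apply, Matrix.add_apply, innerW_apply, innerW_apply,
        ← integral_add (integrable_entry hW P (T a) i j)
          (integrable_entry hW P (∑ m ∈ t, T m) i j)]
      congr 1
      funext x
      rw [evalM_add, Matrix.conjTranspose_add, Matrix.mul_add, Matrix.add_apply]

end Analytic

section Nondeg

variable {W : ℝ → Matrix (Fin N) (Fin N) ℂ}

lemma poly_eq_zero_of_ae (q : Polynomial ℂ) (h : ∀ᵐ x : ℝ, q.eval (x : ℂ) = 0) : q = 0 := by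
  by_contra hq
  have hfin : ({x : ℝ | q.eval (x : ℂ) = 0}).Finite := by
    have : {x : ℝ | q.eval (x : ℂ) = 0} = (fun x : ℝ => (x : ℂ)) ⁻¹' {z : ℂ | q.IsRoot z} := by
      rfl
    rw [this]
    exact Set.Finite.preimage (Set.injOn_of_injective Complex.ofReal_injective)
      (Polynomial.finite_setOf_isRoot hq)
  have h1 : volume {x : ℝ | ¬ q.eval (x : ℂ) = 0} = 0 := by rwa [MeasureTheory.ae_iff] at h
  have h2 : volume {x : ℝ | q.eval (x : ℂ) = 0} = 0 := hfin.measure_zero _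
  have huniv : (volume : Measure ℝ) Set.univ = 0 := by
    have hsub : (Set.univ : Set ℝ) ⊆ {x : ℝ | q.eval (x : ℂ) = 0} ∪ {x : ℝ | ¬ q.eval (x : ℂ) = 0} := by
      intro x _
      by_cases hx : q.eval (x : ℂ) = 0
      · exact Or.inl hx
      · exact Or.inr hx
    refine le_antisymm ?_ bot_le
    calc volume Set.univ ≤ volume ({x : ℝ | q.eval (x : ℂ) = 0} ∪ {x : ℝ | ¬ q.eval (x : ℂ) = 0}) :=
          measure_mono hsub
      _ ≤ volume {x : ℝ | q.eval (x : ℂ) = 0} + volume {x : ℝ | ¬ q.eval (x : ℂ) = 0} :=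
          measure_union_le _ _
      _ = 0 := by rw [h1, h2, add_zero]
  simp at huniv

lemma innerW_self_zero (hW : IsWeight Set.univ W) (P : MatPoly N)
    (h : innerW Set.univ W P P = 0) : P = 0 := by
  funext i k
  -- the test vector
  set v : Fin N → ℂ := Pi.single i 1 with hv
  set M : ℝ → Matrix (Fin N) (Fin N) ℂ := fun x => evalM P x * W x * (evalM P x)ᴴ with hM
  set g : ℝ → ℂ := fun x => dotProduct (star v) ((M x).mulVec v) with hg
  have hgfun : g = fun x => ∑ a : Fin N, ∑ b : Fin N, star v a * (M x a b * v b) := by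
    funext x
    simp [hg, dotProduct, Matrix.mulVec, Finset.mul_sum]
  have hgint : Integrable g := by
    rw [hgfun]
    exact integrable_finset_sum _ fun a _ => integrable_finset_sum _ fun b _ =>
      (((integrable_entry hW P P a b).mul_const (v b)).const_mul (star v a))
  have hint0 : ∫ x : ℝ, g x = 0 := by
    rw [hgfun]
    rw [integral_finset_sum _ (fun a _ => integrable_finset_sum _ fun b _ =>
      (((integrable_entry hW P P a b).mul_const (v b)).const_mul (star v a)))]
    have : ∀ a : Fin N, ∫ x : ℝ, ∑ b : Fin N, star v a * (M x a b * v b)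
        = ∑ b : Fin N, star v a * ((innerW Set.univ W P P a b) * v b) := by
      intro a
      rw [integral_finset_sum _ (fun b _ =>
        (((integrable_entry hW P P a b).mul_const (v b)).const_mul (star v a)))]
      refine Finset.sum_congr rfl fun b _ => ?_
      rw [integral_const_mul, integral_mul_const, innerW_apply]
    refine (Finset.sum_congr rfl fun a _ => this a).trans ?_
    simp only [h, Matrix.zero_apply, zero_mul, mul_zero, Finset.sum_const_zero]
  -- pointwise form as a quadratic form in W
  have hquad : ∀ x : ℝ, g x = dotProduct (star ((evalM P x)ᴴ.mulVec v))
      ((W x).mulVec ((evalM P x)ᴴ.mulVec v)) := by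
    intro x
    show star v ⬝ᵥ (evalM P x * W x * (evalM P x)ᴴ) *ᵥ v
        = star ((evalM P x)ᴴ *ᵥ v) ⬝ᵥ W x *ᵥ (evalM P x)ᴴ *ᵥ v
    rw [← Matrix.mulVec_mulVec, ← Matrix.mulVec_mulVec, dotProduct_mulVec,
      Matrix.star_mulVec, Matrix.conjTranspose_conjTranspose, dotProduct_mulVec]
  have hpos : ∀ᵐ x : ℝ, (W x).PosDef := by
    have := hW.posdef
    rwa [Measure.restrict_univ] at this
  have hnonneg : ∀ᵐ x : ℝ, 0 ≤ g x := by
    filter_upwards [hpos] with x hx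
    rw [hquad x]
    exact hx.posSemidef.dotProduct_mulVec_nonneg _
  -- the real part integrates to zero and is a.e. nonneg, hence zero a.e.
  have hreint : Integrable (fun x => (g x).re) := hgint.re
  have hre0 : ∫ x : ℝ, (g x).re = 0 := by
    have h2 := integral_re hgint
    rw [hint0] at h2
    simpa using h2
  have hrenn : 0 ≤ᵐ[volume] fun x => (g x).re := by
    filter_upwards [hnonneg] with x hx
    exact (Complex.nonneg_iff.mp hx).1
  have hre_ae : (fun x => (g x).re) =ᵐ[volume] 0 :=
    (MeasureTheory.integral_eq_zero_iff_of_nonneg_ae hrenn hreint).mp hre0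
  have hg_ae : ∀ᵐ x : ℝ, g x = 0 := by
    filter_upwards [hre_ae, hnonneg] with x hx1 hx2
    have him := (Complex.nonneg_iff.mp hx2).2
    exact Complex.ext (by simpa using hx1) (by simpa using him.symm)
  -- hence the vector (evalM P x)ᴴ *ᵥ v vanishes a.e.
  have hu_ae : ∀ᵐ x : ℝ, (evalM P x)ᴴ.mulVec v = 0 := by
    filter_upwards [hg_ae, hpos] with x hx1 hx2
    by_contra hu
    have := hx2.dotProduct_mulVec_pos hu
    rw [← hquad x, hx1] at this
    exact lt_irrefl 0 this
  have hev : ∀ᵐ x : ℝ, (P i k).eval (x : ℂ) = 0 := by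
    filter_upwards [hu_ae] with x hx
    have := congrFun hx k
    have hcomp : (evalM P x)ᴴ.mulVec v k = star ((P i k).eval (x : ℂ)) := by
      rw [hv]
      simp only [Matrix.mulVec, dotProduct, Matrix.conjTranspose_apply, evalM,
        Pi.single_apply, mul_ite, mul_one, mul_zero, Finset.sum_ite_eq', Finset.mem_univ,
        if_true]
    rw [hcomp] at this
    simpa using congrArg star this
  have := poly_eq_zero_of_ae _ hev
  simpa using this

end Nondeg

section Refl

variable {W : ℝ → Matrix (Fin N) (Fin N) ℂ}

lemma coeffM_sub (P Q : MatPoly N) (k : ℕ) :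
    coeffM (P - Q) k = coeffM P k - coeffM Q k := by
  funext i j; simp [coeffM]

lemma coeffM_smul (c : ℂ) (P : MatPoly N) (k : ℕ) :
    coeffM (c • P) k = c • coeffM P k := by
  funext i j; simp [coeffM]

lemma innerW_smul_left (c : ℂ) (P Q : MatPoly N) :
    innerW Set.univ W (c • P) Q = c • innerW Set.univ W P Q := by
  funext i j
  rw [innerW_apply, Matrix.smul_apply, innerW_apply, ← integral_smul]
  congr 1
  funext x
  rw [evalM_smul, Matrix.smul_mul, Matrix.smul_mul, Matrix.smul_apply]

lemma innerW_smul_right (c : ℂ) (P Q : MatPoly N) :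
    innerW Set.univ W P (c • Q) = (starRingEnd ℂ c) • innerW Set.univ W P Q := by
  funext i j
  rw [innerW_apply, Matrix.smul_apply, innerW_apply, ← integral_smul]
  congr 1
  funext x
  rw [evalM_smul, Matrix.conjTranspose_smul, Matrix.mul_smul, Matrix.smul_apply]
  rfl

lemma innerW_reflect (hsymm : ∀ᵐ x : ℝ, W x = W (-x)) (P Q : MatPoly N) :
    innerW Set.univ W (reflectM P) (reflectM Q) = innerW Set.univ W P Q := by
  funext i j
  rw [innerW_apply, innerW_apply]
  have h1 : (fun x : ℝ => (evalM (reflectM P) x * W x * (evalM (reflectM Q) x)ᴴ) i j)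
      =ᵐ[volume] fun x : ℝ => (evalM P (-x) * W (-x) * (evalM Q (-x))ᴴ) i j := by
    filter_upwards [hsymm] with x hx
    rw [evalM_reflectM, evalM_reflectM, ← hx]
  rw [integral_congr_ae h1]
  exact integral_neg_eq_self (fun y : ℝ => (evalM P y * W y * (evalM Q y)ᴴ) i j) volume

/-- Spanning: any matrix polynomial with coefficients vanishing from degree `d` on
is a left combination of the first `d` members of any monic family. -/
lemma span_monic (Q : ℕ → MatPoly N) (hmon : ∀ n, IsMonicDeg (Q n) n) :
    ∀ (d : ℕ) (P : MatPoly N), (∀ k, d ≤ k → coeffM P k = 0) →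
      ∃ A : ℕ → Matrix (Fin N) (Fin N) ℂ,
        P = ∑ m ∈ Finset.range d, constM (A m) * Q m := by
  intro d
  induction d with
  | zero =>
      intro P hP
      refine ⟨0, ?_⟩
      rw [Finset.range_zero, Finset.sum_empty]
      exact eq_zero_of_coeffM P fun k => hP k (Nat.zero_le k)
  | succ d ih =>
      intro P hP
      set Ad := coeffM P d with hAd
      have hP' : ∀ k, d ≤ k → coeffM (P - constM Ad * Q d) k = 0 := by
        intro k hk
        rw [coeffM_sub, coeffM_constM_mul]
        rcases eq_or_lt_of_le hk with hk' | hk'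
        · subst hk'
          rw [(hmon d).1, mul_one, ← hAd, sub_self]
        · rw [hP k hk', (hmon d).2 k hk', mul_zero, sub_self]
      obtain ⟨A, hA⟩ := ih (P - constM Ad * Q d) hP'
      refine ⟨fun m => if m = d then Ad else A m, ?_⟩
      rw [Finset.sum_range_succ]
      have : ∑ m ∈ Finset.range d, constM (if m = d then Ad else A m) * Q m
          = ∑ m ∈ Finset.range d, constM (A m) * Q m := by
        refine Finset.sum_congr rfl fun m hm => ?_
        rw [if_neg (Nat.ne_of_lt (Finset.mem_range.mp hm))]
      rw [this, ← hA]
      simp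

/-- The key analytic fact: for an even weight the monic orthogonal polynomials
satisfy `H_n(-x) = (-1)^n H_n(x)`. -/
lemma reflect_H (hW : IsWeight Set.univ W) (hsymm : ∀ᵐ x : ℝ, W x = W (-x))
    (H : ℕ → MatPoly N) (hH : MonicOPS Set.univ W H) :
    ∀ n, reflectM (H n) = ((-1 : ℂ) ^ n) • H n := by
  set K : ℕ → MatPoly N := fun m => ((-1 : ℂ) ^ m) • reflectM (H m) with hK
  have hKmon : ∀ m, IsMonicDeg (K m) m := by
    intro m
    constructor
    · rw [hK]
      rw [coeffM_smul, coeffM_reflectM, (hH.1 m).1, smul_smul, ← mul_pow, neg_mul_neg,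
        one_mul, one_pow, one_smul]
    · intro k hk
      rw [hK]
      rw [coeffM_smul, coeffM_reflectM, (hH.1 m).2 k hk, smul_zero, smul_zero]
  have hKorth : ∀ a b, a ≠ b → innerW Set.univ W (K a) (K b) = 0 := by
    intro a b hab
    rw [hK]
    rw [innerW_smul_left, innerW_smul_right, innerW_reflect hsymm, hH.2 a b hab,
      smul_zero, smul_zero]
  intro n
  set Dn : MatPoly N := H n - K n with hDn
  have hDcoeff : ∀ k, n ≤ k → coeffM Dn k = 0 := by
    intro k hk
    rw [hDn, coeffM_sub]
    rcases eq_or_lt_of_le hk with hk' | hk'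
    · subst hk'
      rw [(hH.1 n).1, (hKmon n).1, sub_self]
    · rw [(hH.1 n).2 k hk', (hKmon n).2 k hk', sub_self]
  obtain ⟨A, hA⟩ := span_monic H hH.1 n Dn hDcoeff
  have hDHm : ∀ m, m < n → innerW Set.univ W Dn (H m) = 0 := by
    intro m hm
    rw [hDn, innerW_sub_left hW, hH.2 n m (Nat.ne_of_gt hm)]
    obtain ⟨B, hB⟩ := span_monic K hKmon (m + 1) (H m) (fun k hk => (hH.1 m).2 k hk)
    rw [hB, innerW_sum_right hW]
    have : ∀ l ∈ Finset.range (m + 1), innerW Set.univ W (K n) (constM (B l) * K l) = 0 := by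
      intro l hl
      rw [innerW_constM_mul_right hW,
        hKorth n l (by have := Finset.mem_range.mp hl; omega), Matrix.zero_mul]
    rw [Finset.sum_congr rfl this, Finset.sum_const_zero, zero_sub, neg_zero]
  have hDD : innerW Set.univ W Dn Dn = 0 := by
    conv_lhs => rw [show innerW Set.univ W Dn Dn
      = innerW Set.univ W Dn (∑ m ∈ Finset.range n, constM (A m) * H m) by rw [← hA]]
    rw [innerW_sum_right hW]
    have : ∀ m ∈ Finset.range n, innerW Set.univ W Dn (constM (A m) * H m) = 0 := by
      intro m hm
      rw [innerW_constM_mul_right hW, hDHm m (Finset.mem_range.mp hm), Matrix.zero_mul]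
    rw [Finset.sum_congr rfl this, Finset.sum_const_zero]
  have hD0 : Dn = 0 := innerW_self_zero hW Dn hDD
  have hHK : H n = K n := by
    have := sub_eq_zero.mp (by rw [← hDn]; exact hD0)
    exact this
  have : ((-1 : ℂ) ^ n) • H n = ((-1 : ℂ) ^ n) • K n := by rw [hHK]
  rw [hK] at this
  rw [smul_smul, ← mul_pow, neg_mul_neg, one_mul, one_pow, one_smul] at this
  exact this.symm

end Refl

end Aux

/-- If `W(x) = W(-x)` a.e. and `D = ∑_{j=0}^s (d^j/dx^j) F_j` has the
monic orthogonal polynomials `H_n` of `W` as eigenfunctions, `H_n · D = Λ_n H_n`, then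
each coefficient satisfies `F_j(-x) = (-1)^j F_j(x)`. -/
theorem stmt7 {N : ℕ} (W : ℝ → Matrix (Fin N) (Fin N) ℂ)
    (hW : IsWeight Set.univ W)
    (hsymm : ∀ᵐ x : ℝ, W x = W (-x))
    (H : ℕ → MatPoly N) (hH : MonicOPS Set.univ W H)
    (s : ℕ) (F : ℕ → MatPoly N) (Λ : ℕ → Matrix (Fin N) (Fin N) ℂ)
    (hD : ∀ n : ℕ, applyOp s F (H n) = constM (Λ n) * H n) :
    ∀ j ≤ s, reflectM (F j) = ((-1 : ℂ) ^ j) • F j := by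
  exact Aux.alg_conclusion H hH.1 (Aux.reflect_H hW hsymm H hH) F Λ hD
end
end

section
/- Let W be an N×N weight matrix on ℝ satisfying W(x) = W(−x) for almost every x, with monic orthogonal polynomials {H_n}_{n≥0}, and let V(y) = y^{−1/2} W(√y) be the associated weight matrix on (0,∞) with monic orthogonal polynomials {L_n}_{n≥0}. Let A₁ and A₀ be constant N×N matrices such that for every n ≥ 0 there is a constant matrix Λ_n with H_n''(x) + x·H_n'(x)·A₁ + H_n(x)·A₀ = Λ_n H_n(x) as matrix polynomials. Then for every n ≥ 0, 4y·L_n''(y) + L_n'(y)·(2A₁ y + 2I) + L_n(y)·A₀ = Λ_{2n} L_n(y) as matrix polynomials in y, where I is the N×N identity matrix. -/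
open MeasureTheory Polynomial Set Matrix
open scoped ComplexOrder

noncomputable section

namespace Stmt10Aux

variable {N : ℕ}

lemma matpoly_ext {P Q : MatPoly N} (h : ∀ k, coeffM P k = coeffM Q k) : P = Q := by
  funext i j
  apply Polynomial.ext
  intro k
  exact congrFun (congrFun (h k) i) j

lemma coeffM_constM_mul (A : Matrix (Fin N) (Fin N) ℂ) (P : MatPoly N) (k : ℕ) :
    coeffM (constM A * P) k = A * coeffM P k := by
  funext i j
  simp [coeffM, constM, Matrix.mul_apply, Polynomial.finset_sum_coeff,
    Polynomial.coeff_C_mul, Matrix.map_apply]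

lemma coeffM_sub (P Q : MatPoly N) (k : ℕ) :
    coeffM (P - Q) k = coeffM P k - coeffM Q k := by
  funext i j; simp [coeffM]

lemma coeffM_add (P Q : MatPoly N) (k : ℕ) :
    coeffM (P + Q) k = coeffM P k + coeffM Q k := by
  funext i j; simp [coeffM]

lemma coeff_comp_sq (p : Polynomial ℂ) (k : ℕ) :
    (p.comp (Polynomial.X ^ 2)).coeff k = if 2 ∣ k then p.coeff (k / 2) else 0 := by
  induction p using Polynomial.induction_on' with
  | add p q hp hq =>
    simp only [Polynomial.add_comp, Polynomial.coeff_add, hp, hq]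
    split <;> simp
  | monomial n a =>
    rw [Polynomial.monomial_comp, ← pow_mul]
    rw [Polynomial.coeff_C_mul, Polynomial.coeff_X_pow, Polynomial.coeff_monomial]
    by_cases h : k = 2 * n
    · subst h
      simp [Nat.mul_div_cancel_left]
    · rw [if_neg h]
      by_cases h2 : 2 ∣ k
      · obtain ⟨k', rfl⟩ := h2
        have h3 : ¬ n = k' := by omega
        simp [h3]
      · simp [h2]

lemma coeff_comp_neg (p : Polynomial ℂ) (k : ℕ) :
    (p.comp (-Polynomial.X)).coeff k = (-1 : ℂ) ^ k * p.coeff k := by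
  induction p using Polynomial.induction_on' with
  | add p q hp hq =>
    simp only [Polynomial.add_comp, Polynomial.coeff_add, hp, hq]
    ring
  | monomial n a =>
    rw [Polynomial.monomial_comp, neg_pow]
    have hc : ((-1 : Polynomial ℂ)) ^ n = Polynomial.C ((-1 : ℂ) ^ n) := by
      rw [← Polynomial.C_1, ← Polynomial.C_neg, ← Polynomial.C_pow]
    rw [show Polynomial.C a * ((-1 : Polynomial ℂ) ^ n * Polynomial.X ^ n)
        = Polynomial.C ((-1 : ℂ) ^ n) * (Polynomial.X ^ n * Polynomial.C a) by rw [hc]; ring]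
    simp only [Polynomial.coeff_C_mul, Polynomial.coeff_monomial]
    rw [show (Polynomial.X ^ n * Polynomial.C a : Polynomial ℂ)
        = Polynomial.C a * Polynomial.X ^ n by ring,
      Polynomial.coeff_C_mul, Polynomial.coeff_X_pow]
    by_cases h : n = k
    · simp [h]
    · simp [h, Ne.symm h]

lemma coeffM_compSq (P : MatPoly N) (k : ℕ) :
    coeffM (compSqM P) k = if 2 ∣ k then coeffM P (k / 2) else 0 := by
  funext i j
  simp only [coeffM, compSqM, coeff_comp_sq]
  split <;> simp [coeffM]

lemma coeffM_reflect (P : MatPoly N) (k : ℕ) :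
    coeffM (reflectM P) k = ((-1 : ℂ) ^ k) • coeffM P k := by
  funext i j
  simp [coeffM, reflectM, coeff_comp_neg]

lemma reflect_compSq (P : MatPoly N) : reflectM (compSqM P) = compSqM P := by
  funext i j
  show ((P i j).comp (Polynomial.X ^ 2)).comp (-Polynomial.X) = (P i j).comp (Polynomial.X ^ 2)
  rw [Polynomial.comp_assoc]
  congr 1
  simp [Polynomial.pow_comp, Polynomial.X_comp, neg_pow]

lemma compSq_injective : Function.Injective (compSqM (N := N)) := by
  intro P Q h
  funext i j
  have h' : (P i j).comp (Polynomial.X ^ 2) = (Q i j).comp (Polynomial.X ^ 2) :=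
    congrFun (congrFun h i) j
  apply Polynomial.funext
  intro z
  obtain ⟨w, rfl⟩ := IsAlgClosed.exists_pow_nat_eq z (n := 2) (by norm_num)
  have := congrArg (Polynomial.eval w) h'
  simpa [Polynomial.eval_comp] using this

end Stmt10Aux
namespace Stmt10Aux
variable {N : ℕ}

lemma evalM_mul (P Q : MatPoly N) (x : ℝ) : evalM (P * Q) x = evalM P x * evalM Q x := by
  funext i j
  simp [evalM, Matrix.mul_apply, Polynomial.eval_finset_sum]

lemma evalM_add (P Q : MatPoly N) (x : ℝ) : evalM (P + Q) x = evalM P x + evalM Q x := by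
  funext i j; simp [evalM]

lemma evalM_sub (P Q : MatPoly N) (x : ℝ) : evalM (P - Q) x = evalM P x - evalM Q x := by
  funext i j; simp [evalM]

lemma evalM_zero (x : ℝ) : evalM (0 : MatPoly N) x = 0 := by
  funext i j; simp [evalM]

lemma evalM_constM (A : Matrix (Fin N) (Fin N) ℂ) (x : ℝ) : evalM (constM A) x = A := by
  funext i j; simp [evalM, constM]

lemma evalM_compSq (P : MatPoly N) (x : ℝ) : evalM (compSqM P) x = evalM P (x ^ 2) := by
  funext i j
  simp only [evalM, compSqM, Polynomial.eval_comp, Polynomial.eval_pow, Polynomial.eval_X]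
  norm_cast

lemma evalM_reflect (P : MatPoly N) (x : ℝ) : evalM (reflectM P) x = evalM P (-x) := by
  funext i j
  simp [evalM, reflectM, Polynomial.eval_comp]

-- algebraic distribution lemmas for compSqM etc.
lemma compSqM_add (P Q : MatPoly N) : compSqM (P + Q) = compSqM P + compSqM Q := by
  funext i j; simp [compSqM, Polynomial.add_comp]

lemma compSqM_smul (c : ℂ) (P : MatPoly N) : compSqM (c • P) = c • compSqM P := by
  funext i j; simp [compSqM, Polynomial.smul_comp]

lemma compSqM_mul (P Q : MatPoly N) : compSqM (P * Q) = compSqM P * compSqM Q := by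
  funext i j
  simp [compSqM, Matrix.mul_apply, Polynomial.mul_comp]

lemma compSqM_constM (A : Matrix (Fin N) (Fin N) ℂ) : compSqM (constM A) = constM A := by
  funext i j; simp [compSqM, constM]

lemma compSqM_XmulM (P : MatPoly N) :
    compSqM (XmulM P) = XmulM (XmulM (compSqM P)) := by
  funext i j
  simp [compSqM, XmulM, Polynomial.mul_comp]
  ring

lemma derivM_add (P Q : MatPoly N) : derivM (P + Q) = derivM P + derivM Q := by
  funext i j; simp [derivM]

lemma derivM_smul (c : ℂ) (P : MatPoly N) : derivM (c • P) = c • derivM P := by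
  funext i j; simp [derivM]

lemma derivM_XmulM (P : MatPoly N) : derivM (XmulM P) = P + XmulM (derivM P) := by
  funext i j
  simp [derivM, XmulM]

lemma derivM_compSq (P : MatPoly N) :
    derivM (compSqM P) = (2 : ℂ) • XmulM (compSqM (derivM P)) := by
  funext i j
  simp only [derivM, compSqM, XmulM, Matrix.smul_apply, Polynomial.derivative_comp,
    Polynomial.derivative_X_pow]
  rw [Polynomial.smul_eq_C_mul]
  push_cast
  ring

lemma constM_smul (c : ℂ) (A : Matrix (Fin N) (Fin N) ℂ) :
    constM (c • A) = c • constM A := by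
  funext i j; simp [constM]

lemma XmulM_smul (c : ℂ) (P : MatPoly N) : XmulM (c • P) = c • XmulM P := by
  funext i j; simp [XmulM, mul_smul_comm]

lemma algebra_step (L : MatPoly N) (A1 A0 Λ : Matrix (Fin N) (Fin N) ℂ)
    (h : derivM (derivM (compSqM L)) + XmulM (derivM (compSqM L)) * constM A1
          + compSqM L * constM A0 = constM Λ * compSqM L) :
    (4 : ℂ) • XmulM (derivM (derivM L)) + XmulM (derivM L) * constM ((2 : ℂ) • A1)
      + (2 : ℂ) • derivM L + L * constM A0 = constM Λ * L := by
  apply compSq_injective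
  rw [show compSqM (constM Λ * L) = constM Λ * compSqM L by rw [compSqM_mul, compSqM_constM]]
  rw [← h]
  simp only [compSqM_add, compSqM_smul, compSqM_mul, compSqM_constM, compSqM_XmulM,
    derivM_compSq, derivM_add, derivM_smul, derivM_XmulM, XmulM_smul, constM_smul,
    Matrix.mul_smul, Matrix.smul_mul, smul_smul, smul_add, Matrix.add_mul]
  norm_num
  abel

end Stmt10Aux
namespace Stmt10Aux
variable {N : ℕ} {I : Set ℝ} {W : ℝ → Matrix (Fin N) (Fin N) ℂ}

lemma conj_eval (q : Polynomial ℂ) (x : ℝ) :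
    (starRingEnd ℂ) (q.eval (x : ℂ)) = (q.map (starRingEnd ℂ)).eval (x : ℂ) := by
  induction q using Polynomial.induction_on' with
  | add p q hp hq => simp [hp, hq]
  | monomial n a =>
    simp [Polynomial.eval_monomial, _root_.map_mul, map_pow, ← Complex.ofReal_pow]

lemma isWeight_Ioi (hW : IsWeight Set.univ W) : IsWeight (Set.Ioi 0) W := by
  refine ⟨fun i j => (hW.integrable i j).mono_set (Set.subset_univ _), ?_,
    fun n i j => (hW.moments n i j).mono_set (Set.subset_univ _)⟩
  have := hW.posdef
  rw [Measure.restrict_univ] at this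
  exact ae_restrict_of_ae this

lemma integrable_poly_entry (hW : IsWeight I W) (p : Polynomial ℂ) (i j : Fin N) :
    IntegrableOn (fun x : ℝ => p.eval (x : ℂ) * W x i j) I := by
  have hrw : (fun x : ℝ => p.eval (x : ℂ) * W x i j)
      = fun x : ℝ => ∑ m ∈ Finset.range (p.natDegree + 1),
          p.coeff m • ((x : ℂ) ^ m * W x i j) := by
    funext x
    rw [Polynomial.eval_eq_sum_range, Finset.sum_mul]
    refine Finset.sum_congr rfl fun m _ => ?_
    simp [smul_eq_mul]; ring
  rw [hrw]
  exact MeasureTheory.integrable_finset_sum _ fun m _ => (hW.moments m i j).smul (p.coeff m)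

lemma inner_entry_expand (P Q : MatPoly N) (x : ℝ) (i j : Fin N) :
    (evalM P x * W x * (evalM Q x)ᴴ) i j
      = ∑ l, ∑ k, ((P i k) * ((Q j l).map (starRingEnd ℂ))).eval (x : ℂ) * W x k l := by
  simp only [Matrix.mul_apply, Matrix.conjTranspose_apply, Finset.sum_mul]
  refine Finset.sum_congr rfl fun l _ => Finset.sum_congr rfl fun k _ => ?_
  rw [Polynomial.eval_mul, ← conj_eval]
  simp only [evalM, RCLike.star_def]
  ring

lemma integrable_inner_entry (hW : IsWeight I W) (P Q : MatPoly N) (i j : Fin N) :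
    IntegrableOn (fun x : ℝ => (evalM P x * W x * (evalM Q x)ᴴ) i j) I := by
  simp only [inner_entry_expand]
  exact MeasureTheory.integrable_finset_sum _ fun l _ =>
    MeasureTheory.integrable_finset_sum _ fun k _ => integrable_poly_entry hW _ k l

lemma innerW_apply (P Q : MatPoly N) (i j : Fin N) :
    innerW I W P Q i j = ∫ x in I, (evalM P x * W x * (evalM Q x)ᴴ) i j := rfl

lemma innerW_add_left (hW : IsWeight I W) (P P' Q : MatPoly N) :
    innerW I W (P + P') Q = innerW I W P Q + innerW I W P' Q := by
  funext i j
  rw [Matrix.add_apply, innerW_apply, innerW_apply, innerW_apply,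
    ← MeasureTheory.integral_add (integrable_inner_entry hW P Q i j)
      (integrable_inner_entry hW P' Q i j)]
  congr 1; funext x
  rw [evalM_add, Matrix.add_mul, Matrix.add_mul, Matrix.add_apply]

lemma innerW_sub_left (hW : IsWeight I W) (P P' Q : MatPoly N) :
    innerW I W (P - P') Q = innerW I W P Q - innerW I W P' Q := by
  funext i j
  rw [Matrix.sub_apply, innerW_apply, innerW_apply, innerW_apply,
    ← MeasureTheory.integral_sub (integrable_inner_entry hW P Q i j)
      (integrable_inner_entry hW P' Q i j)]
  congr 1; funext x
  rw [evalM_sub, Matrix.sub_mul, Matrix.sub_mul, Matrix.sub_apply]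

lemma innerW_add_right (hW : IsWeight I W) (P Q Q' : MatPoly N) :
    innerW I W P (Q + Q') = innerW I W P Q + innerW I W P Q' := by
  funext i j
  rw [Matrix.add_apply, innerW_apply, innerW_apply, innerW_apply,
    ← MeasureTheory.integral_add (integrable_inner_entry hW P Q i j)
      (integrable_inner_entry hW P Q' i j)]
  congr 1; funext x
  rw [evalM_add, Matrix.conjTranspose_add, Matrix.mul_add, Matrix.add_apply]

lemma innerW_constM_mul_left (hW : IsWeight I W) (C : Matrix (Fin N) (Fin N) ℂ)
    (P Q : MatPoly N) :
    innerW I W (constM C * P) Q = C * innerW I W P Q := by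
  funext i j
  have h1 : ∀ x : ℝ, (evalM (constM C * P) x * W x * (evalM Q x)ᴴ) i j
      = ∑ k, C i k * ((evalM P x * W x * (evalM Q x)ᴴ) k j) := by
    intro x
    rw [evalM_mul, evalM_constM, Matrix.mul_assoc, Matrix.mul_assoc, ← Matrix.mul_assoc (evalM P x)]
    simp [Matrix.mul_apply]
  rw [innerW_apply]
  simp only [h1]
  rw [MeasureTheory.integral_finset_sum _
    (fun k _ => (integrable_inner_entry hW P Q k j).const_mul _)]
  rw [Matrix.mul_apply]
  refine Finset.sum_congr rfl fun k _ => ?_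
  rw [MeasureTheory.integral_const_mul, innerW_apply]

lemma innerW_constM_mul_right (hW : IsWeight I W) (P : MatPoly N)
    (C : Matrix (Fin N) (Fin N) ℂ) (Q : MatPoly N) :
    innerW I W P (constM C * Q) = innerW I W P Q * Cᴴ := by
  funext i j
  have h1 : ∀ x : ℝ, (evalM P x * W x * (evalM (constM C * Q) x)ᴴ) i j
      = ∑ k, ((evalM P x * W x * (evalM Q x)ᴴ) i k) * Cᴴ k j := by
    intro x
    rw [evalM_mul, evalM_constM, Matrix.conjTranspose_mul, ← Matrix.mul_assoc]
    simp [Matrix.mul_apply]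
  rw [innerW_apply]
  simp only [h1]
  rw [MeasureTheory.integral_finset_sum _
    (fun k _ => (integrable_inner_entry hW P Q i k).mul_const _)]
  rw [Matrix.mul_apply]
  refine Finset.sum_congr rfl fun k _ => ?_
  rw [innerW_apply]
  rw [show ∀ f : ℝ → ℂ, ∀ c : ℂ, (∫ x in I, f x * c) = (∫ x in I, f x) * c from
    fun f c => by rw [MeasureTheory.integral_mul_const]]


lemma innerW_zero_left (Q : MatPoly N) : innerW I W 0 Q = 0 := by
  funext i j
  rw [innerW_apply]
  simp [evalM_zero]

lemma innerW_sum_left (hW : IsWeight I W) {ι : Type*} (s : Finset ι)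
    (P : ι → MatPoly N) (Q : MatPoly N) :
    innerW I W (∑ a ∈ s, P a) Q = ∑ a ∈ s, innerW I W (P a) Q := by
  classical
  induction s using Finset.induction_on with
  | empty => simp [innerW_zero_left]
  | insert _ _ hnot ih =>
    rw [Finset.sum_insert hnot, Finset.sum_insert hnot, innerW_add_left hW, ih]

lemma innerW_sum_right (hW : IsWeight I W) {ι : Type*} (s : Finset ι)
    (P : MatPoly N) (Q : ι → MatPoly N) :
    innerW I W P (∑ a ∈ s, Q a) = ∑ a ∈ s, innerW I W P (Q a) := by
  classical
  induction s using Finset.induction_on with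
  | empty =>
    simp only [Finset.sum_empty]
    funext i j
    rw [innerW_apply]
    simp [evalM_zero]
  | insert _ _ hnot ih =>
    rw [Finset.sum_insert hnot, Finset.sum_insert hnot, innerW_add_right hW, ih]

lemma innerW_conj (hW : IsWeight I W) (P Q : MatPoly N) :
    (innerW I W P Q)ᴴ = innerW I W Q P := by
  funext i j
  rw [Matrix.conjTranspose_apply, innerW_apply, innerW_apply]
  rw [show star (∫ x in I, (evalM P x * W x * (evalM Q x)ᴴ) j i)
      = (starRingEnd ℂ) (∫ x in I, (evalM P x * W x * (evalM Q x)ᴴ) j i) from rfl, ← integral_conj]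
  apply MeasureTheory.integral_congr_ae
  have hH : ∀ᵐ x ∂(volume.restrict I), (W x).IsHermitian :=
    hW.posdef.mono fun x h => h.1
  filter_upwards [hH] with x hx
  have h1 : (starRingEnd ℂ) ((evalM P x * W x * (evalM Q x)ᴴ) j i)
      = ((evalM P x * W x * (evalM Q x)ᴴ)ᴴ) i j := rfl
  rw [h1, Matrix.conjTranspose_mul, Matrix.conjTranspose_mul, Matrix.conjTranspose_conjTranspose,
    hx.eq, Matrix.mul_assoc]

end Stmt10Aux
namespace Stmt10Aux
variable {N : ℕ} {I : Set ℝ} {W : ℝ → Matrix (Fin N) (Fin N) ℂ}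

lemma exists_decomp (P : ℕ → MatPoly N) (hmon : ∀ n, IsMonicDeg (P n) n) :
    ∀ (m : ℕ) (R : MatPoly N), (∀ k, m ≤ k → coeffM R k = 0) →
      ∃ C : ℕ → Matrix (Fin N) (Fin N) ℂ,
        R = ∑ j ∈ Finset.range m, constM (C j) * P j := by
  intro m
  induction m with
  | zero =>
    intro R hR
    refine ⟨fun _ => 0, ?_⟩
    rw [Finset.range_zero, Finset.sum_empty]
    apply matpoly_ext
    intro k
    rw [hR k (Nat.zero_le k)]
    funext i j
    simp [coeffM]
  | succ m ih =>
    intro R hR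
    have hcond : ∀ k, m ≤ k → coeffM (R - constM (coeffM R m) * P m) k = 0 := by
      intro k hk
      rw [coeffM_sub, coeffM_constM_mul]
      rcases eq_or_lt_of_le hk with h | h
      · rw [← h, (hmon m).1, mul_one, sub_self]
      · rw [(hmon m).2 k h, hR k h]
        simp
    obtain ⟨C, hC⟩ := ih (R - constM (coeffM R m) * P m) hcond
    refine ⟨Function.update C m (coeffM R m), ?_⟩
    rw [Finset.sum_range_succ]
    have hcongr : ∀ j ∈ Finset.range m,
        constM (Function.update C m (coeffM R m) j) * P j = constM (C j) * P j := by
      intro j hj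
      rw [Function.update_of_ne (Finset.mem_range.1 hj).ne]
    rw [Finset.sum_congr rfl hcongr, ← hC, Function.update_self, sub_add_cancel]

lemma poly_zero_of_ae (p : Polynomial ℂ) (h : ∀ᵐ x : ℝ, p.eval (x : ℂ) = 0) : p = 0 := by
  by_contra hp
  have hfin : {x : ℝ | p.eval (x : ℂ) = 0}.Finite := by
    have h2 : {x : ℂ | p.IsRoot x}.Finite := Polynomial.finite_setOf_isRoot hp
    have hsub : {x : ℝ | p.eval (x : ℂ) = 0} ⊆ (fun x : ℝ => (x : ℂ)) ⁻¹' {x : ℂ | p.IsRoot x} :=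
      fun x hx => hx
    exact ((h2.preimage (fun a _ b _ hab => by exact_mod_cast hab))).subset hsub
  rw [ae_iff] at h
  have hle : (volume : Measure ℝ) Set.univ
      ≤ volume {x : ℝ | ¬ p.eval (x : ℂ) = 0} + volume {x : ℝ | p.eval (x : ℂ) = 0} := by
    rw [show (Set.univ : Set ℝ)
        = {x : ℝ | ¬ p.eval (x : ℂ) = 0} ∪ {x : ℝ | p.eval (x : ℂ) = 0} by
      ext x; by_cases hx : p.eval (x : ℂ) = 0 <;> simp [hx]]
    exact measure_union_le _ _
  rw [h, hfin.measure_zero, Real.volume_univ] at hle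
  simp at hle

lemma diag_entry_form (Ax Wx : Matrix (Fin N) (Fin N) ℂ) (i : Fin N) :
    (Ax * Wx * Axᴴ) i i
      = dotProduct (star fun l => (starRingEnd ℂ) (Ax i l))
          (Wx *ᵥ fun l => (starRingEnd ℂ) (Ax i l)) := by
  simp only [Matrix.mul_apply, Matrix.conjTranspose_apply, dotProduct, Matrix.mulVec,
    Pi.star_apply, RCLike.star_def, Complex.conj_conj]
  simp only [Finset.sum_mul, Finset.mul_sum]
  rw [Finset.sum_comm]
  exact Finset.sum_congr rfl fun l _ => Finset.sum_congr rfl fun k _ => by ring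

lemma selfinner_zero (hW : IsWeight Set.univ W) (R : MatPoly N)
    (h : innerW Set.univ W R R = 0) : R = 0 := by
  have hpd := hW.posdef
  rw [Measure.restrict_univ] at hpd
  have key : ∀ i : Fin N, ∀ᵐ x : ℝ, (evalM R x * W x * (evalM R x)ᴴ) i i = 0 := by
    intro i
    set f : ℝ → ℂ := fun x => (evalM R x * W x * (evalM R x)ᴴ) i i with hf
    have hint : MeasureTheory.Integrable f := by
      have h2 := integrable_inner_entry hW R R i i
      rwa [MeasureTheory.IntegrableOn, Measure.restrict_univ] at h2
    have hpos : ∀ᵐ x : ℝ, 0 ≤ f x := by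
      filter_upwards [hpd] with x hx
      show 0 ≤ (evalM R x * W x * (evalM R x)ᴴ) i i
      rw [diag_entry_form]
      exact hx.posSemidef.dotProduct_mulVec_nonneg _
    have hzero : ∫ x : ℝ, f x = 0 := by
      have h2 : innerW Set.univ W R R i i = 0 := by rw [h]; rfl
      rw [innerW_apply, Measure.restrict_univ] at h2
      exact h2
    have hre : ∫ x : ℝ, (f x).re = 0 := by
      have h3 := integral_re hint
      rw [hzero] at h3
      simpa using h3
    have hrepos : 0 ≤ᵐ[volume] fun x => (f x).re := by
      filter_upwards [hpos] with x hx
      exact (Complex.le_def.1 hx).1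
    have hre0 : (fun x => (f x).re) =ᵐ[volume] 0 :=
      (MeasureTheory.integral_eq_zero_iff_of_nonneg_ae hrepos hint.re).1 hre
    filter_upwards [hpos, hre0] with x hx1 hx2
    have him : (f x).im = 0 := ((Complex.le_def.1 hx1).2).symm
    have hre' : (f x).re = 0 := hx2
    exact Complex.ext hre' him
  have key2 : ∀ᵐ x : ℝ, evalM R x = 0 := by
    have hall : ∀ᵐ x : ℝ, ∀ i, (evalM R x * W x * (evalM R x)ᴴ) i i = 0 :=
      (MeasureTheory.ae_all_iff).2 key
    filter_upwards [hpd, hall] with x hx hx2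
    funext i l
    have hu : (fun l => (starRingEnd ℂ) (evalM R x i l)) = 0 := by
      by_contra hu
      have hlt := hx.dotProduct_mulVec_pos hu
      rw [← diag_entry_form, hx2 i] at hlt
      exact lt_irrefl 0 hlt
    have := congrFun hu l
    simpa using congrArg (starRingEnd ℂ) this
  funext i j
  have hij : ∀ᵐ x : ℝ, (R i j).eval (x : ℂ) = 0 :=
    key2.mono fun x hx => congrFun (congrFun hx i) j
  have := poly_zero_of_ae _ hij
  simpa using this

end Stmt10Aux
namespace Stmt10Aux
variable {N : ℕ} {W : ℝ → Matrix (Fin N) (Fin N) ℂ}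

lemma cov_sq (g : ℝ → ℂ) :
    ∫ y in Set.Ioi (0:ℝ), g y = ∫ x in Set.Ioi (0:ℝ), ((2 * x : ℝ) : ℂ) * g (x ^ 2) := by
  have himg : (fun x : ℝ => x ^ 2) '' Set.Ioi 0 = Set.Ioi 0 := by
    ext y
    constructor
    · rintro ⟨x, hx, rfl⟩
      exact pow_pos (show (0:ℝ) < x from hx) 2
    · intro hy
      exact ⟨Real.sqrt y, Real.sqrt_pos.2 hy, Real.sq_sqrt (le_of_lt hy)⟩
  have hinj : Set.InjOn (fun x : ℝ => x ^ 2) (Set.Ioi 0) := by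
    intro a ha b hb hab
    simp only [Set.mem_Ioi] at ha hb
    have hab' : a ^ 2 = b ^ 2 := hab
    nlinarith [sq_nonneg (a - b), sq_nonneg (a + b)]
  have hderiv : ∀ x ∈ Set.Ioi (0:ℝ),
      HasDerivWithinAt (fun x : ℝ => x ^ 2) (2 * x) (Set.Ioi 0) x := by
    intro x _
    simpa using (hasDerivAt_pow 2 x).hasDerivWithinAt
  rw [show ∫ y in Set.Ioi (0:ℝ), g y = ∫ y in (fun x : ℝ => x ^ 2) '' Set.Ioi 0, g y by
    rw [himg]]
  rw [MeasureTheory.integral_image_eq_integral_abs_deriv_smul measurableSet_Ioi hderiv hinj g]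
  refine MeasureTheory.setIntegral_congr_fun measurableSet_Ioi fun x hx => ?_
  have hx0 : (0:ℝ) < x := hx
  rw [abs_of_pos (by linarith : (0:ℝ) < 2 * x), Complex.real_smul]

lemma innerV_transfer (P Q : MatPoly N) :
    innerW (Set.Ioi 0) (VWeight W) P Q
      = (2 : ℂ) • innerW (Set.Ioi 0) W (compSqM P) (compSqM Q) := by
  funext i j
  rw [Matrix.smul_apply, innerW_apply, innerW_apply, cov_sq, ← MeasureTheory.integral_smul]
  refine MeasureTheory.setIntegral_congr_fun measurableSet_Ioi fun x hx => ?_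
  have hx0 : (0:ℝ) < x := hx
  have hsq : Real.sqrt (x ^ 2) = x := Real.sqrt_sq (le_of_lt hx0)
  have hV : VWeight W (x ^ 2) = (x⁻¹ : ℝ) • W x := by
    rw [VWeight, hsq]
  have hxne : (x : ℝ) ≠ 0 := ne_of_gt hx0
  rw [hV, evalM_compSq, evalM_compSq, Matrix.mul_smul, Matrix.smul_mul, Matrix.smul_apply,
    Complex.real_smul, smul_eq_mul, ← mul_assoc]
  congr 1
  push_cast
  field_simp

end Stmt10Aux
namespace Stmt10Aux
variable {N : ℕ} {W : ℝ → Matrix (Fin N) (Fin N) ℂ}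

lemma innerW_reflect (hsymm : ∀ᵐ x : ℝ, W x = W (-x)) (P Q : MatPoly N) :
    innerW Set.univ W (reflectM P) (reflectM Q) = innerW Set.univ W P Q := by
  funext i j
  rw [innerW_apply, innerW_apply, Measure.restrict_univ]
  rw [← integral_neg_eq_self (fun x : ℝ => (evalM P x * W x * (evalM Q x)ᴴ) i j) volume]
  apply MeasureTheory.integral_congr_ae
  filter_upwards [hsymm] with x hx
  rw [evalM_reflect, evalM_reflect, hx]

lemma reflect_reflect (P : MatPoly N) : reflectM (reflectM P) = P := by
  funext i j
  show ((P i j).comp (-Polynomial.X)).comp (-Polynomial.X) = P i j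
  rw [Polynomial.comp_assoc]
  simp

lemma innerW_even (hW : IsWeight Set.univ W) (hsymm : ∀ᵐ x : ℝ, W x = W (-x))
    (P Q : MatPoly N) (hP : reflectM P = P) (hQ : reflectM Q = Q) :
    innerW Set.univ W P Q = (2 : ℂ) • innerW (Set.Ioi 0) W P Q := by
  funext i j
  rw [Matrix.smul_apply, innerW_apply, innerW_apply, Measure.restrict_univ]
  set f : ℝ → ℂ := fun x => (evalM P x * W x * (evalM Q x)ᴴ) i j with hf
  have hint : MeasureTheory.Integrable f := by
    have h2 := integrable_inner_entry hW P Q i j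
    rwa [MeasureTheory.IntegrableOn, Measure.restrict_univ] at h2
  have heven : ∀ᵐ x : ℝ, f (-x) = f x := by
    filter_upwards [hsymm] with x hx
    show (evalM P (-x) * W (-x) * (evalM Q (-x))ᴴ) i j = (evalM P x * W x * (evalM Q x)ᴴ) i j
    rw [← hx, ← evalM_reflect, ← evalM_reflect, hP, hQ]
  have hsplit : ∫ x : ℝ, f x = (∫ x in Set.Iic (0:ℝ), f x) + ∫ x in Set.Ioi (0:ℝ), f x :=
    (intervalIntegral.integral_Iic_add_Ioi hint.integrableOn hint.integrableOn).symm
  have h1 : ∫ x in Set.Iic (0:ℝ), f x = ∫ x in Set.Ioi (0:ℝ), f x := by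
    have h3 : ∫ x in Set.Iic (0:ℝ), f (-x) = ∫ x in Set.Ioi (-(0:ℝ)), f x :=
      integral_comp_neg_Iic 0 f
    rw [neg_zero] at h3
    rw [← h3]
    apply MeasureTheory.integral_congr_ae
    exact MeasureTheory.ae_restrict_of_ae (heven.mono fun x hx => hx.symm)
  rw [hsplit, h1, smul_eq_mul, two_mul]

lemma exists_halfPoly (F : MatPoly N) (m : ℕ)
    (hodd : ∀ k, ¬ (2 ∣ k) → coeffM F k = 0)
    (hdeg : ∀ k, 2 * m ≤ k → coeffM F k = 0) :
    ∃ G : MatPoly N, compSqM G = F ∧ ∀ k, m ≤ k → coeffM G k = 0 := by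
  refine ⟨fun i j => ∑ k ∈ Finset.range m, Polynomial.C ((F i j).coeff (2 * k)) * Polynomial.X ^ k,
    ?_, ?_⟩
  · apply matpoly_ext
    intro t
    refine (coeffM_compSq _ t).trans ?_
    funext i j
    by_cases h2 : 2 ∣ t
    · rw [if_pos h2]
      obtain ⟨t', rfl⟩ := h2
      show ((fun i j => ∑ k ∈ Finset.range m, Polynomial.C ((F i j).coeff (2 * k))
          * Polynomial.X ^ k : MatPoly N) i j).coeff (2 * t' / 2) = (F i j).coeff (2 * t')
      rw [Nat.mul_div_cancel_left t' (by norm_num)]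
      rw [Polynomial.finset_sum_coeff]
      simp only [Polynomial.coeff_C_mul, Polynomial.coeff_X_pow]
      by_cases ht : t' < m
      · rw [Finset.sum_eq_single t']
        · simp
        · intro b _ hb
          simp [Ne.symm hb]
        · intro hnot
          exact absurd (Finset.mem_range.2 ht) hnot
      · rw [Finset.sum_eq_zero]
        · have : coeffM F (2 * t') = 0 := hdeg (2 * t') (by omega)
          exact (congrFun (congrFun this i) j).symm
        · intro b hb
          have : ¬ t' = b := by
            have := Finset.mem_range.1 hb; omega
          simp [this]
    · rw [if_neg h2]
      have h0 : coeffM F t = 0 := hodd t h2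
      exact (congrFun (congrFun h0 i) j).symm
  · intro k hk
    funext i j
    show ((fun i j => ∑ l ∈ Finset.range m, Polynomial.C ((F i j).coeff (2 * l))
        * Polynomial.X ^ l : MatPoly N) i j).coeff k = (0 : Matrix (Fin N) (Fin N) ℂ) i j
    rw [Polynomial.finset_sum_coeff]
    simp only [Polynomial.coeff_C_mul, Polynomial.coeff_X_pow]
    rw [Finset.sum_eq_zero]
    · simp
    · intro b hb
      have : ¬ k = b := by
        have := Finset.mem_range.1 hb; omega
      simp [this]

end Stmt10Aux
namespace Stmt10Aux
variable {N : ℕ} {W : ℝ → Matrix (Fin N) (Fin N) ℂ}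

lemma compSqM_zero : compSqM (0 : MatPoly N) = 0 := by
  funext i j; simp [compSqM]

lemma compSqM_sum {ι : Type*} (s : Finset ι) (P : ι → MatPoly N) :
    compSqM (∑ a ∈ s, P a) = ∑ a ∈ s, compSqM (P a) := by
  classical
  induction s using Finset.induction_on with
  | empty => simp [compSqM_zero]
  | insert _ _ hnot ih =>
    rw [Finset.sum_insert hnot, Finset.sum_insert hnot, compSqM_add, ih]

lemma smul_cancel_two {A : Matrix (Fin N) (Fin N) ℂ} (h : (2 : ℂ) • A = 0) : A = 0 := by
  have h2 := congrArg (fun B => ((2 : ℂ)⁻¹) • B) h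
  simpa [smul_smul] using h2

lemma H_eq_compSq (hW : IsWeight Set.univ W) (hsymm : ∀ᵐ x : ℝ, W x = W (-x))
    (H : ℕ → MatPoly N) (hH : MonicOPS Set.univ W H)
    (L : ℕ → MatPoly N) (hL : MonicOPS (Set.Ioi 0) (VWeight W) L) (n : ℕ) :
    H (2 * n) = compSqM (L n) := by
  have hWI : IsWeight (Set.Ioi 0) W := isWeight_Ioi hW
  set M := compSqM (L n) with hM
  have hMrefl : reflectM M = M := reflect_compSq (L n)
  have hVconj : ∀ P Q : MatPoly N,
      (innerW (Set.Ioi 0) (VWeight W) P Q)ᴴ = innerW (Set.Ioi 0) (VWeight W) Q P := by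
    intro P Q
    rw [innerV_transfer, innerV_transfer, Matrix.conjTranspose_smul, innerW_conj hWI]
    norm_num
  have hMH : ∀ m, m < 2 * n → innerW Set.univ W M (H m) = 0 := by
    intro m hm
    have hrefl : innerW Set.univ W M (reflectM (H m)) = innerW Set.univ W M (H m) := by
      calc innerW Set.univ W M (reflectM (H m))
          = innerW Set.univ W (reflectM M) (reflectM (H m)) := by rw [hMrefl]
        _ = innerW Set.univ W M (H m) := innerW_reflect hsymm M (H m)
    set F := H m + reflectM (H m) with hF
    have hsum : innerW Set.univ W M F
        = innerW Set.univ W M (H m) + innerW Set.univ W M (H m) := by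
      rw [hF, innerW_add_right hW, hrefl]
    have hodd : ∀ k, ¬ (2 ∣ k) → coeffM F k = 0 := by
      intro k hk
      have h1 : k % 2 = 1 := by omega
      have hpow : ((-1 : ℂ)) ^ k = -1 := Odd.neg_one_pow (Nat.odd_iff.2 h1)
      rw [hF, coeffM_add, coeffM_reflect, hpow]
      simp
    have hdeg : ∀ k, 2 * n ≤ k → coeffM F k = 0 := by
      intro k hk
      have h2 : m < k := lt_of_lt_of_le hm hk
      rw [hF, coeffM_add, coeffM_reflect, (hH.1 m).2 k h2]
      simp
    obtain ⟨G, hG1, hG2⟩ := exists_halfPoly F n hodd hdeg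
    have hGL : innerW (Set.Ioi 0) (VWeight W) G (L n) = 0 := by
      obtain ⟨C, hC⟩ := exists_decomp L hL.1 n G hG2
      rw [hC, innerV_transfer, compSqM_sum]
      have hterm : ∀ j ∈ Finset.range n,
          compSqM (constM (C j) * L j) = constM (C j) * compSqM (L j) := by
        intro j _
        rw [compSqM_mul, compSqM_constM]
      rw [Finset.sum_congr rfl hterm, innerW_sum_left hWI]
      have hzero : ∀ j ∈ Finset.range n,
          innerW (Set.Ioi 0) W (constM (C j) * compSqM (L j)) (compSqM (L n)) = 0 := by
        intro j hj
        rw [innerW_constM_mul_left hWI]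
        have hjn : j ≠ n := (Finset.mem_range.1 hj).ne
        have h0 := hL.2 j n hjn
        rw [innerV_transfer] at h0
        rw [smul_cancel_two h0, mul_zero]
      rw [Finset.sum_eq_zero hzero, smul_zero]
    have hLG : innerW (Set.Ioi 0) (VWeight W) (L n) G = 0 := by
      rw [← hVconj, hGL]
      simp
    have hMF : innerW Set.univ W M F = 0 := by
      have hFrefl : reflectM F = F := by rw [← hG1]; exact reflect_compSq G
      rw [innerW_even hW hsymm M F hMrefl hFrefl, hM, ← hG1, ← innerV_transfer]
      exact hLG
    rw [hMF] at hsum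
    apply smul_cancel_two
    rw [two_smul, ← hsum]
  have hMc : coeffM M (2 * n) = 1 := by
    rw [hM, coeffM_compSq, if_pos ⟨n, rfl⟩, Nat.mul_div_cancel_left n (by norm_num)]
    exact (hL.1 n).1
  have hMhigh : ∀ k, 2 * n < k → coeffM M k = 0 := by
    intro k hk
    rw [hM, coeffM_compSq]
    split
    · next h2 =>
      obtain ⟨k', rfl⟩ := h2
      rw [Nat.mul_div_cancel_left k' (by norm_num)]
      exact (hL.1 n).2 k' (by omega)
    · rfl
  have hRdeg : ∀ k, 2 * n ≤ k → coeffM (M - H (2 * n)) k = 0 := by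
    intro k hk
    rw [coeffM_sub]
    rcases eq_or_lt_of_le hk with h | h
    · rw [← h, hMc, (hH.1 (2 * n)).1, sub_self]
    · rw [hMhigh k h, (hH.1 (2 * n)).2 k h, sub_self]
  obtain ⟨C, hC⟩ := exists_decomp H hH.1 (2 * n) (M - H (2 * n)) hRdeg
  have hMR : innerW Set.univ W M (M - H (2 * n)) = 0 := by
    rw [hC, innerW_sum_right hW]
    apply Finset.sum_eq_zero
    intro j hj
    rw [innerW_constM_mul_right hW, hMH j (Finset.mem_range.1 hj), Matrix.zero_mul]
  have hHR : innerW Set.univ W (H (2 * n)) (M - H (2 * n)) = 0 := by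
    rw [hC, innerW_sum_right hW]
    apply Finset.sum_eq_zero
    intro j hj
    have hjne : 2 * n ≠ j := by have := Finset.mem_range.1 hj; omega
    rw [innerW_constM_mul_right hW, hH.2 (2 * n) j hjne, Matrix.zero_mul]
  have hself : innerW Set.univ W (M - H (2 * n)) (M - H (2 * n)) = 0 := by
    rw [innerW_sub_left hW, hMR, hHR, sub_self]
  have hzero := selfinner_zero hW _ hself
  have hfin : M = H (2 * n) := by rwa [sub_eq_zero] at hzero
  exact hfin.symm

end Stmt10Aux

/-- If `W(x) = W(-x)` a.e., `H` are the monic orthogonal polynomials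
of `W`, `L` those of `V(y) = y^{-1/2} W(√y)` and
`H_n'' + x H_n' A₁ + H_n A₀ = Λ_n H_n` for all `n`, then
`4y L_n'' + L_n'(2A₁y + 2I) + L_n A₀ = Λ_{2n} L_n` for all `n`. -/
theorem stmt10 {N : ℕ} (W : ℝ → Matrix (Fin N) (Fin N) ℂ)
    (hW : IsWeight Set.univ W)
    (hsymm : ∀ᵐ x : ℝ, W x = W (-x))
    (H : ℕ → MatPoly N) (hH : MonicOPS Set.univ W H)
    (L : ℕ → MatPoly N) (hL : MonicOPS (Set.Ioi 0) (VWeight W) L)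
    (A1 A0 : Matrix (Fin N) (Fin N) ℂ) (Λ : ℕ → Matrix (Fin N) (Fin N) ℂ)
    (hD : ∀ n : ℕ,
      derivM (derivM (H n)) + XmulM (derivM (H n)) * constM A1 + H n * constM A0
        = constM (Λ n) * H n) :
    ∀ n : ℕ,
      (4 : ℂ) • XmulM (derivM (derivM (L n)))
        + XmulM (derivM (L n)) * constM ((2 : ℂ) • A1)
        + (2 : ℂ) • derivM (L n)
        + L n * constM A0
      = constM (Λ (2 * n)) * L n := by
  intro n
  have hcomp : H (2 * n) = compSqM (L n) := Stmt10Aux.H_eq_compSq hW hsymm H hH L hL n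
  have hode := hD (2 * n)
  rw [hcomp] at hode
  exact Stmt10Aux.algebra_step (L n) A1 A0 (Λ (2 * n)) hode
end
end
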